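/- For n ≥ 4, S(n; P_4, K_3) = S(n; P_4, K_3+e) = {n−2, n−1}: an edge-coloring of K_n with no monochromatic path on 4 vertices and no rainbow triangle (equivalently, no rainbow K_3+e) exists with exactly k colors if and only if k = n−2 or k = n−1. -/

import Mathlib

open SimpleGraph Finset

universe u v

variable {α : Type u} {β : Type v}

/-- The set of colors used on (non-loop) edges of `K_n` by an edge-coloring `c`. -/
def edgeColors {n : ℕ} (c : Sym2 (Fin n) → ℕ) : Finset ℕ :=
  (Finset.univ.filter fun e : Sym2 (Fin n) => ¬ e.IsDiag).image c

/-- `c` contains a monochromatic copy of `G`. -/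
def HasMonoCopy {n : ℕ} (c : Sym2 (Fin n) → ℕ) (G : SimpleGraph α) : Prop :=
  ∃ f : α ↪ Fin n, ∃ k : ℕ, ∀ u v : α, G.Adj u v → c s(f u, f v) = k

/-- `c` contains a rainbow (totally multicolored) copy of `H`. -/
def HasRainbowCopy {n : ℕ} (c : Sym2 (Fin n) → ℕ) (H : SimpleGraph β) : Prop :=
  ∃ f : β ↪ Fin n, ∀ u v u' v' : β, H.Adj u v → H.Adj u' v' →
    c s(f u, f v) = c s(f u', f v') → s(u, v) = s(u', v')

/-- A `(G,H)`-good coloring: no monochromatic `G` and no rainbow `H`. -/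
def GoodColoring {n : ℕ} (c : Sym2 (Fin n) → ℕ) (G : SimpleGraph α) (H : SimpleGraph β) : Prop :=
  ¬ HasMonoCopy c G ∧ ¬ HasRainbowCopy c H

/-- The mixed-Ramsey mixedSpectrum `S(n; G, H)`. -/
def mixedSpectrum (n : ℕ) (G : SimpleGraph α) (H : SimpleGraph β) : Set ℕ :=
  {k | ∃ c : Sym2 (Fin n) → ℕ, GoodColoring c G H ∧ (edgeColors c).card = k}

/-- `G` is a star: all edges share a common vertex. -/
def IsStar (G : SimpleGraph α) : Prop :=
  ∃ v : α, ∀ u w : α, G.Adj u w → u = v ∨ w = v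

/-- `K_3 + e`: a triangle `0,1,2` with a pendant edge `0-3`. -/
def K3e : SimpleGraph (Fin 4) := fromEdgeSet {s(0,1), s(0,2), s(1,2), s(0,3)}

/-- The 4-cycle `C_4`. -/
def C4g : SimpleGraph (Fin 4) := fromEdgeSet {s(0,1), s(1,2), s(2,3), s(3,0)}

/-- The matching `ℓK_2`. -/
def matchingGraph (ℓ : ℕ) : SimpleGraph (Fin ℓ × Fin 2) := fromRel (fun a b => a.1 = b.1)

/-- The star `K_{1,ℓ}`. -/
def starGraph (ℓ : ℕ) : SimpleGraph (Fin (ℓ+1)) := fromRel (fun a _ => a = 0)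

/-- The cycle `C_m` on `ZMod m`. -/
def cycGraph (m : ℕ) : SimpleGraph (ZMod m) := fromRel (fun a b => a = b + 1)

namespace Stmt9

variable {n : ℕ}

/-- colors used on edges inside a vertex subset -/
def colorsOn (c : Sym2 (Fin n) → ℕ) (U : Finset (Fin n)) : Finset ℕ :=
  ((Finset.univ : Finset (Sym2 (Fin n))).filter
    fun e => ¬ e.IsDiag ∧ ∀ a ∈ e, a ∈ U).image c

lemma hs (c : Sym2 (Fin n) → ℕ) (a b : Fin n) : c s(a,b) = c s(b,a) := by
  rw [Sym2.eq_swap]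

lemma mem_colorsOn {c : Sym2 (Fin n) → ℕ} {U : Finset (Fin n)} {k : ℕ} :
    k ∈ colorsOn c U ↔ ∃ a b : Fin n, a ≠ b ∧ a ∈ U ∧ b ∈ U ∧ c s(a,b) = k := by
  constructor
  · rintro h
    rcases Finset.mem_image.1 h with ⟨e, he, hck⟩
    rcases Finset.mem_filter.1 he with ⟨-, hd, hmem⟩
    induction e using Sym2.ind with
    | _ a b =>
      refine ⟨a, b, ?_, hmem a (by simp), hmem b (by simp), hck⟩
      intro hab; exact hd (by simp [hab])
  · rintro ⟨a, b, hab, ha, hb, hck⟩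
    refine Finset.mem_image.2 ⟨s(a,b), Finset.mem_filter.2 ⟨Finset.mem_univ _, ?_, ?_⟩, hck⟩
    · simp [Sym2.mk_isDiag_iff, hab]
    · intro x hx; rcases Sym2.mem_iff.1 hx with rfl | rfl <;> assumption

lemma colorsOn_mono {c : Sym2 (Fin n) → ℕ} {U V : Finset (Fin n)} (h : U ⊆ V) :
    colorsOn c U ⊆ colorsOn c V := by
  intro k hk
  rcases mem_colorsOn.1 hk with ⟨a, b, hab, ha, hb, hck⟩
  exact mem_colorsOn.2 ⟨a, b, hab, h ha, h hb, hck⟩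

lemma edgeColors_eq (c : Sym2 (Fin n) → ℕ) : edgeColors c = colorsOn c Finset.univ := by
  unfold edgeColors colorsOn
  congr 1
  apply Finset.filter_congr
  intro e _
  simp
section Bridge

variable {c : Sym2 (Fin n) → ℕ}

lemma monoP4_of {a b d e : Fin n}
    (h1 : a ≠ b) (h2 : a ≠ d) (h3 : a ≠ e) (h4 : b ≠ d) (h5 : b ≠ e) (h6 : d ≠ e)
    (e1 : c s(a,b) = c s(b,d)) (e2 : c s(b,d) = c s(d,e)) :
    HasMonoCopy c (pathGraph 4) := by
  refine ⟨⟨![a,b,d,e], ?_⟩, c s(b,d), ?_⟩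
  · intro i j hij
    fin_cases i <;> fin_cases j <;> simp_all
  · intro u v huv
    rw [SimpleGraph.pathGraph_adj] at huv
    fin_cases u <;> fin_cases v <;> simp only [Matrix.cons_val_zero, Matrix.cons_val_one,
      Matrix.head_cons, Matrix.cons_val_two, Matrix.tail_cons, Matrix.cons_val_three,
      Function.Embedding.coeFn_mk] <;>
      first
        | (exfalso; revert huv; decide)
        | exact e1
        | exact rfl
        | exact e2.symm
        | exact (hs c _ _).trans e1
        | exact (hs c _ _).trans rfl
        | exact (hs c _ _).trans e2.symm

lemma noP4_wit (hmono : ¬ HasMonoCopy c (pathGraph 4)) :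
    ∀ a b d e : Fin n, a ≠ b → a ≠ d → a ≠ e → b ≠ d → b ≠ e → d ≠ e →
      c s(a,b) = c s(b,d) → c s(b,d) = c s(d,e) → False :=
  fun _ _ _ _ h1 h2 h3 h4 h5 h6 e1 e2 =>
    hmono (monoP4_of h1 h2 h3 h4 h5 h6 e1 e2)

lemma rainbowK3_of {a b d : Fin n} (h1 : a ≠ b) (h2 : a ≠ d) (h3 : b ≠ d)
    (q1 : c s(a,b) ≠ c s(a,d)) (q2 : c s(a,b) ≠ c s(b,d)) (q3 : c s(a,d) ≠ c s(b,d)) :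
    HasRainbowCopy c (completeGraph (Fin 3)) := by
  refine ⟨⟨![a,b,d], ?_⟩, ?_⟩
  · intro i j hij
    fin_cases i <;> fin_cases j <;> simp_all
  · intro u v u' v' huv hu'v' hc
    simp only [completeGraph, SimpleGraph.top_adj] at huv hu'v'
    change c s(![a,b,d] u, ![a,b,d] v) = c s(![a,b,d] u', ![a,b,d] v') at hc
    fin_cases u <;> fin_cases v <;> fin_cases u' <;> fin_cases v' <;>
      (try simp_all (config := {decide := true}) [Sym2.eq_swap, hs c a b, hs c a d, hs c b d]) <;>
      first
        | exact q1 hc.symm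
        | exact q2 hc.symm
        | exact q3 hc.symm
        | exact q1 hc
        | exact q2 hc
        | exact q3 hc

end Bridge
section BridgeK3e

variable {c : Sym2 (Fin n) → ℕ}

lemma rainbowK3e_of {a b d e : Fin n}
    (h1 : a ≠ b) (h2 : a ≠ d) (h3 : a ≠ e) (h4 : b ≠ d) (h5 : b ≠ e) (h6 : d ≠ e)
    (q1 : c s(a,b) ≠ c s(a,d)) (q2 : c s(a,b) ≠ c s(b,d)) (q3 : c s(a,d) ≠ c s(b,d))
    (q4 : c s(a,e) ≠ c s(a,b)) (q5 : c s(a,e) ≠ c s(a,d)) (q6 : c s(a,e) ≠ c s(b,d)) :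
    HasRainbowCopy c K3e := by
  have hinj : Function.Injective ![a,b,d,e] := by
    intro i j hij; fin_cases i <;> fin_cases j <;> simp_all
  refine ⟨⟨![a,b,d,e], hinj⟩, ?_⟩
  intro u v u' v' huv hu'v' hc
  rw [K3e, SimpleGraph.fromEdgeSet_adj] at huv hu'v'
  obtain ⟨hm, -⟩ := huv
  obtain ⟨hm', -⟩ := hu'v'
  simp only [Set.mem_insert_iff, Set.mem_singleton_iff] at hm hm'
  simp only [Function.Embedding.coeFn_mk] at hc
  rw [← Sym2.map_pair_eq, ← Sym2.map_pair_eq] at hc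
  rcases hm with h|h|h|h <;> rcases hm' with h'|h'|h'|h' <;> rw [h, h'] <;>
    rw [h, h'] at hc <;>
    simp only [Sym2.map_pair_eq, Matrix.cons_val_zero, Matrix.cons_val_one,
      Matrix.head_cons, Matrix.cons_val_two, Matrix.tail_cons, Matrix.cons_val_fin_one,
      Matrix.cons_val'] at hc <;>
    first
      | rfl
      | exact absurd hc q1
      | exact absurd hc q2
      | exact absurd hc q3
      | exact absurd hc q4
      | exact absurd hc q5
      | exact absurd hc q6
      | exact absurd hc.symm q1
      | exact absurd hc.symm q2
      | exact absurd hc.symm q3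
      | exact absurd hc.symm q4
      | exact absurd hc.symm q5
      | exact absurd hc.symm q6
      | exact absurd hc (by simpa using q4.symm)
      | exact absurd hc.symm (by simpa using q4.symm)

lemma noK3e_wit (hrain : ¬ HasRainbowCopy c K3e) :
    ∀ a b d e : Fin n, a ≠ b → a ≠ d → a ≠ e → b ≠ d → b ≠ e → d ≠ e →
      c s(a,b) ≠ c s(a,d) → c s(a,b) ≠ c s(b,d) → c s(a,d) ≠ c s(b,d) →
      c s(a,e) = c s(a,b) ∨ c s(a,e) = c s(a,d) ∨ c s(a,e) = c s(b,d) := by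
  intro a b d e h1 h2 h3 h4 h5 h6 q1 q2 q3
  by_contra hcon
  push_neg at hcon
  obtain ⟨q4, q5, q6⟩ := hcon
  exact hrain (rainbowK3e_of h1 h2 h3 h4 h5 h6 q1 q2 q3 q4 q5 q6)

lemma noK3e_wit_of_noK3 (hrain : ¬ HasRainbowCopy c (completeGraph (Fin 3))) :
    ∀ a b d e : Fin n, a ≠ b → a ≠ d → a ≠ e → b ≠ d → b ≠ e → d ≠ e →
      c s(a,b) ≠ c s(a,d) → c s(a,b) ≠ c s(b,d) → c s(a,d) ≠ c s(b,d) →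
      c s(a,e) = c s(a,b) ∨ c s(a,e) = c s(a,d) ∨ c s(a,e) = c s(b,d) :=
  fun a b d _ h1 h2 _ h4 _ _ q1 q2 q3 =>
    absurd (rainbowK3_of h1 h2 h4 q1 q2 q3) hrain

end BridgeK3e
section Constructions

variable {c : Sym2 (Fin n) → ℕ}

lemma monoP4_elim (h : HasMonoCopy c (pathGraph 4)) :
    ∃ a b d e : Fin n, a ≠ b ∧ a ≠ d ∧ a ≠ e ∧ b ≠ d ∧ b ≠ e ∧ d ≠ e ∧
      c s(a,b) = c s(b,d) ∧ c s(b,d) = c s(d,e) := by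
  obtain ⟨f, k, hf⟩ := h
  have e01 := hf 0 1 (by rw [SimpleGraph.pathGraph_adj]; decide)
  have e12 := hf 1 2 (by rw [SimpleGraph.pathGraph_adj]; decide)
  have e23 := hf 2 3 (by rw [SimpleGraph.pathGraph_adj]; decide)
  exact ⟨f 0, f 1, f 2, f 3, f.injective.ne (by decide), f.injective.ne (by decide),
    f.injective.ne (by decide), f.injective.ne (by decide), f.injective.ne (by decide),
    f.injective.ne (by decide), e01.trans e12.symm, e12.trans e23.symm⟩

lemma rainbowK3_elim (h : HasRainbowCopy c (completeGraph (Fin 3))) :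
    ∃ a b d : Fin n, a ≠ b ∧ a ≠ d ∧ b ≠ d ∧
      c s(a,b) ≠ c s(a,d) ∧ c s(a,b) ≠ c s(b,d) ∧ c s(a,d) ≠ c s(b,d) := by
  obtain ⟨f, hf⟩ := h
  have a01 : (completeGraph (Fin 3)).Adj 0 1 := by
    show (0 : Fin 3) ≠ 1; decide
  have a02 : (completeGraph (Fin 3)).Adj 0 2 := by
    show (0 : Fin 3) ≠ 2; decide
  have a12 : (completeGraph (Fin 3)).Adj 1 2 := by
    show (1 : Fin 3) ≠ 2; decide
  refine ⟨f 0, f 1, f 2, f.injective.ne (by decide), f.injective.ne (by decide),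
    f.injective.ne (by decide), fun hc => ?_, fun hc => ?_, fun hc => ?_⟩
  · exact absurd (hf 0 1 0 2 a01 a02 hc) (by decide)
  · exact absurd (hf 0 1 1 2 a01 a12 hc) (by decide)
  · exact absurd (hf 0 2 1 2 a02 a12 hc) (by decide)

lemma rainbowK3e_elim (h : HasRainbowCopy c K3e) :
    ∃ a b d : Fin n, a ≠ b ∧ a ≠ d ∧ b ≠ d ∧
      c s(a,b) ≠ c s(a,d) ∧ c s(a,b) ≠ c s(b,d) ∧ c s(a,d) ≠ c s(b,d) := by
  obtain ⟨f, hf⟩ := h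
  have a01 : K3e.Adj 0 1 := by
    rw [K3e, SimpleGraph.fromEdgeSet_adj]; exact ⟨by simp, by decide⟩
  have a02 : K3e.Adj 0 2 := by
    rw [K3e, SimpleGraph.fromEdgeSet_adj]; exact ⟨by simp, by decide⟩
  have a12 : K3e.Adj 1 2 := by
    rw [K3e, SimpleGraph.fromEdgeSet_adj]; exact ⟨by simp, by decide⟩
  refine ⟨f 0, f 1, f 2, f.injective.ne (by decide), f.injective.ne (by decide),
    f.injective.ne (by decide), fun hc => ?_, fun hc => ?_, fun hc => ?_⟩
  · exact absurd (hf 0 1 0 2 a01 a02 hc) (by decide)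
  · exact absurd (hf 0 1 1 2 a01 a12 hc) (by decide)
  · exact absurd (hf 0 2 1 2 a02 a12 hc) (by decide)

/-- the `min` coloring -/
def cmin (n : ℕ) : Sym2 (Fin n) → ℕ :=
  Sym2.lift ⟨fun a b => min a.val b.val, fun a b => by simp [min_comm]⟩

lemma cmin_mk (a b : Fin n) : cmin n s(a,b) = min a.val b.val := rfl

/-- the `min` coloring capped at `n-3` -/
def cmin2 (n : ℕ) : Sym2 (Fin n) → ℕ := fun e => min (cmin n e) (n - 3)

lemma cmin2_mk (a b : Fin n) : cmin2 n s(a,b) = min (min a.val b.val) (n - 3) := rfl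

lemma good_cmin :
    GoodColoring (cmin n) (pathGraph 4) (completeGraph (Fin 3)) ∧
    GoodColoring (cmin n) (pathGraph 4) K3e := by
  have hmono : ¬ HasMonoCopy (cmin n) (pathGraph 4) := by
    intro h
    obtain ⟨a, b, d, e, h1, h2, h3, h4, h5, h6, e1, e2⟩ := monoP4_elim h
    rw [cmin_mk, cmin_mk] at e1
    rw [cmin_mk, cmin_mk] at e2
    have v1 : a.val ≠ b.val := fun hh => h1 (Fin.ext hh)
    have v2 : b.val ≠ d.val := fun hh => h4 (Fin.ext hh)
    have v3 : d.val ≠ e.val := fun hh => h6 (Fin.ext hh)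
    have v4 : a.val ≠ d.val := fun hh => h2 (Fin.ext hh)
    have v5 : b.val ≠ e.val := fun hh => h5 (Fin.ext hh)
    omega
  have htri : ∀ a b d : Fin n, a ≠ b → a ≠ d → b ≠ d →
      ¬(cmin n s(a,b) ≠ cmin n s(a,d) ∧ cmin n s(a,b) ≠ cmin n s(b,d) ∧
        cmin n s(a,d) ≠ cmin n s(b,d)) := by
    intro a b d h1 h2 h3 ⟨q1, q2, q3⟩
    rw [cmin_mk, cmin_mk] at q1
    rw [cmin_mk, cmin_mk] at q2
    rw [cmin_mk, cmin_mk] at q3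
    have v1 : a.val ≠ b.val := fun hh => h1 (Fin.ext hh)
    have v2 : a.val ≠ d.val := fun hh => h2 (Fin.ext hh)
    have v3 : b.val ≠ d.val := fun hh => h3 (Fin.ext hh)
    omega
  refine ⟨⟨hmono, fun h => ?_⟩, ⟨hmono, fun h => ?_⟩⟩
  · obtain ⟨a, b, d, h1, h2, h3, q1, q2, q3⟩ := rainbowK3_elim h
    exact htri a b d h1 h2 h3 ⟨q1, q2, q3⟩
  · obtain ⟨a, b, d, h1, h2, h3, q1, q2, q3⟩ := rainbowK3e_elim h
    exact htri a b d h1 h2 h3 ⟨q1, q2, q3⟩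

lemma good_cmin2 :
    GoodColoring (cmin2 n) (pathGraph 4) (completeGraph (Fin 3)) ∧
    GoodColoring (cmin2 n) (pathGraph 4) K3e := by
  have hmono : ¬ HasMonoCopy (cmin2 n) (pathGraph 4) := by
    intro h
    obtain ⟨a, b, d, e, h1, h2, h3, h4, h5, h6, e1, e2⟩ := monoP4_elim h
    rw [cmin2_mk, cmin2_mk] at e1
    rw [cmin2_mk, cmin2_mk] at e2
    have v1 : a.val ≠ b.val := fun hh => h1 (Fin.ext hh)
    have v2 : b.val ≠ d.val := fun hh => h4 (Fin.ext hh)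
    have v3 : d.val ≠ e.val := fun hh => h6 (Fin.ext hh)
    have v4 : a.val ≠ d.val := fun hh => h2 (Fin.ext hh)
    have v5 : b.val ≠ e.val := fun hh => h5 (Fin.ext hh)
    have v6 : a.val ≠ e.val := fun hh => h3 (Fin.ext hh)
    have w1 : a.val < n := a.isLt
    have w2 : b.val < n := b.isLt
    have w3 : d.val < n := d.isLt
    have w4 : e.val < n := e.isLt
    omega
  have htri : ∀ a b d : Fin n, a ≠ b → a ≠ d → b ≠ d →
      ¬(cmin2 n s(a,b) ≠ cmin2 n s(a,d) ∧ cmin2 n s(a,b) ≠ cmin2 n s(b,d) ∧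
        cmin2 n s(a,d) ≠ cmin2 n s(b,d)) := by
    intro a b d h1 h2 h3 ⟨q1, q2, q3⟩
    rw [cmin2_mk, cmin2_mk] at q1
    rw [cmin2_mk, cmin2_mk] at q2
    rw [cmin2_mk, cmin2_mk] at q3
    have v1 : a.val ≠ b.val := fun hh => h1 (Fin.ext hh)
    have v2 : a.val ≠ d.val := fun hh => h2 (Fin.ext hh)
    have v3 : b.val ≠ d.val := fun hh => h3 (Fin.ext hh)
    omega
  refine ⟨⟨hmono, fun h => ?_⟩, ⟨hmono, fun h => ?_⟩⟩
  · obtain ⟨a, b, d, h1, h2, h3, q1, q2, q3⟩ := rainbowK3_elim h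
    exact htri a b d h1 h2 h3 ⟨q1, q2, q3⟩
  · obtain ⟨a, b, d, h1, h2, h3, q1, q2, q3⟩ := rainbowK3e_elim h
    exact htri a b d h1 h2 h3 ⟨q1, q2, q3⟩

lemma edgeColors_cmin (hn : 2 ≤ n) : edgeColors (cmin n) = Finset.range (n-1) := by
  rw [edgeColors_eq]
  ext k
  rw [mem_colorsOn, Finset.mem_range]
  constructor
  · rintro ⟨a, b, hab, -, -, hck⟩
    rw [cmin_mk] at hck
    have v1 : a.val ≠ b.val := fun hh => hab (Fin.ext hh)
    have w1 : a.val < n := a.isLt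
    have w2 : b.val < n := b.isLt
    omega
  · intro hk
    refine ⟨⟨k, by omega⟩, ⟨k+1, by omega⟩, ?_, Finset.mem_univ _, Finset.mem_univ _, ?_⟩
    · intro hh
      have := Fin.val_eq_of_eq hh
      simp at this
    · rw [cmin_mk]; simp

lemma edgeColors_cmin2 (hn : 4 ≤ n) : edgeColors (cmin2 n) = Finset.range (n-2) := by
  rw [edgeColors_eq]
  ext k
  rw [mem_colorsOn, Finset.mem_range]
  constructor
  · rintro ⟨a, b, hab, -, -, hck⟩
    rw [cmin2_mk] at hck
    have v1 : a.val ≠ b.val := fun hh => hab (Fin.ext hh)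
    have w1 : a.val < n := a.isLt
    have w2 : b.val < n := b.isLt
    omega
  · intro hk
    refine ⟨⟨k, by omega⟩, ⟨k+1, by omega⟩, ?_, Finset.mem_univ _, Finset.mem_univ _, ?_⟩
    · intro hh
      have := Fin.val_eq_of_eq hh
      simp at this
    · rw [cmin2_mk]
      simp only
      omega

end Constructions
section UpperBound

variable {c : Sym2 (Fin n) → ℕ}

lemma aux_card {S T : Finset ℕ}
    (h : ∀ p q, p ∈ S → p ∉ T → q ∈ S → q ∉ T → p = q) : S.card ≤ T.card + 1 := by
  have hsub : S ⊆ T ∪ (S \ T) := by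
    intro k hk
    by_cases hkT : k ∈ T
    · exact Finset.mem_union_left _ hkT
    · exact Finset.mem_union_right _ (Finset.mem_sdiff.2 ⟨hk, hkT⟩)
  calc S.card ≤ (T ∪ (S \ T)).card := Finset.card_le_card hsub
    _ ≤ T.card + (S \ T).card := Finset.card_union_le _ _
    _ ≤ T.card + 1 := by
        have : (S \ T).card ≤ 1 := Finset.card_le_one.2 fun a ha b hb => by
          rw [Finset.mem_sdiff] at ha hb
          exact h a b ha.1 ha.2 hb.1 hb.2
        omega

lemma ub3 (c : Sym2 (Fin n) → ℕ) (U : Finset (Fin n)) :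
    (∀ a b d : Fin n, a ∈ U → b ∈ U → d ∈ U → a ≠ b → a ≠ d → b ≠ d →
      (c s(a,b) = c s(a,d) ∨ c s(a,b) = c s(b,d) ∨ c s(a,d) = c s(b,d))) →
    (colorsOn c U).card ≤ U.card - 1 := by
  induction U using Finset.strongInduction with
  | _ U ih =>
    intro hnr
    by_cases hU : U.card ≤ 1
    · have hempty : colorsOn c U = ∅ := by
        rw [Finset.eq_empty_iff_forall_notMem]
        intro k hk
        obtain ⟨a, b, hab, ha, hb, -⟩ := mem_colorsOn.1 hk
        exact absurd (Finset.one_lt_card.2 ⟨a, ha, b, hb, hab⟩) (by omega)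
      rw [hempty]; simp
    · push_neg at hU
      obtain ⟨v, hv⟩ : U.Nonempty := Finset.card_pos.1 (by omega)
      have hWsub : U.erase v ⊆ U := Finset.erase_subset _ _
      have hWcard : (U.erase v).card = U.card - 1 := Finset.card_erase_of_mem hv
      have hIH : (colorsOn c (U.erase v)).card ≤ (U.erase v).card - 1 :=
        ih (U.erase v) (Finset.erase_ssubset hv)
          (fun a b d ha hb hd => hnr a b d (hWsub ha) (hWsub hb) (hWsub hd))
      have key : ∀ p q, p ∈ colorsOn c U → p ∉ colorsOn c (U.erase v) →
          q ∈ colorsOn c U → q ∉ colorsOn c (U.erase v) → p = q := by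
        intro p q hp hpn hq hqn
        by_contra hpq
        have hgetp : ∀ r, r ∈ colorsOn c U → r ∉ colorsOn c (U.erase v) →
            ∃ a, a ∈ U ∧ a ≠ v ∧ c s(v,a) = r := by
          intro r hr hrn
          obtain ⟨a1, b1, hab1, ha1, hb1, hcr⟩ := mem_colorsOn.1 hr
          by_cases hva : v = a1
          · exact ⟨b1, hb1, fun h => hab1 (h.trans hva).symm, by rw [hva]; exact hcr⟩
          · by_cases hvb : v = b1
            · refine ⟨a1, ha1, fun h => hab1 ?_, ?_⟩
              · rw [h, hvb]
              · rw [hs c v a1]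
                rw [← hvb] at hcr
                exact hcr
            · exact absurd (mem_colorsOn.2 ⟨a1, b1, hab1,
                Finset.mem_erase.2 ⟨fun h => hva h.symm, ha1⟩,
                Finset.mem_erase.2 ⟨fun h => hvb h.symm, hb1⟩, hcr⟩) hrn
        obtain ⟨a, haU, hav, hcp⟩ := hgetp p hp hpn
        obtain ⟨b, hbU, hbv, hcq⟩ := hgetp q hq hqn
        have hab : a ≠ b := fun h => hpq (hcp.symm.trans (by rw [h]; exact hcq))
        have haW : a ∈ U.erase v := Finset.mem_erase.2 ⟨hav, haU⟩
        have hbW : b ∈ U.erase v := Finset.mem_erase.2 ⟨hbv, hbU⟩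
        have hrp : c s(a,b) ≠ p := fun h =>
          hpn (mem_colorsOn.2 ⟨a, b, hab, haW, hbW, h⟩)
        have hrq : c s(a,b) ≠ q := fun h =>
          hqn (mem_colorsOn.2 ⟨a, b, hab, haW, hbW, h⟩)
        rcases hnr v a b hv haU hbU (Ne.symm hav) (Ne.symm hbv) hab with h | h | h
        · exact hpq (hcp.symm.trans (h.trans hcq))
        · exact hrp ((h.symm.trans hcp))
        · exact hrq ((h.symm.trans hcq))
      have := aux_card key
      omega

lemma ubmain (c : Sym2 (Fin n) → ℕ)
    (hP4 : ∀ a b d e : Fin n, a ≠ b → a ≠ d → a ≠ e → b ≠ d → b ≠ e → d ≠ e →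
      c s(a,b) = c s(b,d) → c s(b,d) = c s(d,e) → False)
    (hK3e : ∀ a b d e : Fin n, a ≠ b → a ≠ d → a ≠ e → b ≠ d → b ≠ e → d ≠ e →
      c s(a,b) ≠ c s(a,d) → c s(a,b) ≠ c s(b,d) → c s(a,d) ≠ c s(b,d) →
      c s(a,e) = c s(a,b) ∨ c s(a,e) = c s(a,d) ∨ c s(a,e) = c s(b,d)) :
    ∀ U : Finset (Fin n), 4 ≤ U.card → (colorsOn c U).card ≤ U.card - 1 := by
  intro U
  induction U using Finset.strongInduction with
  | _ U ih =>
    intro hU4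
    by_cases hb : U.card = 4
    · by_cases hrt : ∃ x y z : Fin n, x ∈ U ∧ y ∈ U ∧ z ∈ U ∧ x ≠ y ∧ x ≠ z ∧ y ≠ z ∧
          c s(x,y) ≠ c s(x,z) ∧ c s(x,y) ≠ c s(y,z) ∧ c s(x,z) ≠ c s(y,z)
      · obtain ⟨x, y, z, hx, hy, hz, h1, h2, h3, q1, q2, q3⟩ := hrt
        have pend : ∀ u w : Fin n, w ∈ U → w ≠ x → w ≠ y → w ≠ z →
            (u = x ∨ u = y ∨ u = z) →
            (c s(u,w) = c s(x,y) ∨ c s(u,w) = c s(x,z) ∨ c s(u,w) = c s(y,z)) := by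
          intro u w hw e1 e2 e3 hu
          rcases hu with rfl | rfl | rfl
          · exact hK3e u y z w h1 h2 (Ne.symm e1) h3 (Ne.symm e2) (Ne.symm e3) q1 q2 q3
          · rcases hK3e u x z w (Ne.symm h1) h3 (Ne.symm e2) h2 (Ne.symm e1) (Ne.symm e3)
              (by rw [hs c u x]; exact q2) (by rw [hs c u x]; exact q1)
              (Ne.symm q3) with h | h | h
            · exact Or.inl (h.trans (hs c u x))
            · exact Or.inr (Or.inr h)
            · exact Or.inr (Or.inl h)
          · rcases hK3e u x y w (Ne.symm h2) (Ne.symm h3) (Ne.symm e3) h1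
              (Ne.symm e1) (Ne.symm e2)
              (by rw [hs c u x, hs c u y]; exact q3) (by rw [hs c u x]; exact (Ne.symm q1))
              (by rw [hs c u y]; exact (Ne.symm q2)) with h | h | h
            · exact Or.inr (Or.inl (h.trans (hs c u x)))
            · exact Or.inr (Or.inr (h.trans (hs c u y)))
            · exact Or.inl h
        have hsub : colorsOn c U ⊆ {c s(x,y), c s(x,z), c s(y,z)} := by
          intro k hk
          obtain ⟨a, b, hab, ha, hb', hck⟩ := mem_colorsOn.1 hk
          rw [← hck]
          simp only [Finset.mem_insert, Finset.mem_singleton]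
          by_cases haT : a = x ∨ a = y ∨ a = z
          · by_cases hbT : b = x ∨ b = y ∨ b = z
            · rcases haT with rfl | rfl | rfl <;> rcases hbT with rfl | rfl | rfl <;>
                first
                  | exact absurd rfl hab
                  | exact Or.inl rfl
                  | exact Or.inl (hs c _ _)
                  | exact Or.inr (Or.inl rfl)
                  | exact Or.inr (Or.inl (hs c _ _))
                  | exact Or.inr (Or.inr rfl)
                  | exact Or.inr (Or.inr (hs c _ _))
            · push_neg at hbT
              exact pend a b hb' hbT.1 hbT.2.1 hbT.2.2 haT
          · by_cases hbT : b = x ∨ b = y ∨ b = z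
            · push_neg at haT
              rw [hs c a b]
              exact pend b a ha haT.1 haT.2.1 haT.2.2 hbT
            · push_neg at haT; push_neg at hbT
              exfalso
              have h5sub : ({a, b, x, y, z} : Finset (Fin n)) ⊆ U := by
                intro t ht
                simp only [Finset.mem_insert, Finset.mem_singleton] at ht
                rcases ht with rfl | rfl | rfl | rfl | rfl <;> assumption
              have h5 : ({a, b, x, y, z} : Finset (Fin n)).card = 5 := by
                rw [Finset.card_insert_of_notMem (by
                      simp only [Finset.mem_insert, Finset.mem_singleton]
                      push_neg
                      exact ⟨hab, haT.1, haT.2.1, haT.2.2⟩),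
                    Finset.card_insert_of_notMem (by
                      simp only [Finset.mem_insert, Finset.mem_singleton]
                      push_neg
                      exact ⟨hbT.1, hbT.2.1, hbT.2.2⟩),
                    Finset.card_insert_of_notMem (by
                      simp only [Finset.mem_insert, Finset.mem_singleton]
                      push_neg
                      exact ⟨h1, h2⟩),
                    Finset.card_insert_of_notMem (by
                      simp only [Finset.mem_singleton]
                      exact h3),
                    Finset.card_singleton]
              have := Finset.card_le_card h5sub
              omega
        have hc3 : ({c s(x,y), c s(x,z), c s(y,z)} : Finset ℕ).card ≤ 3 := by
          refine le_trans (Finset.card_insert_le _ _) ?_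
          refine Nat.add_le_add_right ?_ 1
          refine le_trans (Finset.card_insert_le _ _) ?_
          simp
        have := Finset.card_le_card hsub
        omega
      · push_neg at hrt
        refine le_trans (ub3 c U ?_) le_rfl
        intro a b d ha hb hd h1 h2 h3
        by_contra hcon
        push_neg at hcon
        exact hcon.2.2 (hrt a b d ha hb hd h1 h2 h3 hcon.1 hcon.2.1)
    · have hU5 : 5 ≤ U.card := by omega
      obtain ⟨v, hv⟩ : U.Nonempty := Finset.card_pos.1 (by omega)
      have hWsub : U.erase v ⊆ U := Finset.erase_subset _ _
      have hWcard : (U.erase v).card = U.card - 1 := Finset.card_erase_of_mem hv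
      have hIH : (colorsOn c (U.erase v)).card ≤ (U.erase v).card - 1 :=
        ih (U.erase v) (Finset.erase_ssubset hv) (by omega)
      have key : ∀ p q, p ∈ colorsOn c U → p ∉ colorsOn c (U.erase v) →
          q ∈ colorsOn c U → q ∉ colorsOn c (U.erase v) → p = q := by
        intro p q hp hpn hq hqn
        by_contra hpq
        have hgetp : ∀ r, r ∈ colorsOn c U → r ∉ colorsOn c (U.erase v) →
            ∃ a, a ∈ U ∧ a ≠ v ∧ c s(v,a) = r := by
          intro r hr hrn
          obtain ⟨a1, b1, hab1, ha1, hb1, hcr⟩ := mem_colorsOn.1 hr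
          by_cases hva : v = a1
          · exact ⟨b1, hb1, fun h => hab1 (h.trans hva).symm, by rw [hva]; exact hcr⟩
          · by_cases hvb : v = b1
            · refine ⟨a1, ha1, fun h => hab1 ?_, ?_⟩
              · rw [h, hvb]
              · rw [hs c v a1]
                rw [← hvb] at hcr
                exact hcr
            · exact absurd (mem_colorsOn.2 ⟨a1, b1, hab1,
                Finset.mem_erase.2 ⟨fun h => hva h.symm, ha1⟩,
                Finset.mem_erase.2 ⟨fun h => hvb h.symm, hb1⟩, hcr⟩) hrn
        obtain ⟨a, haU, hav, hcp⟩ := hgetp p hp hpn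
        obtain ⟨b, hbU, hbv, hcq⟩ := hgetp q hq hqn
        have hab : a ≠ b := fun h => hpq (hcp.symm.trans (by rw [h]; exact hcq))
        have haW : a ∈ U.erase v := Finset.mem_erase.2 ⟨hav, haU⟩
        have hbW : b ∈ U.erase v := Finset.mem_erase.2 ⟨hbv, hbU⟩
        have hinW : ∀ a' b' : Fin n, a' ∈ U.erase v → b' ∈ U.erase v → a' ≠ b' →
            c s(a',b') ≠ p ∧ c s(a',b') ≠ q := by
          intro a' b' ha' hb' hab'
          constructor
          · exact fun h => hpn (mem_colorsOn.2 ⟨a', b', hab', ha', hb', h⟩)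
          · exact fun h => hqn (mem_colorsOn.2 ⟨a', b', hab', ha', hb', h⟩)
        obtain ⟨hrp, hrq⟩ := hinW a b haW hbW hab
        have h3sub : ({v, a, b} : Finset (Fin n)) ⊆ U := by
          intro t ht
          simp only [Finset.mem_insert, Finset.mem_singleton] at ht
          rcases ht with rfl | rfl | rfl <;> assumption
        have h3card : ({v, a, b} : Finset (Fin n)).card = 3 := by
          rw [Finset.card_insert_of_notMem (by
                simp only [Finset.mem_insert, Finset.mem_singleton]
                push_neg
                exact ⟨Ne.symm hav, Ne.symm hbv⟩),
              Finset.card_insert_of_notMem (by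
                simp only [Finset.mem_singleton]
                exact hab),
              Finset.card_singleton]
      
        have hsd : 1 < (U \ {v, a, b}).card := by
          rw [Finset.card_sdiff_of_subset h3sub, h3card]
          omega
        obtain ⟨w, hw, w', hw', hww'⟩ := Finset.one_lt_card.1 hsd
        rw [Finset.mem_sdiff] at hw hw'
        simp only [Finset.mem_insert, Finset.mem_singleton] at hw hw'
        push_neg at hw hw'
        obtain ⟨hwU, hwrest⟩ := hw
        obtain ⟨hwv, hwa, hwb⟩ := hwrest
        obtain ⟨hwU', hwrest'⟩ := hw'
        obtain ⟨hwv', hwa', hwb'⟩ := hwrest'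
        have hwW : w ∈ U.erase v := Finset.mem_erase.2 ⟨hwv, hwU⟩
        have hwW' : w' ∈ U.erase v := Finset.mem_erase.2 ⟨hwv', hwU'⟩
        have hcav : c s(a,v) = p := (hs c a v).trans hcp
        have hcbv : c s(b,v) = q := (hs c b v).trans hcq
        have caw : c s(a,w) = c s(a,b) := by
          rcases hK3e a v b w hav hab (fun hh => hwa hh.symm) (Ne.symm hbv)
            (fun hh => hwv hh.symm) (fun hh => hwb hh.symm)
            (by rw [hcav]; exact fun h => hrp h.symm)
            (by rw [hcav]; exact fun h => hpq (h.trans hcq))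
            (by rw [hcq]; exact fun h => hrq h)
            with h | h | h
          · exact absurd (h.trans hcav)
              (hinW a w haW hwW (fun hh => hwa hh.symm)).1
          · exact h
          · exact absurd (h.trans hcq)
              (hinW a w haW hwW (fun hh => hwa hh.symm)).2
        have cbw : c s(b,w') = c s(a,b) := by
          rcases hK3e b v a w' hbv (Ne.symm hab) (fun hh => hwb' hh.symm) (Ne.symm hav)
            (fun hh => hwv' hh.symm) (fun hh => hwa' hh.symm)
            (by rw [hcbv]; exact fun h => hrq ((hs c a b).trans h.symm))
            (by rw [hcbv]; exact fun h => hpq (h.trans hcp).symm)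
            (fun h => hrp ((hs c a b).trans (h.trans hcp)))
            with h | h | h
          · exact absurd (h.trans hcbv)
              (hinW b w' hbW hwW' (fun hh => hwb' hh.symm)).2
          · exact h.trans (hs c b a)
          · exact absurd (h.trans hcp)
              (hinW b w' hbW hwW' (fun hh => hwb' hh.symm)).1
        exact hP4 w a b w' (fun h => hwa h) (fun h => hwb h) hww'
          hab (fun h => hwa' h.symm) (fun h => hwb' h.symm)
          ((hs c w a).trans caw) cbw.symm
      have := aux_card key
      omega

end UpperBound
section LowerBoundA

lemma lbA (c : Sym2 (Fin n) → ℕ)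
    (hP4 : ∀ a b d e : Fin n, a ≠ b → a ≠ d → a ≠ e → b ≠ d → b ≠ e → d ≠ e →
      c s(a,b) = c s(b,d) → c s(b,d) = c s(d,e) → False)
    (U : Finset (Fin n)) :
    (∀ a b d : Fin n, a ∈ U → b ∈ U → d ∈ U → a ≠ b → a ≠ d → b ≠ d →
      (c s(a,b) = c s(a,d) ∨ c s(a,b) = c s(b,d) ∨ c s(a,d) = c s(b,d))) →
    U.card - 2 ≤ (colorsOn c U).card := by
  induction U using Finset.strongInduction with
  | _ U ih =>
    intro hnr
    by_cases hU3 : U.card ≤ 3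
    · by_cases hU1 : U.card ≤ 1
      · omega
      · have h2 : 1 < U.card := by omega
        obtain ⟨a, ha, b, hb, hab⟩ := Finset.one_lt_card.1 h2
        have hmem : c s(a,b) ∈ colorsOn c U := mem_colorsOn.2 ⟨a, b, hab, ha, hb, rfl⟩
        have := Finset.card_pos.2 ⟨_, hmem⟩
        omega
    · push_neg at hU3
      have hdisj : ∀ a b u v : Fin n, a ∈ U → b ∈ U → u ∈ U → v ∈ U →
          a ≠ b → a ≠ u → a ≠ v → b ≠ u → b ≠ v → u ≠ v →
          c s(a,b) ≠ c s(u,v) := by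
        intro a b u v ha hb hu hv hab hau hav hbu hbv huv heq
        have hau' : c s(a,u) ≠ c s(a,b) := fun h =>
          hP4 b a u v (Ne.symm hab) hbu hbv hau hav huv
            ((hs c b a).trans h.symm) (h.trans heq)
        have hav' : c s(a,v) ≠ c s(a,b) := fun h =>
          hP4 b a v u (Ne.symm hab) hbv hbu hav hau (Ne.symm huv)
            ((hs c b a).trans h.symm) (h.trans (heq.trans (hs c u v)))
        have hbu' : c s(b,u) ≠ c s(a,b) := fun h =>
          hP4 a b u v hab hau hav hbu hbv huv (h.symm) (h.trans heq)
        have hbv' : c s(b,v) ≠ c s(a,b) := fun h =>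
          hP4 a b v u hab hav hau hbv hbu (Ne.symm huv)
            (h.symm) (h.trans (heq.trans (hs c u v)))
        have e1 : c s(a,u) = c s(b,u) := by
          rcases hnr a b u ha hb hu hab hau hbu with h | h | h
          · exact absurd h.symm hau'
          · exact absurd h.symm hbu'
          · exact h
        have e3 : c s(b,u) = c s(b,v) := by
          rcases hnr b u v hb hu hv hbu hbv huv with h | h | h
          · exact h
          · exact absurd (h.trans heq.symm) hbu'
          · exact absurd (h.trans heq.symm) hbv'
        exact hP4 a u b v hau hab hav (Ne.symm hbu) huv hbv
          (e1.trans (hs c b u)) ((hs c u b).trans e3)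
      by_cases hstar : ∃ k, k ∈ colorsOn c U ∧ ∃ v, v ∈ U ∧ ∀ a b : Fin n,
          a ∈ U → b ∈ U → a ≠ b → c s(a,b) = k → (v = a ∨ v = b)
      · obtain ⟨k, hk, v, hv, hvk⟩ := hstar
        have hkn : k ∉ colorsOn c (U.erase v) := by
          intro hk'
          obtain ⟨a, b, hab, ha, hb, hck⟩ := mem_colorsOn.1 hk'
          rw [Finset.mem_erase] at ha hb
          rcases hvk a b ha.2 hb.2 hab hck with h | h
          · exact ha.1 h.symm
          · exact hb.1 h.symm
        have hsub : insert k (colorsOn c (U.erase v)) ⊆ colorsOn c U := by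
          intro t ht
          rcases Finset.mem_insert.1 ht with rfl | ht'
          · exact hk
          · exact colorsOn_mono (Finset.erase_subset _ _) ht'
        have hic := Finset.card_insert_of_notMem hkn
        have hcle := Finset.card_le_card hsub
        have hIH := ih (U.erase v) (Finset.erase_ssubset hv)
          (fun a b d ha hb hd => hnr a b d ((Finset.erase_subset _ _) ha)
            ((Finset.erase_subset _ _) hb) ((Finset.erase_subset _ _) hd))
        have hWcard : (U.erase v).card = U.card - 1 := Finset.card_erase_of_mem hv
        omega
      · push_neg at hstar
        have h2 : 1 < U.card := by omega
        obtain ⟨a0, ha0, b0, hb0, hab0⟩ := Finset.one_lt_card.1 h2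
        have hk : c s(a0,b0) ∈ colorsOn c U := mem_colorsOn.2 ⟨a0, b0, hab0, ha0, hb0, rfl⟩
        set k := c s(a0,b0) with hk0
        -- step 1 : find c0 with triangle edge b0-c0 of color k
        obtain ⟨c0, hc0U, hc0a, hc0b, hcbc⟩ :
            ∃ c0, c0 ∈ U ∧ c0 ≠ a0 ∧ c0 ≠ b0 ∧ c s(b0,c0) = k := by
          obtain ⟨u1, v1, hu1, hv1, hne1, hc1, hna1⟩ := hstar k hk a0 ha0
          have hna1' : a0 ≠ u1 ∧ a0 ≠ v1 := hna1
          by_cases hbu : b0 = u1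
          · refine ⟨v1, hv1, Ne.symm hna1'.2, fun h => hne1 (h.trans hbu).symm, ?_⟩
            · rw [hbu]; exact hc1
          · by_cases hbv : b0 = v1
            · refine ⟨u1, hu1, Ne.symm hna1'.1, fun h => hne1 (h.trans hbv), ?_⟩
              · rw [← hbv] at hc1
                exact (hs c b0 u1).trans hc1
            · exact absurd (hc1.trans hk0)
                (Ne.symm (hdisj a0 b0 u1 v1 ha0 hb0 hu1 hv1 hab0 hna1'.1 hna1'.2
                  hbu hbv hne1))
        -- step 2 : find triangle edge a0-c0 of color k
        have hcac : c s(a0,c0) = k := by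
          obtain ⟨u2, v2, hu2, hv2, hne2, hc2, hna2⟩ := hstar k hk b0 hb0
          have hna2' : b0 ≠ u2 ∧ b0 ≠ v2 := hna2
          by_cases hau : a0 = u2
          · by_cases hcv : c0 = v2
            · rw [← hau, ← hcv] at hc2
              exact hc2
            · exact absurd (hc2.trans hcbc.symm)
                (Ne.symm (hdisj b0 c0 u2 v2 hb0 hc0U hu2 hv2 (Ne.symm hc0b)
                  hna2'.1 hna2'.2 (fun h => hc0a (h.trans hau.symm)) hcv hne2))
          · by_cases hav : a0 = v2
            · by_cases hcu : c0 = u2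
              · rw [← hav, ← hcu] at hc2
                exact (hs c a0 c0).trans hc2
              · exact absurd (hc2.trans hcbc.symm)
                  (Ne.symm (hdisj b0 c0 u2 v2 hb0 hc0U hu2 hv2 (Ne.symm hc0b)
                    hna2'.1 hna2'.2 hcu (fun h => hc0a (h.trans hav.symm)) hne2))
            · exact absurd (hc2.trans hk0)
                (Ne.symm (hdisj a0 b0 u2 v2 ha0 hb0 hu2 hv2 hab0 hau hav
                  hna2'.1 hna2'.2 hne2))
        -- outside vertices
        set S := U \ {a0, b0, c0} with hS
        have hSmem : ∀ d, d ∈ S → d ∈ U ∧ d ≠ a0 ∧ d ≠ b0 ∧ d ≠ c0 := by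
          intro d hd
          rw [hS, Finset.mem_sdiff] at hd
          simp only [Finset.mem_insert, Finset.mem_singleton] at hd
          push_neg at hd
          exact ⟨hd.1, hd.2.1, hd.2.2.1, hd.2.2.2⟩
        have hdk : ∀ d, d ∈ S → c s(d,a0) ≠ k ∧ c s(d,b0) ≠ k ∧ c s(d,c0) ≠ k := by
          intro d hd
          obtain ⟨hdU, hda, hdb, hdc⟩ := hSmem d hd
          refine ⟨fun h => ?_, fun h => ?_, fun h => ?_⟩
          · exact hdisj d a0 b0 c0 hdU ha0 hb0 hc0U hda hdb hdc hab0
              (Ne.symm hc0a) (Ne.symm hc0b) (h.trans hcbc.symm)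
          · exact hdisj d b0 a0 c0 hdU hb0 ha0 hc0U hdb hda hdc (Ne.symm hab0)
              (Ne.symm hc0b) (Ne.symm hc0a) (h.trans hcac.symm)
          · exact hdisj d c0 a0 b0 hdU hc0U ha0 hb0 hdc hda hdb hc0a hc0b hab0
              (h.trans hk0)
        have hfab : ∀ d, d ∈ S → c s(d,a0) = c s(d,b0) := by
          intro d hd
          obtain ⟨hdU, hda, hdb, hdc⟩ := hSmem d hd
          rcases hnr d a0 b0 hdU ha0 hb0 hda hdb hab0 with h | h | h
          · exact h
          · exact absurd (h.trans hk0.symm) (hdk d hd).1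
          · exact absurd (h.trans hk0.symm) (hdk d hd).2.1
        -- injectivity of d ↦ c s(d,a0) on S
        have hinj : Set.InjOn (fun d => c s(d,a0)) S := by
          intro d hd d' hd' hdd
          by_contra hne
          obtain ⟨hdU, hda, hdb, hdc⟩ := hSmem d (by simpa using hd)
          obtain ⟨hdU', hda', hdb', hdc'⟩ := hSmem d' (by simpa using hd')
          simp only at hdd
          exact hP4 d' a0 d b0 hda' (Ne.symm hne) hdb' (Ne.symm hda) hab0 hdb
            (hdd.symm.trans (hs c d a0)) ((hs c a0 d).trans (hfab d (by simpa using hd)))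
        have himg : insert k (S.image (fun d => c s(d,a0))) ⊆ colorsOn c U := by
          intro t ht
          rcases Finset.mem_insert.1 ht with rfl | ht'
          · exact hk
          · obtain ⟨d, hd, hdt⟩ := Finset.mem_image.1 ht'
            obtain ⟨hdU, hda, hdb, hdc⟩ := hSmem d hd
            exact mem_colorsOn.2 ⟨d, a0, hda, hdU, ha0, hdt⟩
        have hknotin : k ∉ S.image (fun d => c s(d,a0)) := by
          intro hkin
          obtain ⟨d, hd, hdt⟩ := Finset.mem_image.1 hkin
          exact (hdk d hd).1 hdt
        have hcardim : (S.image (fun d => c s(d,a0))).card = S.card :=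
          Finset.card_image_of_injOn hinj
        have h3sub : ({a0, b0, c0} : Finset (Fin n)) ⊆ U := by
          intro t ht
          simp only [Finset.mem_insert, Finset.mem_singleton] at ht
          rcases ht with rfl | rfl | rfl <;> assumption
        have h3card : ({a0, b0, c0} : Finset (Fin n)).card = 3 := by
          rw [Finset.card_insert_of_notMem (by
                simp only [Finset.mem_insert, Finset.mem_singleton]
                push_neg
                exact ⟨hab0, Ne.symm hc0a⟩),
              Finset.card_insert_of_notMem (by
                simp only [Finset.mem_singleton]
                exact Ne.symm hc0b),
              Finset.card_singleton]
        have hScard : S.card = U.card - 3 := by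
          rw [hS, Finset.card_sdiff_of_subset h3sub, h3card]
        have hic := Finset.card_insert_of_notMem hknotin
        have hcle := Finset.card_le_card himg
        omega

end LowerBoundA
section P3

set_option maxHeartbeats 1000000 in
lemma p3core (c : Sym2 (Fin n) → ℕ)
    (hP4 : ∀ a b d e : Fin n, a ≠ b → a ≠ d → a ≠ e → b ≠ d → b ≠ e → d ≠ e →
      c s(a,b) = c s(b,d) → c s(b,d) = c s(d,e) → False)
    (hK3e : ∀ a b d e : Fin n, a ≠ b → a ≠ d → a ≠ e → b ≠ d → b ≠ e → d ≠ e →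
      c s(a,b) ≠ c s(a,d) → c s(a,b) ≠ c s(b,d) → c s(a,d) ≠ c s(b,d) →
      c s(a,e) = c s(a,b) ∨ c s(a,e) = c s(a,d) ∨ c s(a,e) = c s(b,d))
    (x y z w w1 w2 : Fin n)
    (nxy : x ≠ y) (nxz : x ≠ z) (nxw : x ≠ w) (nxw1 : x ≠ w1) (nxw2 : x ≠ w2)
    (nyz : y ≠ z) (nyw : y ≠ w) (nyw1 : y ≠ w1) (nyw2 : y ≠ w2)
    (nzw : z ≠ w) (nzw1 : z ≠ w1) (nzw2 : z ≠ w2)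
    (nww1 : w ≠ w1) (nww2 : w ≠ w2) (nw1w2 : w1 ≠ w2)
    (t1 t2 t3 : ℕ)
    (ht1 : c s(y,z) = t1) (ht2 : c s(x,z) = t2) (ht3 : c s(x,y) = t3)
    (h12 : t1 ≠ t2) (h13 : t1 ≠ t3) (h23 : t2 ≠ t3)
    (hw : c s(w,w1) = t3) : False := by
  rcases hK3e x y z w nxy nxz nxw nyz nyw nzw (show c s(x,y) ≠ c s(x,z) by rw [ht3, ht2]; exact (h23.symm)) (show c s(x,y) ≠ c s(y,z) by rw [ht3, ht1]; exact (h13.symm)) (show c s(x,z) ≠ c s(y,z) by rw [ht2, ht1]; exact (h12.symm)) with hN1 | hN1 | hN1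
  · have hF2 : c s(x,w) = t3 := (hN1.trans ht3)
    exact hP4 y x w w1 (nxy.symm) nyw nyw1 nxw nxw1 nww1 (((hs c y x).trans ht3).trans (hF2).symm) ((hF2).trans (hw).symm)
  · have hF3 : c s(x,w) = t2 := (hN1.trans ht2)
    rcases hK3e y x z w (nxy.symm) nyz nyw nxz nxw nzw (show c s(y,x) ≠ c s(y,z) by rw [((hs c y x).trans ht3), ht1]; exact (h13.symm)) (show c s(y,x) ≠ c s(x,z) by rw [((hs c y x).trans ht3), ht2]; exact (h23.symm)) (show c s(y,z) ≠ c s(x,z) by rw [ht1, ht2]; exact h12) with hN4 | hN4 | hN4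
    · have hF5 : c s(y,w) = t3 := (hN4.trans ((hs c y x).trans ht3))
      exact hP4 x y w w1 nxy nxw nxw1 nyw nyw1 nww1 (ht3.trans (hF5).symm) ((hF5).trans (hw).symm)
    · have hF6 : c s(y,w) = t1 := (hN4.trans ht1)
      rcases hK3e z x y w (nxz.symm) (nyz.symm) nzw nxy nxw nyw (show c s(z,x) ≠ c s(z,y) by rw [((hs c z x).trans ht2), ((hs c z y).trans ht1)]; exact (h12.symm)) (show c s(z,x) ≠ c s(x,y) by rw [((hs c z x).trans ht2), ht3]; exact h23) (show c s(z,y) ≠ c s(x,y) by rw [((hs c z y).trans ht1), ht3]; exact h13) with hN7 | hN7 | hN7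
      · have hF8 : c s(z,w) = t2 := (hN7.trans ((hs c z x).trans ht2))
        rcases hK3e x y z w1 nxy nxz nxw1 nyz nyw1 nzw1 (show c s(x,y) ≠ c s(x,z) by rw [ht3, ht2]; exact (h23.symm)) (show c s(x,y) ≠ c s(y,z) by rw [ht3, ht1]; exact (h13.symm)) (show c s(x,z) ≠ c s(y,z) by rw [ht2, ht1]; exact (h12.symm)) with hN9 | hN9 | hN9
        · have hF10 : c s(x,w1) = t3 := (hN9.trans ht3)
          exact hP4 y x w1 w (nxy.symm) nyw1 nyw nxw1 nxw (nww1.symm) (((hs c y x).trans ht3).trans (hF10).symm) ((hF10).trans (((hs c w1 w).trans hw)).symm)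
        · have hF11 : c s(x,w1) = t2 := (hN9.trans ht2)
          exact hP4 z w x w1 nzw (nxz.symm) nzw1 (nxw.symm) nww1 nxw1 (hF8.trans (((hs c w x).trans hF3)).symm) ((((hs c w x).trans hF3)).trans (hF11).symm)
        · have hF12 : c s(x,w1) = t1 := (hN9.trans ht1)
          rcases hK3e y x z w1 (nxy.symm) nyz nyw1 nxz nxw1 nzw1 (show c s(y,x) ≠ c s(y,z) by rw [((hs c y x).trans ht3), ht1]; exact (h13.symm)) (show c s(y,x) ≠ c s(x,z) by rw [((hs c y x).trans ht3), ht2]; exact (h23.symm)) (show c s(y,z) ≠ c s(x,z) by rw [ht1, ht2]; exact h12) with hN13 | hN13 | hN13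
          · have hF14 : c s(y,w1) = t3 := (hN13.trans ((hs c y x).trans ht3))
            exact hP4 x y w1 w nxy nxw1 nxw nyw1 nyw (nww1.symm) (ht3.trans (hF14).symm) ((hF14).trans (((hs c w1 w).trans hw)).symm)
          · have hF15 : c s(y,w1) = t1 := (hN13.trans ht1)
            exact hP4 x w1 y z nxw1 nxy nxz (nyw1.symm) (nzw1.symm) nyz (hF12.trans (((hs c w1 y).trans hF15)).symm) ((((hs c w1 y).trans hF15)).trans (ht1).symm)
          · have hF16 : c s(y,w1) = t2 := (hN13.trans ht2)
            rcases hK3e z x y w1 (nxz.symm) (nyz.symm) nzw1 nxy nxw1 nyw1 (show c s(z,x) ≠ c s(z,y) by rw [((hs c z x).trans ht2), ((hs c z y).trans ht1)]; exact (h12.symm)) (show c s(z,x) ≠ c s(x,y) by rw [((hs c z x).trans ht2), ht3]; exact h23) (show c s(z,y) ≠ c s(x,y) by rw [((hs c z y).trans ht1), ht3]; exact h13) with hN17 | hN17 | hN17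
            · have hF18 : c s(z,w1) = t2 := (hN17.trans ((hs c z x).trans ht2))
              exact hP4 x z w1 y nxz nxw1 nxy nzw1 (nyz.symm) (nyw1.symm) (ht2.trans (hF18).symm) ((hF18).trans (((hs c w1 y).trans hF16)).symm)
            · have hF19 : c s(z,w1) = t1 := (hN17.trans ((hs c z y).trans ht1))
              exact hP4 x w1 z y nxw1 nxz nxy (nzw1.symm) (nyw1.symm) (nyz.symm) (hF12.trans (((hs c w1 z).trans hF19)).symm) ((((hs c w1 z).trans hF19)).trans (((hs c z y).trans ht1)).symm)
            · have hF20 : c s(z,w1) = t3 := (hN17.trans ht3)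
              rcases hK3e x y z w2 nxy nxz nxw2 nyz nyw2 nzw2 (show c s(x,y) ≠ c s(x,z) by rw [ht3, ht2]; exact (h23.symm)) (show c s(x,y) ≠ c s(y,z) by rw [ht3, ht1]; exact (h13.symm)) (show c s(x,z) ≠ c s(y,z) by rw [ht2, ht1]; exact (h12.symm)) with hN21 | hN21 | hN21
              · have hF22 : c s(x,w2) = t3 := (hN21.trans ht3)
                rcases hK3e y x z w2 (nxy.symm) nyz nyw2 nxz nxw2 nzw2 (show c s(y,x) ≠ c s(y,z) by rw [((hs c y x).trans ht3), ht1]; exact (h13.symm)) (show c s(y,x) ≠ c s(x,z) by rw [((hs c y x).trans ht3), ht2]; exact (h23.symm)) (show c s(y,z) ≠ c s(x,z) by rw [ht1, ht2]; exact h12) with hN23 | hN23 | hN23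
                · have hF24 : c s(y,w2) = t3 := (hN23.trans ((hs c y x).trans ht3))
                  rcases hK3e z x y w2 (nxz.symm) (nyz.symm) nzw2 nxy nxw2 nyw2 (show c s(z,x) ≠ c s(z,y) by rw [((hs c z x).trans ht2), ((hs c z y).trans ht1)]; exact (h12.symm)) (show c s(z,x) ≠ c s(x,y) by rw [((hs c z x).trans ht2), ht3]; exact h23) (show c s(z,y) ≠ c s(x,y) by rw [((hs c z y).trans ht1), ht3]; exact h13) with hN25 | hN25 | hN25
                  · have hF26 : c s(z,w2) = t2 := (hN25.trans ((hs c z x).trans ht2))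
                    exact hP4 x w z w2 nxw nxz nxw2 (nzw.symm) nww2 nzw2 (hF3.trans (((hs c w z).trans hF8)).symm) ((((hs c w z).trans hF8)).trans (hF26).symm)
                  · have hF27 : c s(z,w2) = t1 := (hN25.trans ((hs c z y).trans ht1))
                    exact hP4 w y z w2 (nyw.symm) (nzw.symm) nww2 nyz nyw2 nzw2 (((hs c w y).trans hF6).trans (ht1).symm) ((ht1).trans (hF27).symm)
                  · have hF28 : c s(z,w2) = t3 := (hN25.trans ht3)
                    exact hP4 x y w2 z nxy nxw2 nxz nyw2 nyz (nzw2.symm) (ht3.trans (hF24).symm) ((hF24).trans (((hs c w2 z).trans hF28)).symm)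
                · have hF29 : c s(y,w2) = t1 := (hN23.trans ht1)
                  rcases hK3e z x y w2 (nxz.symm) (nyz.symm) nzw2 nxy nxw2 nyw2 (show c s(z,x) ≠ c s(z,y) by rw [((hs c z x).trans ht2), ((hs c z y).trans ht1)]; exact (h12.symm)) (show c s(z,x) ≠ c s(x,y) by rw [((hs c z x).trans ht2), ht3]; exact h23) (show c s(z,y) ≠ c s(x,y) by rw [((hs c z y).trans ht1), ht3]; exact h13) with hN30 | hN30 | hN30
                  · have hF31 : c s(z,w2) = t2 := (hN30.trans ((hs c z x).trans ht2))
                    exact hP4 x w z w2 nxw nxz nxw2 (nzw.symm) nww2 nzw2 (hF3.trans (((hs c w z).trans hF8)).symm) ((((hs c w z).trans hF8)).trans (hF31).symm)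
                  · have hF32 : c s(z,w2) = t1 := (hN30.trans ((hs c z y).trans ht1))
                    exact hP4 z w2 y w nzw2 (nyz.symm) nzw (nyw2.symm) (nww2.symm) nyw (hF32.trans (((hs c w2 y).trans hF29)).symm) ((((hs c w2 y).trans hF29)).trans (hF6).symm)
                  · have hF33 : c s(z,w2) = t3 := (hN30.trans ht3)
                    exact hP4 x w2 z w1 nxw2 nxz nxw1 (nzw2.symm) (nw1w2.symm) nzw1 (hF22.trans (((hs c w2 z).trans hF33)).symm) ((((hs c w2 z).trans hF33)).trans (hF20).symm)
                · have hF34 : c s(y,w2) = t2 := (hN23.trans ht2)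
                  rcases hK3e z x y w2 (nxz.symm) (nyz.symm) nzw2 nxy nxw2 nyw2 (show c s(z,x) ≠ c s(z,y) by rw [((hs c z x).trans ht2), ((hs c z y).trans ht1)]; exact (h12.symm)) (show c s(z,x) ≠ c s(x,y) by rw [((hs c z x).trans ht2), ht3]; exact h23) (show c s(z,y) ≠ c s(x,y) by rw [((hs c z y).trans ht1), ht3]; exact h13) with hN35 | hN35 | hN35
                  · have hF36 : c s(z,w2) = t2 := (hN35.trans ((hs c z x).trans ht2))
                    exact hP4 x z w2 y nxz nxw2 nxy nzw2 (nyz.symm) (nyw2.symm) (ht2.trans (hF36).symm) ((hF36).trans (((hs c w2 y).trans hF34)).symm)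
                  · have hF37 : c s(z,w2) = t1 := (hN35.trans ((hs c z y).trans ht1))
                    exact hP4 w y z w2 (nyw.symm) (nzw.symm) nww2 nyz nyw2 nzw2 (((hs c w y).trans hF6).trans (ht1).symm) ((ht1).trans (hF37).symm)
                  · have hF38 : c s(z,w2) = t3 := (hN35.trans ht3)
                    exact hP4 x w2 z w1 nxw2 nxz nxw1 (nzw2.symm) (nw1w2.symm) nzw1 (hF22.trans (((hs c w2 z).trans hF38)).symm) ((((hs c w2 z).trans hF38)).trans (hF20).symm)
              · have hF39 : c s(x,w2) = t2 := (hN21.trans ht2)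
                exact hP4 z w x w2 nzw (nxz.symm) nzw2 (nxw.symm) nww2 nxw2 (hF8.trans (((hs c w x).trans hF3)).symm) ((((hs c w x).trans hF3)).trans (hF39).symm)
              · have hF40 : c s(x,w2) = t1 := (hN21.trans ht1)
                rcases hK3e y x z w2 (nxy.symm) nyz nyw2 nxz nxw2 nzw2 (show c s(y,x) ≠ c s(y,z) by rw [((hs c y x).trans ht3), ht1]; exact (h13.symm)) (show c s(y,x) ≠ c s(x,z) by rw [((hs c y x).trans ht3), ht2]; exact (h23.symm)) (show c s(y,z) ≠ c s(x,z) by rw [ht1, ht2]; exact h12) with hN41 | hN41 | hN41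
                · have hF42 : c s(y,w2) = t3 := (hN41.trans ((hs c y x).trans ht3))
                  rcases hK3e z x y w2 (nxz.symm) (nyz.symm) nzw2 nxy nxw2 nyw2 (show c s(z,x) ≠ c s(z,y) by rw [((hs c z x).trans ht2), ((hs c z y).trans ht1)]; exact (h12.symm)) (show c s(z,x) ≠ c s(x,y) by rw [((hs c z x).trans ht2), ht3]; exact h23) (show c s(z,y) ≠ c s(x,y) by rw [((hs c z y).trans ht1), ht3]; exact h13) with hN43 | hN43 | hN43
                  · have hF44 : c s(z,w2) = t2 := (hN43.trans ((hs c z x).trans ht2))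
                    exact hP4 x w z w2 nxw nxz nxw2 (nzw.symm) nww2 nzw2 (hF3.trans (((hs c w z).trans hF8)).symm) ((((hs c w z).trans hF8)).trans (hF44).symm)
                  · have hF45 : c s(z,w2) = t1 := (hN43.trans ((hs c z y).trans ht1))
                    exact hP4 x w2 z y nxw2 nxz nxy (nzw2.symm) (nyw2.symm) (nyz.symm) (hF40.trans (((hs c w2 z).trans hF45)).symm) ((((hs c w2 z).trans hF45)).trans (((hs c z y).trans ht1)).symm)
                  · have hF46 : c s(z,w2) = t3 := (hN43.trans ht3)
                    exact hP4 x y w2 z nxy nxw2 nxz nyw2 nyz (nzw2.symm) (ht3.trans (hF42).symm) ((hF42).trans (((hs c w2 z).trans hF46)).symm)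
                · have hF47 : c s(y,w2) = t1 := (hN41.trans ht1)
                  exact hP4 x w2 y z nxw2 nxy nxz (nyw2.symm) (nzw2.symm) nyz (hF40.trans (((hs c w2 y).trans hF47)).symm) ((((hs c w2 y).trans hF47)).trans (ht1).symm)
                · have hF48 : c s(y,w2) = t2 := (hN41.trans ht2)
                  rcases hK3e z x y w2 (nxz.symm) (nyz.symm) nzw2 nxy nxw2 nyw2 (show c s(z,x) ≠ c s(z,y) by rw [((hs c z x).trans ht2), ((hs c z y).trans ht1)]; exact (h12.symm)) (show c s(z,x) ≠ c s(x,y) by rw [((hs c z x).trans ht2), ht3]; exact h23) (show c s(z,y) ≠ c s(x,y) by rw [((hs c z y).trans ht1), ht3]; exact h13) with hN49 | hN49 | hN49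
                  · have hF50 : c s(z,w2) = t2 := (hN49.trans ((hs c z x).trans ht2))
                    exact hP4 x z w2 y nxz nxw2 nxy nzw2 (nyz.symm) (nyw2.symm) (ht2.trans (hF50).symm) ((hF50).trans (((hs c w2 y).trans hF48)).symm)
                  · have hF51 : c s(z,w2) = t1 := (hN49.trans ((hs c z y).trans ht1))
                    exact hP4 x w2 z y nxw2 nxz nxy (nzw2.symm) (nyw2.symm) (nyz.symm) (hF40.trans (((hs c w2 z).trans hF51)).symm) ((((hs c w2 z).trans hF51)).trans (((hs c z y).trans ht1)).symm)
                  · have hF52 : c s(z,w2) = t3 := (hN49.trans ht3)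
                    exact hP4 w w1 z w2 nww1 (nzw.symm) nww2 (nzw1.symm) nw1w2 nzw2 (hw.trans (((hs c w1 z).trans hF20)).symm) ((((hs c w1 z).trans hF20)).trans (hF52).symm)
      · have hF53 : c s(z,w) = t1 := (hN7.trans ((hs c z y).trans ht1))
        rcases hK3e x y z w1 nxy nxz nxw1 nyz nyw1 nzw1 (show c s(x,y) ≠ c s(x,z) by rw [ht3, ht2]; exact (h23.symm)) (show c s(x,y) ≠ c s(y,z) by rw [ht3, ht1]; exact (h13.symm)) (show c s(x,z) ≠ c s(y,z) by rw [ht2, ht1]; exact (h12.symm)) with hN54 | hN54 | hN54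
        · have hF55 : c s(x,w1) = t3 := (hN54.trans ht3)
          exact hP4 y x w1 w (nxy.symm) nyw1 nyw nxw1 nxw (nww1.symm) (((hs c y x).trans ht3).trans (hF55).symm) ((hF55).trans (((hs c w1 w).trans hw)).symm)
        · have hF56 : c s(x,w1) = t2 := (hN54.trans ht2)
          rcases hK3e y x z w1 (nxy.symm) nyz nyw1 nxz nxw1 nzw1 (show c s(y,x) ≠ c s(y,z) by rw [((hs c y x).trans ht3), ht1]; exact (h13.symm)) (show c s(y,x) ≠ c s(x,z) by rw [((hs c y x).trans ht3), ht2]; exact (h23.symm)) (show c s(y,z) ≠ c s(x,z) by rw [ht1, ht2]; exact h12) with hN57 | hN57 | hN57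
          · have hF58 : c s(y,w1) = t3 := (hN57.trans ((hs c y x).trans ht3))
            exact hP4 x y w1 w nxy nxw1 nxw nyw1 nyw (nww1.symm) (ht3.trans (hF58).symm) ((hF58).trans (((hs c w1 w).trans hw)).symm)
          · have hF59 : c s(y,w1) = t1 := (hN57.trans ht1)
            exact hP4 z w y w1 nzw (nyz.symm) nzw1 (nyw.symm) nww1 nyw1 (hF53.trans (((hs c w y).trans hF6)).symm) ((((hs c w y).trans hF6)).trans (hF59).symm)
          · have hF60 : c s(y,w1) = t2 := (hN57.trans ht2)
            exact hP4 y w1 x z nyw1 (nxy.symm) nyz (nxw1.symm) (nzw1.symm) nxz (hF60.trans (((hs c w1 x).trans hF56)).symm) ((((hs c w1 x).trans hF56)).trans (ht2).symm)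
        · have hF61 : c s(x,w1) = t1 := (hN54.trans ht1)
          rcases hK3e y x z w1 (nxy.symm) nyz nyw1 nxz nxw1 nzw1 (show c s(y,x) ≠ c s(y,z) by rw [((hs c y x).trans ht3), ht1]; exact (h13.symm)) (show c s(y,x) ≠ c s(x,z) by rw [((hs c y x).trans ht3), ht2]; exact (h23.symm)) (show c s(y,z) ≠ c s(x,z) by rw [ht1, ht2]; exact h12) with hN62 | hN62 | hN62
          · have hF63 : c s(y,w1) = t3 := (hN62.trans ((hs c y x).trans ht3))
            exact hP4 x y w1 w nxy nxw1 nxw nyw1 nyw (nww1.symm) (ht3.trans (hF63).symm) ((hF63).trans (((hs c w1 w).trans hw)).symm)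
          · have hF64 : c s(y,w1) = t1 := (hN62.trans ht1)
            exact hP4 x w1 y z nxw1 nxy nxz (nyw1.symm) (nzw1.symm) nyz (hF61.trans (((hs c w1 y).trans hF64)).symm) ((((hs c w1 y).trans hF64)).trans (ht1).symm)
          · have hF65 : c s(y,w1) = t2 := (hN62.trans ht2)
            rcases hK3e z x y w1 (nxz.symm) (nyz.symm) nzw1 nxy nxw1 nyw1 (show c s(z,x) ≠ c s(z,y) by rw [((hs c z x).trans ht2), ((hs c z y).trans ht1)]; exact (h12.symm)) (show c s(z,x) ≠ c s(x,y) by rw [((hs c z x).trans ht2), ht3]; exact h23) (show c s(z,y) ≠ c s(x,y) by rw [((hs c z y).trans ht1), ht3]; exact h13) with hN66 | hN66 | hN66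
            · have hF67 : c s(z,w1) = t2 := (hN66.trans ((hs c z x).trans ht2))
              exact hP4 x z w1 y nxz nxw1 nxy nzw1 (nyz.symm) (nyw1.symm) (ht2.trans (hF67).symm) ((hF67).trans (((hs c w1 y).trans hF65)).symm)
            · have hF68 : c s(z,w1) = t1 := (hN66.trans ((hs c z y).trans ht1))
              exact hP4 x w1 z y nxw1 nxz nxy (nzw1.symm) (nyw1.symm) (nyz.symm) (hF61.trans (((hs c w1 z).trans hF68)).symm) ((((hs c w1 z).trans hF68)).trans (((hs c z y).trans ht1)).symm)
            · have hF69 : c s(z,w1) = t3 := (hN66.trans ht3)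
              rcases hK3e x y z w2 nxy nxz nxw2 nyz nyw2 nzw2 (show c s(x,y) ≠ c s(x,z) by rw [ht3, ht2]; exact (h23.symm)) (show c s(x,y) ≠ c s(y,z) by rw [ht3, ht1]; exact (h13.symm)) (show c s(x,z) ≠ c s(y,z) by rw [ht2, ht1]; exact (h12.symm)) with hN70 | hN70 | hN70
              · have hF71 : c s(x,w2) = t3 := (hN70.trans ht3)
                rcases hK3e y x z w2 (nxy.symm) nyz nyw2 nxz nxw2 nzw2 (show c s(y,x) ≠ c s(y,z) by rw [((hs c y x).trans ht3), ht1]; exact (h13.symm)) (show c s(y,x) ≠ c s(x,z) by rw [((hs c y x).trans ht3), ht2]; exact (h23.symm)) (show c s(y,z) ≠ c s(x,z) by rw [ht1, ht2]; exact h12) with hN72 | hN72 | hN72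
                · have hF73 : c s(y,w2) = t3 := (hN72.trans ((hs c y x).trans ht3))
                  rcases hK3e z x y w2 (nxz.symm) (nyz.symm) nzw2 nxy nxw2 nyw2 (show c s(z,x) ≠ c s(z,y) by rw [((hs c z x).trans ht2), ((hs c z y).trans ht1)]; exact (h12.symm)) (show c s(z,x) ≠ c s(x,y) by rw [((hs c z x).trans ht2), ht3]; exact h23) (show c s(z,y) ≠ c s(x,y) by rw [((hs c z y).trans ht1), ht3]; exact h13) with hN74 | hN74 | hN74
                  · have hF75 : c s(z,w2) = t2 := (hN74.trans ((hs c z x).trans ht2))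
                    exact hP4 w x z w2 (nxw.symm) (nzw.symm) nww2 nxz nxw2 nzw2 (((hs c w x).trans hF3).trans (ht2).symm) ((ht2).trans (hF75).symm)
                  · have hF76 : c s(z,w2) = t1 := (hN74.trans ((hs c z y).trans ht1))
                    exact hP4 y w z w2 nyw nyz nyw2 (nzw.symm) nww2 nzw2 (hF6.trans (((hs c w z).trans hF53)).symm) ((((hs c w z).trans hF53)).trans (hF76).symm)
                  · have hF77 : c s(z,w2) = t3 := (hN74.trans ht3)
                    exact hP4 x y w2 z nxy nxw2 nxz nyw2 nyz (nzw2.symm) (ht3.trans (hF73).symm) ((hF73).trans (((hs c w2 z).trans hF77)).symm)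
                · have hF78 : c s(y,w2) = t1 := (hN72.trans ht1)
                  exact hP4 z w y w2 nzw (nyz.symm) nzw2 (nyw.symm) nww2 nyw2 (hF53.trans (((hs c w y).trans hF6)).symm) ((((hs c w y).trans hF6)).trans (hF78).symm)
                · have hF79 : c s(y,w2) = t2 := (hN72.trans ht2)
                  rcases hK3e z x y w2 (nxz.symm) (nyz.symm) nzw2 nxy nxw2 nyw2 (show c s(z,x) ≠ c s(z,y) by rw [((hs c z x).trans ht2), ((hs c z y).trans ht1)]; exact (h12.symm)) (show c s(z,x) ≠ c s(x,y) by rw [((hs c z x).trans ht2), ht3]; exact h23) (show c s(z,y) ≠ c s(x,y) by rw [((hs c z y).trans ht1), ht3]; exact h13) with hN80 | hN80 | hN80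
                  · have hF81 : c s(z,w2) = t2 := (hN80.trans ((hs c z x).trans ht2))
                    exact hP4 x z w2 y nxz nxw2 nxy nzw2 (nyz.symm) (nyw2.symm) (ht2.trans (hF81).symm) ((hF81).trans (((hs c w2 y).trans hF79)).symm)
                  · have hF82 : c s(z,w2) = t1 := (hN80.trans ((hs c z y).trans ht1))
                    exact hP4 y w z w2 nyw nyz nyw2 (nzw.symm) nww2 nzw2 (hF6.trans (((hs c w z).trans hF53)).symm) ((((hs c w z).trans hF53)).trans (hF82).symm)
                  · have hF83 : c s(z,w2) = t3 := (hN80.trans ht3)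
                    exact hP4 x w2 z w1 nxw2 nxz nxw1 (nzw2.symm) (nw1w2.symm) nzw1 (hF71.trans (((hs c w2 z).trans hF83)).symm) ((((hs c w2 z).trans hF83)).trans (hF69).symm)
              · have hF84 : c s(x,w2) = t2 := (hN70.trans ht2)
                rcases hK3e y x z w2 (nxy.symm) nyz nyw2 nxz nxw2 nzw2 (show c s(y,x) ≠ c s(y,z) by rw [((hs c y x).trans ht3), ht1]; exact (h13.symm)) (show c s(y,x) ≠ c s(x,z) by rw [((hs c y x).trans ht3), ht2]; exact (h23.symm)) (show c s(y,z) ≠ c s(x,z) by rw [ht1, ht2]; exact h12) with hN85 | hN85 | hN85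
                · have hF86 : c s(y,w2) = t3 := (hN85.trans ((hs c y x).trans ht3))
                  rcases hK3e z x y w2 (nxz.symm) (nyz.symm) nzw2 nxy nxw2 nyw2 (show c s(z,x) ≠ c s(z,y) by rw [((hs c z x).trans ht2), ((hs c z y).trans ht1)]; exact (h12.symm)) (show c s(z,x) ≠ c s(x,y) by rw [((hs c z x).trans ht2), ht3]; exact h23) (show c s(z,y) ≠ c s(x,y) by rw [((hs c z y).trans ht1), ht3]; exact h13) with hN87 | hN87 | hN87
                  · have hF88 : c s(z,w2) = t2 := (hN87.trans ((hs c z x).trans ht2))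
                    exact hP4 z w2 x w nzw2 (nxz.symm) nzw (nxw2.symm) (nww2.symm) nxw (hF88.trans (((hs c w2 x).trans hF84)).symm) ((((hs c w2 x).trans hF84)).trans (hF3).symm)
                  · have hF89 : c s(z,w2) = t1 := (hN87.trans ((hs c z y).trans ht1))
                    exact hP4 y w z w2 nyw nyz nyw2 (nzw.symm) nww2 nzw2 (hF6.trans (((hs c w z).trans hF53)).symm) ((((hs c w z).trans hF53)).trans (hF89).symm)
                  · have hF90 : c s(z,w2) = t3 := (hN87.trans ht3)
                    exact hP4 x y w2 z nxy nxw2 nxz nyw2 nyz (nzw2.symm) (ht3.trans (hF86).symm) ((hF86).trans (((hs c w2 z).trans hF90)).symm)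
                · have hF91 : c s(y,w2) = t1 := (hN85.trans ht1)
                  exact hP4 z w y w2 nzw (nyz.symm) nzw2 (nyw.symm) nww2 nyw2 (hF53.trans (((hs c w y).trans hF6)).symm) ((((hs c w y).trans hF6)).trans (hF91).symm)
                · have hF92 : c s(y,w2) = t2 := (hN85.trans ht2)
                  exact hP4 x w2 y w1 nxw2 nxy nxw1 (nyw2.symm) (nw1w2.symm) nyw1 (hF84.trans (((hs c w2 y).trans hF92)).symm) ((((hs c w2 y).trans hF92)).trans (hF65).symm)
              · have hF93 : c s(x,w2) = t1 := (hN70.trans ht1)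
                rcases hK3e y x z w2 (nxy.symm) nyz nyw2 nxz nxw2 nzw2 (show c s(y,x) ≠ c s(y,z) by rw [((hs c y x).trans ht3), ht1]; exact (h13.symm)) (show c s(y,x) ≠ c s(x,z) by rw [((hs c y x).trans ht3), ht2]; exact (h23.symm)) (show c s(y,z) ≠ c s(x,z) by rw [ht1, ht2]; exact h12) with hN94 | hN94 | hN94
                · have hF95 : c s(y,w2) = t3 := (hN94.trans ((hs c y x).trans ht3))
                  rcases hK3e z x y w2 (nxz.symm) (nyz.symm) nzw2 nxy nxw2 nyw2 (show c s(z,x) ≠ c s(z,y) by rw [((hs c z x).trans ht2), ((hs c z y).trans ht1)]; exact (h12.symm)) (show c s(z,x) ≠ c s(x,y) by rw [((hs c z x).trans ht2), ht3]; exact h23) (show c s(z,y) ≠ c s(x,y) by rw [((hs c z y).trans ht1), ht3]; exact h13) with hN96 | hN96 | hN96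
                  · have hF97 : c s(z,w2) = t2 := (hN96.trans ((hs c z x).trans ht2))
                    exact hP4 w x z w2 (nxw.symm) (nzw.symm) nww2 nxz nxw2 nzw2 (((hs c w x).trans hF3).trans (ht2).symm) ((ht2).trans (hF97).symm)
                  · have hF98 : c s(z,w2) = t1 := (hN96.trans ((hs c z y).trans ht1))
                    exact hP4 x w2 z y nxw2 nxz nxy (nzw2.symm) (nyw2.symm) (nyz.symm) (hF93.trans (((hs c w2 z).trans hF98)).symm) ((((hs c w2 z).trans hF98)).trans (((hs c z y).trans ht1)).symm)
                  · have hF99 : c s(z,w2) = t3 := (hN96.trans ht3)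
                    exact hP4 x y w2 z nxy nxw2 nxz nyw2 nyz (nzw2.symm) (ht3.trans (hF95).symm) ((hF95).trans (((hs c w2 z).trans hF99)).symm)
                · have hF100 : c s(y,w2) = t1 := (hN94.trans ht1)
                  exact hP4 x w2 y z nxw2 nxy nxz (nyw2.symm) (nzw2.symm) nyz (hF93.trans (((hs c w2 y).trans hF100)).symm) ((((hs c w2 y).trans hF100)).trans (ht1).symm)
                · have hF101 : c s(y,w2) = t2 := (hN94.trans ht2)
                  rcases hK3e z x y w2 (nxz.symm) (nyz.symm) nzw2 nxy nxw2 nyw2 (show c s(z,x) ≠ c s(z,y) by rw [((hs c z x).trans ht2), ((hs c z y).trans ht1)]; exact (h12.symm)) (show c s(z,x) ≠ c s(x,y) by rw [((hs c z x).trans ht2), ht3]; exact h23) (show c s(z,y) ≠ c s(x,y) by rw [((hs c z y).trans ht1), ht3]; exact h13) with hN102 | hN102 | hN102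
                  · have hF103 : c s(z,w2) = t2 := (hN102.trans ((hs c z x).trans ht2))
                    exact hP4 x z w2 y nxz nxw2 nxy nzw2 (nyz.symm) (nyw2.symm) (ht2.trans (hF103).symm) ((hF103).trans (((hs c w2 y).trans hF101)).symm)
                  · have hF104 : c s(z,w2) = t1 := (hN102.trans ((hs c z y).trans ht1))
                    exact hP4 x w2 z y nxw2 nxz nxy (nzw2.symm) (nyw2.symm) (nyz.symm) (hF93.trans (((hs c w2 z).trans hF104)).symm) ((((hs c w2 z).trans hF104)).trans (((hs c z y).trans ht1)).symm)
                  · have hF105 : c s(z,w2) = t3 := (hN102.trans ht3)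
                    exact hP4 w w1 z w2 nww1 (nzw.symm) nww2 (nzw1.symm) nw1w2 nzw2 (hw.trans (((hs c w1 z).trans hF69)).symm) ((((hs c w1 z).trans hF69)).trans (hF105).symm)
      · have hF106 : c s(z,w) = t3 := (hN7.trans ht3)
        rcases hK3e x y z w1 nxy nxz nxw1 nyz nyw1 nzw1 (show c s(x,y) ≠ c s(x,z) by rw [ht3, ht2]; exact (h23.symm)) (show c s(x,y) ≠ c s(y,z) by rw [ht3, ht1]; exact (h13.symm)) (show c s(x,z) ≠ c s(y,z) by rw [ht2, ht1]; exact (h12.symm)) with hN107 | hN107 | hN107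
        · have hF108 : c s(x,w1) = t3 := (hN107.trans ht3)
          exact hP4 x w1 w z nxw1 nxw nxz (nww1.symm) (nzw1.symm) (nzw.symm) (hF108.trans (((hs c w1 w).trans hw)).symm) ((((hs c w1 w).trans hw)).trans (((hs c w z).trans hF106)).symm)
        · have hF109 : c s(x,w1) = t2 := (hN107.trans ht2)
          rcases hK3e y x z w1 (nxy.symm) nyz nyw1 nxz nxw1 nzw1 (show c s(y,x) ≠ c s(y,z) by rw [((hs c y x).trans ht3), ht1]; exact (h13.symm)) (show c s(y,x) ≠ c s(x,z) by rw [((hs c y x).trans ht3), ht2]; exact (h23.symm)) (show c s(y,z) ≠ c s(x,z) by rw [ht1, ht2]; exact h12) with hN110 | hN110 | hN110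
          · have hF111 : c s(y,w1) = t3 := (hN110.trans ((hs c y x).trans ht3))
            exact hP4 x y w1 w nxy nxw1 nxw nyw1 nyw (nww1.symm) (ht3.trans (hF111).symm) ((hF111).trans (((hs c w1 w).trans hw)).symm)
          · have hF112 : c s(y,w1) = t1 := (hN110.trans ht1)
            rcases hK3e z x y w1 (nxz.symm) (nyz.symm) nzw1 nxy nxw1 nyw1 (show c s(z,x) ≠ c s(z,y) by rw [((hs c z x).trans ht2), ((hs c z y).trans ht1)]; exact (h12.symm)) (show c s(z,x) ≠ c s(x,y) by rw [((hs c z x).trans ht2), ht3]; exact h23) (show c s(z,y) ≠ c s(x,y) by rw [((hs c z y).trans ht1), ht3]; exact h13) with hN113 | hN113 | hN113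
            · have hF114 : c s(z,w1) = t2 := (hN113.trans ((hs c z x).trans ht2))
              exact hP4 z w1 x w nzw1 (nxz.symm) nzw (nxw1.symm) (nww1.symm) nxw (hF114.trans (((hs c w1 x).trans hF109)).symm) ((((hs c w1 x).trans hF109)).trans (hF3).symm)
            · have hF115 : c s(z,w1) = t1 := (hN113.trans ((hs c z y).trans ht1))
              exact hP4 z w1 y w nzw1 (nyz.symm) nzw (nyw1.symm) (nww1.symm) nyw (hF115.trans (((hs c w1 y).trans hF112)).symm) ((((hs c w1 y).trans hF112)).trans (hF6).symm)
            · have hF116 : c s(z,w1) = t3 := (hN113.trans ht3)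
              rcases hK3e x y z w2 nxy nxz nxw2 nyz nyw2 nzw2 (show c s(x,y) ≠ c s(x,z) by rw [ht3, ht2]; exact (h23.symm)) (show c s(x,y) ≠ c s(y,z) by rw [ht3, ht1]; exact (h13.symm)) (show c s(x,z) ≠ c s(y,z) by rw [ht2, ht1]; exact (h12.symm)) with hN117 | hN117 | hN117
              · have hF118 : c s(x,w2) = t3 := (hN117.trans ht3)
                rcases hK3e y x z w2 (nxy.symm) nyz nyw2 nxz nxw2 nzw2 (show c s(y,x) ≠ c s(y,z) by rw [((hs c y x).trans ht3), ht1]; exact (h13.symm)) (show c s(y,x) ≠ c s(x,z) by rw [((hs c y x).trans ht3), ht2]; exact (h23.symm)) (show c s(y,z) ≠ c s(x,z) by rw [ht1, ht2]; exact h12) with hN119 | hN119 | hN119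
                · have hF120 : c s(y,w2) = t3 := (hN119.trans ((hs c y x).trans ht3))
                  rcases hK3e z x y w2 (nxz.symm) (nyz.symm) nzw2 nxy nxw2 nyw2 (show c s(z,x) ≠ c s(z,y) by rw [((hs c z x).trans ht2), ((hs c z y).trans ht1)]; exact (h12.symm)) (show c s(z,x) ≠ c s(x,y) by rw [((hs c z x).trans ht2), ht3]; exact h23) (show c s(z,y) ≠ c s(x,y) by rw [((hs c z y).trans ht1), ht3]; exact h13) with hN121 | hN121 | hN121
                  · have hF122 : c s(z,w2) = t2 := (hN121.trans ((hs c z x).trans ht2))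
                    exact hP4 w x z w2 (nxw.symm) (nzw.symm) nww2 nxz nxw2 nzw2 (((hs c w x).trans hF3).trans (ht2).symm) ((ht2).trans (hF122).symm)
                  · have hF123 : c s(z,w2) = t1 := (hN121.trans ((hs c z y).trans ht1))
                    exact hP4 w y z w2 (nyw.symm) (nzw.symm) nww2 nyz nyw2 nzw2 (((hs c w y).trans hF6).trans (ht1).symm) ((ht1).trans (hF123).symm)
                  · have hF124 : c s(z,w2) = t3 := (hN121.trans ht3)
                    exact hP4 x y w2 z nxy nxw2 nxz nyw2 nyz (nzw2.symm) (ht3.trans (hF120).symm) ((hF120).trans (((hs c w2 z).trans hF124)).symm)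
                · have hF125 : c s(y,w2) = t1 := (hN119.trans ht1)
                  rcases hK3e z x y w2 (nxz.symm) (nyz.symm) nzw2 nxy nxw2 nyw2 (show c s(z,x) ≠ c s(z,y) by rw [((hs c z x).trans ht2), ((hs c z y).trans ht1)]; exact (h12.symm)) (show c s(z,x) ≠ c s(x,y) by rw [((hs c z x).trans ht2), ht3]; exact h23) (show c s(z,y) ≠ c s(x,y) by rw [((hs c z y).trans ht1), ht3]; exact h13) with hN126 | hN126 | hN126
                  · have hF127 : c s(z,w2) = t2 := (hN126.trans ((hs c z x).trans ht2))
                    exact hP4 w x z w2 (nxw.symm) (nzw.symm) nww2 nxz nxw2 nzw2 (((hs c w x).trans hF3).trans (ht2).symm) ((ht2).trans (hF127).symm)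
                  · have hF128 : c s(z,w2) = t1 := (hN126.trans ((hs c z y).trans ht1))
                    exact hP4 z w2 y w nzw2 (nyz.symm) nzw (nyw2.symm) (nww2.symm) nyw (hF128.trans (((hs c w2 y).trans hF125)).symm) ((((hs c w2 y).trans hF125)).trans (hF6).symm)
                  · have hF129 : c s(z,w2) = t3 := (hN126.trans ht3)
                    exact hP4 x w2 z w nxw2 nxz nxw (nzw2.symm) (nww2.symm) nzw (hF118.trans (((hs c w2 z).trans hF129)).symm) ((((hs c w2 z).trans hF129)).trans (hF106).symm)
                · have hF130 : c s(y,w2) = t2 := (hN119.trans ht2)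
                  rcases hK3e z x y w2 (nxz.symm) (nyz.symm) nzw2 nxy nxw2 nyw2 (show c s(z,x) ≠ c s(z,y) by rw [((hs c z x).trans ht2), ((hs c z y).trans ht1)]; exact (h12.symm)) (show c s(z,x) ≠ c s(x,y) by rw [((hs c z x).trans ht2), ht3]; exact h23) (show c s(z,y) ≠ c s(x,y) by rw [((hs c z y).trans ht1), ht3]; exact h13) with hN131 | hN131 | hN131
                  · have hF132 : c s(z,w2) = t2 := (hN131.trans ((hs c z x).trans ht2))
                    exact hP4 x z w2 y nxz nxw2 nxy nzw2 (nyz.symm) (nyw2.symm) (ht2.trans (hF132).symm) ((hF132).trans (((hs c w2 y).trans hF130)).symm)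
                  · have hF133 : c s(z,w2) = t1 := (hN131.trans ((hs c z y).trans ht1))
                    exact hP4 w y z w2 (nyw.symm) (nzw.symm) nww2 nyz nyw2 nzw2 (((hs c w y).trans hF6).trans (ht1).symm) ((ht1).trans (hF133).symm)
                  · have hF134 : c s(z,w2) = t3 := (hN131.trans ht3)
                    exact hP4 x w2 z w nxw2 nxz nxw (nzw2.symm) (nww2.symm) nzw (hF118.trans (((hs c w2 z).trans hF134)).symm) ((((hs c w2 z).trans hF134)).trans (hF106).symm)
              · have hF135 : c s(x,w2) = t2 := (hN117.trans ht2)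
                rcases hK3e y x z w2 (nxy.symm) nyz nyw2 nxz nxw2 nzw2 (show c s(y,x) ≠ c s(y,z) by rw [((hs c y x).trans ht3), ht1]; exact (h13.symm)) (show c s(y,x) ≠ c s(x,z) by rw [((hs c y x).trans ht3), ht2]; exact (h23.symm)) (show c s(y,z) ≠ c s(x,z) by rw [ht1, ht2]; exact h12) with hN136 | hN136 | hN136
                · have hF137 : c s(y,w2) = t3 := (hN136.trans ((hs c y x).trans ht3))
                  rcases hK3e z x y w2 (nxz.symm) (nyz.symm) nzw2 nxy nxw2 nyw2 (show c s(z,x) ≠ c s(z,y) by rw [((hs c z x).trans ht2), ((hs c z y).trans ht1)]; exact (h12.symm)) (show c s(z,x) ≠ c s(x,y) by rw [((hs c z x).trans ht2), ht3]; exact h23) (show c s(z,y) ≠ c s(x,y) by rw [((hs c z y).trans ht1), ht3]; exact h13) with hN138 | hN138 | hN138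
                  · have hF139 : c s(z,w2) = t2 := (hN138.trans ((hs c z x).trans ht2))
                    exact hP4 z w2 x w nzw2 (nxz.symm) nzw (nxw2.symm) (nww2.symm) nxw (hF139.trans (((hs c w2 x).trans hF135)).symm) ((((hs c w2 x).trans hF135)).trans (hF3).symm)
                  · have hF140 : c s(z,w2) = t1 := (hN138.trans ((hs c z y).trans ht1))
                    exact hP4 w y z w2 (nyw.symm) (nzw.symm) nww2 nyz nyw2 nzw2 (((hs c w y).trans hF6).trans (ht1).symm) ((ht1).trans (hF140).symm)
                  · have hF141 : c s(z,w2) = t3 := (hN138.trans ht3)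
                    exact hP4 x y w2 z nxy nxw2 nxz nyw2 nyz (nzw2.symm) (ht3.trans (hF137).symm) ((hF137).trans (((hs c w2 z).trans hF141)).symm)
                · have hF142 : c s(y,w2) = t1 := (hN136.trans ht1)
                  rcases hK3e z x y w2 (nxz.symm) (nyz.symm) nzw2 nxy nxw2 nyw2 (show c s(z,x) ≠ c s(z,y) by rw [((hs c z x).trans ht2), ((hs c z y).trans ht1)]; exact (h12.symm)) (show c s(z,x) ≠ c s(x,y) by rw [((hs c z x).trans ht2), ht3]; exact h23) (show c s(z,y) ≠ c s(x,y) by rw [((hs c z y).trans ht1), ht3]; exact h13) with hN143 | hN143 | hN143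
                  · have hF144 : c s(z,w2) = t2 := (hN143.trans ((hs c z x).trans ht2))
                    exact hP4 z w2 x w nzw2 (nxz.symm) nzw (nxw2.symm) (nww2.symm) nxw (hF144.trans (((hs c w2 x).trans hF135)).symm) ((((hs c w2 x).trans hF135)).trans (hF3).symm)
                  · have hF145 : c s(z,w2) = t1 := (hN143.trans ((hs c z y).trans ht1))
                    exact hP4 z w2 y w nzw2 (nyz.symm) nzw (nyw2.symm) (nww2.symm) nyw (hF145.trans (((hs c w2 y).trans hF142)).symm) ((((hs c w2 y).trans hF142)).trans (hF6).symm)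
                  · have hF146 : c s(z,w2) = t3 := (hN143.trans ht3)
                    exact hP4 w w1 z w2 nww1 (nzw.symm) nww2 (nzw1.symm) nw1w2 nzw2 (hw.trans (((hs c w1 z).trans hF116)).symm) ((((hs c w1 z).trans hF116)).trans (hF146).symm)
                · have hF147 : c s(y,w2) = t2 := (hN136.trans ht2)
                  exact hP4 y w2 x z nyw2 (nxy.symm) nyz (nxw2.symm) (nzw2.symm) nxz (hF147.trans (((hs c w2 x).trans hF135)).symm) ((((hs c w2 x).trans hF135)).trans (ht2).symm)
              · have hF148 : c s(x,w2) = t1 := (hN117.trans ht1)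
                rcases hK3e y x z w2 (nxy.symm) nyz nyw2 nxz nxw2 nzw2 (show c s(y,x) ≠ c s(y,z) by rw [((hs c y x).trans ht3), ht1]; exact (h13.symm)) (show c s(y,x) ≠ c s(x,z) by rw [((hs c y x).trans ht3), ht2]; exact (h23.symm)) (show c s(y,z) ≠ c s(x,z) by rw [ht1, ht2]; exact h12) with hN149 | hN149 | hN149
                · have hF150 : c s(y,w2) = t3 := (hN149.trans ((hs c y x).trans ht3))
                  rcases hK3e z x y w2 (nxz.symm) (nyz.symm) nzw2 nxy nxw2 nyw2 (show c s(z,x) ≠ c s(z,y) by rw [((hs c z x).trans ht2), ((hs c z y).trans ht1)]; exact (h12.symm)) (show c s(z,x) ≠ c s(x,y) by rw [((hs c z x).trans ht2), ht3]; exact h23) (show c s(z,y) ≠ c s(x,y) by rw [((hs c z y).trans ht1), ht3]; exact h13) with hN151 | hN151 | hN151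
                  · have hF152 : c s(z,w2) = t2 := (hN151.trans ((hs c z x).trans ht2))
                    exact hP4 w x z w2 (nxw.symm) (nzw.symm) nww2 nxz nxw2 nzw2 (((hs c w x).trans hF3).trans (ht2).symm) ((ht2).trans (hF152).symm)
                  · have hF153 : c s(z,w2) = t1 := (hN151.trans ((hs c z y).trans ht1))
                    exact hP4 x w2 z y nxw2 nxz nxy (nzw2.symm) (nyw2.symm) (nyz.symm) (hF148.trans (((hs c w2 z).trans hF153)).symm) ((((hs c w2 z).trans hF153)).trans (((hs c z y).trans ht1)).symm)
                  · have hF154 : c s(z,w2) = t3 := (hN151.trans ht3)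
                    exact hP4 x y w2 z nxy nxw2 nxz nyw2 nyz (nzw2.symm) (ht3.trans (hF150).symm) ((hF150).trans (((hs c w2 z).trans hF154)).symm)
                · have hF155 : c s(y,w2) = t1 := (hN149.trans ht1)
                  exact hP4 x w2 y z nxw2 nxy nxz (nyw2.symm) (nzw2.symm) nyz (hF148.trans (((hs c w2 y).trans hF155)).symm) ((((hs c w2 y).trans hF155)).trans (ht1).symm)
                · have hF156 : c s(y,w2) = t2 := (hN149.trans ht2)
                  rcases hK3e z x y w2 (nxz.symm) (nyz.symm) nzw2 nxy nxw2 nyw2 (show c s(z,x) ≠ c s(z,y) by rw [((hs c z x).trans ht2), ((hs c z y).trans ht1)]; exact (h12.symm)) (show c s(z,x) ≠ c s(x,y) by rw [((hs c z x).trans ht2), ht3]; exact h23) (show c s(z,y) ≠ c s(x,y) by rw [((hs c z y).trans ht1), ht3]; exact h13) with hN157 | hN157 | hN157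
                  · have hF158 : c s(z,w2) = t2 := (hN157.trans ((hs c z x).trans ht2))
                    exact hP4 x z w2 y nxz nxw2 nxy nzw2 (nyz.symm) (nyw2.symm) (ht2.trans (hF158).symm) ((hF158).trans (((hs c w2 y).trans hF156)).symm)
                  · have hF159 : c s(z,w2) = t1 := (hN157.trans ((hs c z y).trans ht1))
                    exact hP4 x w2 z y nxw2 nxz nxy (nzw2.symm) (nyw2.symm) (nyz.symm) (hF148.trans (((hs c w2 z).trans hF159)).symm) ((((hs c w2 z).trans hF159)).trans (((hs c z y).trans ht1)).symm)
                  · have hF160 : c s(z,w2) = t3 := (hN157.trans ht3)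
                    exact hP4 w w1 z w2 nww1 (nzw.symm) nww2 (nzw1.symm) nw1w2 nzw2 (hw.trans (((hs c w1 z).trans hF116)).symm) ((((hs c w1 z).trans hF116)).trans (hF160).symm)
          · have hF161 : c s(y,w1) = t2 := (hN110.trans ht2)
            exact hP4 y w1 x z nyw1 (nxy.symm) nyz (nxw1.symm) (nzw1.symm) nxz (hF161.trans (((hs c w1 x).trans hF109)).symm) ((((hs c w1 x).trans hF109)).trans (ht2).symm)
        · have hF162 : c s(x,w1) = t1 := (hN107.trans ht1)
          rcases hK3e y x z w1 (nxy.symm) nyz nyw1 nxz nxw1 nzw1 (show c s(y,x) ≠ c s(y,z) by rw [((hs c y x).trans ht3), ht1]; exact (h13.symm)) (show c s(y,x) ≠ c s(x,z) by rw [((hs c y x).trans ht3), ht2]; exact (h23.symm)) (show c s(y,z) ≠ c s(x,z) by rw [ht1, ht2]; exact h12) with hN163 | hN163 | hN163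
          · have hF164 : c s(y,w1) = t3 := (hN163.trans ((hs c y x).trans ht3))
            exact hP4 x y w1 w nxy nxw1 nxw nyw1 nyw (nww1.symm) (ht3.trans (hF164).symm) ((hF164).trans (((hs c w1 w).trans hw)).symm)
          · have hF165 : c s(y,w1) = t1 := (hN163.trans ht1)
            exact hP4 x w1 y z nxw1 nxy nxz (nyw1.symm) (nzw1.symm) nyz (hF162.trans (((hs c w1 y).trans hF165)).symm) ((((hs c w1 y).trans hF165)).trans (ht1).symm)
          · have hF166 : c s(y,w1) = t2 := (hN163.trans ht2)
            rcases hK3e z x y w1 (nxz.symm) (nyz.symm) nzw1 nxy nxw1 nyw1 (show c s(z,x) ≠ c s(z,y) by rw [((hs c z x).trans ht2), ((hs c z y).trans ht1)]; exact (h12.symm)) (show c s(z,x) ≠ c s(x,y) by rw [((hs c z x).trans ht2), ht3]; exact h23) (show c s(z,y) ≠ c s(x,y) by rw [((hs c z y).trans ht1), ht3]; exact h13) with hN167 | hN167 | hN167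
            · have hF168 : c s(z,w1) = t2 := (hN167.trans ((hs c z x).trans ht2))
              exact hP4 x z w1 y nxz nxw1 nxy nzw1 (nyz.symm) (nyw1.symm) (ht2.trans (hF168).symm) ((hF168).trans (((hs c w1 y).trans hF166)).symm)
            · have hF169 : c s(z,w1) = t1 := (hN167.trans ((hs c z y).trans ht1))
              exact hP4 x w1 z y nxw1 nxz nxy (nzw1.symm) (nyw1.symm) (nyz.symm) (hF162.trans (((hs c w1 z).trans hF169)).symm) ((((hs c w1 z).trans hF169)).trans (((hs c z y).trans ht1)).symm)
            · have hF170 : c s(z,w1) = t3 := (hN167.trans ht3)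
              rcases hK3e x y z w2 nxy nxz nxw2 nyz nyw2 nzw2 (show c s(x,y) ≠ c s(x,z) by rw [ht3, ht2]; exact (h23.symm)) (show c s(x,y) ≠ c s(y,z) by rw [ht3, ht1]; exact (h13.symm)) (show c s(x,z) ≠ c s(y,z) by rw [ht2, ht1]; exact (h12.symm)) with hN171 | hN171 | hN171
              · have hF172 : c s(x,w2) = t3 := (hN171.trans ht3)
                rcases hK3e y x z w2 (nxy.symm) nyz nyw2 nxz nxw2 nzw2 (show c s(y,x) ≠ c s(y,z) by rw [((hs c y x).trans ht3), ht1]; exact (h13.symm)) (show c s(y,x) ≠ c s(x,z) by rw [((hs c y x).trans ht3), ht2]; exact (h23.symm)) (show c s(y,z) ≠ c s(x,z) by rw [ht1, ht2]; exact h12) with hN173 | hN173 | hN173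
                · have hF174 : c s(y,w2) = t3 := (hN173.trans ((hs c y x).trans ht3))
                  rcases hK3e z x y w2 (nxz.symm) (nyz.symm) nzw2 nxy nxw2 nyw2 (show c s(z,x) ≠ c s(z,y) by rw [((hs c z x).trans ht2), ((hs c z y).trans ht1)]; exact (h12.symm)) (show c s(z,x) ≠ c s(x,y) by rw [((hs c z x).trans ht2), ht3]; exact h23) (show c s(z,y) ≠ c s(x,y) by rw [((hs c z y).trans ht1), ht3]; exact h13) with hN175 | hN175 | hN175
                  · have hF176 : c s(z,w2) = t2 := (hN175.trans ((hs c z x).trans ht2))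
                    exact hP4 w x z w2 (nxw.symm) (nzw.symm) nww2 nxz nxw2 nzw2 (((hs c w x).trans hF3).trans (ht2).symm) ((ht2).trans (hF176).symm)
                  · have hF177 : c s(z,w2) = t1 := (hN175.trans ((hs c z y).trans ht1))
                    exact hP4 w y z w2 (nyw.symm) (nzw.symm) nww2 nyz nyw2 nzw2 (((hs c w y).trans hF6).trans (ht1).symm) ((ht1).trans (hF177).symm)
                  · have hF178 : c s(z,w2) = t3 := (hN175.trans ht3)
                    exact hP4 x y w2 z nxy nxw2 nxz nyw2 nyz (nzw2.symm) (ht3.trans (hF174).symm) ((hF174).trans (((hs c w2 z).trans hF178)).symm)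
                · have hF179 : c s(y,w2) = t1 := (hN173.trans ht1)
                  rcases hK3e z x y w2 (nxz.symm) (nyz.symm) nzw2 nxy nxw2 nyw2 (show c s(z,x) ≠ c s(z,y) by rw [((hs c z x).trans ht2), ((hs c z y).trans ht1)]; exact (h12.symm)) (show c s(z,x) ≠ c s(x,y) by rw [((hs c z x).trans ht2), ht3]; exact h23) (show c s(z,y) ≠ c s(x,y) by rw [((hs c z y).trans ht1), ht3]; exact h13) with hN180 | hN180 | hN180
                  · have hF181 : c s(z,w2) = t2 := (hN180.trans ((hs c z x).trans ht2))
                    exact hP4 w x z w2 (nxw.symm) (nzw.symm) nww2 nxz nxw2 nzw2 (((hs c w x).trans hF3).trans (ht2).symm) ((ht2).trans (hF181).symm)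
                  · have hF182 : c s(z,w2) = t1 := (hN180.trans ((hs c z y).trans ht1))
                    exact hP4 z w2 y w nzw2 (nyz.symm) nzw (nyw2.symm) (nww2.symm) nyw (hF182.trans (((hs c w2 y).trans hF179)).symm) ((((hs c w2 y).trans hF179)).trans (hF6).symm)
                  · have hF183 : c s(z,w2) = t3 := (hN180.trans ht3)
                    exact hP4 x w2 z w nxw2 nxz nxw (nzw2.symm) (nww2.symm) nzw (hF172.trans (((hs c w2 z).trans hF183)).symm) ((((hs c w2 z).trans hF183)).trans (hF106).symm)
                · have hF184 : c s(y,w2) = t2 := (hN173.trans ht2)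
                  rcases hK3e z x y w2 (nxz.symm) (nyz.symm) nzw2 nxy nxw2 nyw2 (show c s(z,x) ≠ c s(z,y) by rw [((hs c z x).trans ht2), ((hs c z y).trans ht1)]; exact (h12.symm)) (show c s(z,x) ≠ c s(x,y) by rw [((hs c z x).trans ht2), ht3]; exact h23) (show c s(z,y) ≠ c s(x,y) by rw [((hs c z y).trans ht1), ht3]; exact h13) with hN185 | hN185 | hN185
                  · have hF186 : c s(z,w2) = t2 := (hN185.trans ((hs c z x).trans ht2))
                    exact hP4 x z w2 y nxz nxw2 nxy nzw2 (nyz.symm) (nyw2.symm) (ht2.trans (hF186).symm) ((hF186).trans (((hs c w2 y).trans hF184)).symm)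
                  · have hF187 : c s(z,w2) = t1 := (hN185.trans ((hs c z y).trans ht1))
                    exact hP4 w y z w2 (nyw.symm) (nzw.symm) nww2 nyz nyw2 nzw2 (((hs c w y).trans hF6).trans (ht1).symm) ((ht1).trans (hF187).symm)
                  · have hF188 : c s(z,w2) = t3 := (hN185.trans ht3)
                    exact hP4 x w2 z w nxw2 nxz nxw (nzw2.symm) (nww2.symm) nzw (hF172.trans (((hs c w2 z).trans hF188)).symm) ((((hs c w2 z).trans hF188)).trans (hF106).symm)
              · have hF189 : c s(x,w2) = t2 := (hN171.trans ht2)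
                rcases hK3e y x z w2 (nxy.symm) nyz nyw2 nxz nxw2 nzw2 (show c s(y,x) ≠ c s(y,z) by rw [((hs c y x).trans ht3), ht1]; exact (h13.symm)) (show c s(y,x) ≠ c s(x,z) by rw [((hs c y x).trans ht3), ht2]; exact (h23.symm)) (show c s(y,z) ≠ c s(x,z) by rw [ht1, ht2]; exact h12) with hN190 | hN190 | hN190
                · have hF191 : c s(y,w2) = t3 := (hN190.trans ((hs c y x).trans ht3))
                  rcases hK3e z x y w2 (nxz.symm) (nyz.symm) nzw2 nxy nxw2 nyw2 (show c s(z,x) ≠ c s(z,y) by rw [((hs c z x).trans ht2), ((hs c z y).trans ht1)]; exact (h12.symm)) (show c s(z,x) ≠ c s(x,y) by rw [((hs c z x).trans ht2), ht3]; exact h23) (show c s(z,y) ≠ c s(x,y) by rw [((hs c z y).trans ht1), ht3]; exact h13) with hN192 | hN192 | hN192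
                  · have hF193 : c s(z,w2) = t2 := (hN192.trans ((hs c z x).trans ht2))
                    exact hP4 z w2 x w nzw2 (nxz.symm) nzw (nxw2.symm) (nww2.symm) nxw (hF193.trans (((hs c w2 x).trans hF189)).symm) ((((hs c w2 x).trans hF189)).trans (hF3).symm)
                  · have hF194 : c s(z,w2) = t1 := (hN192.trans ((hs c z y).trans ht1))
                    exact hP4 w y z w2 (nyw.symm) (nzw.symm) nww2 nyz nyw2 nzw2 (((hs c w y).trans hF6).trans (ht1).symm) ((ht1).trans (hF194).symm)
                  · have hF195 : c s(z,w2) = t3 := (hN192.trans ht3)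
                    exact hP4 x y w2 z nxy nxw2 nxz nyw2 nyz (nzw2.symm) (ht3.trans (hF191).symm) ((hF191).trans (((hs c w2 z).trans hF195)).symm)
                · have hF196 : c s(y,w2) = t1 := (hN190.trans ht1)
                  rcases hK3e z x y w2 (nxz.symm) (nyz.symm) nzw2 nxy nxw2 nyw2 (show c s(z,x) ≠ c s(z,y) by rw [((hs c z x).trans ht2), ((hs c z y).trans ht1)]; exact (h12.symm)) (show c s(z,x) ≠ c s(x,y) by rw [((hs c z x).trans ht2), ht3]; exact h23) (show c s(z,y) ≠ c s(x,y) by rw [((hs c z y).trans ht1), ht3]; exact h13) with hN197 | hN197 | hN197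
                  · have hF198 : c s(z,w2) = t2 := (hN197.trans ((hs c z x).trans ht2))
                    exact hP4 z w2 x w nzw2 (nxz.symm) nzw (nxw2.symm) (nww2.symm) nxw (hF198.trans (((hs c w2 x).trans hF189)).symm) ((((hs c w2 x).trans hF189)).trans (hF3).symm)
                  · have hF199 : c s(z,w2) = t1 := (hN197.trans ((hs c z y).trans ht1))
                    exact hP4 z w2 y w nzw2 (nyz.symm) nzw (nyw2.symm) (nww2.symm) nyw (hF199.trans (((hs c w2 y).trans hF196)).symm) ((((hs c w2 y).trans hF196)).trans (hF6).symm)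
                  · have hF200 : c s(z,w2) = t3 := (hN197.trans ht3)
                    exact hP4 w w1 z w2 nww1 (nzw.symm) nww2 (nzw1.symm) nw1w2 nzw2 (hw.trans (((hs c w1 z).trans hF170)).symm) ((((hs c w1 z).trans hF170)).trans (hF200).symm)
                · have hF201 : c s(y,w2) = t2 := (hN190.trans ht2)
                  exact hP4 x w2 y w1 nxw2 nxy nxw1 (nyw2.symm) (nw1w2.symm) nyw1 (hF189.trans (((hs c w2 y).trans hF201)).symm) ((((hs c w2 y).trans hF201)).trans (hF166).symm)
              · have hF202 : c s(x,w2) = t1 := (hN171.trans ht1)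
                rcases hK3e y x z w2 (nxy.symm) nyz nyw2 nxz nxw2 nzw2 (show c s(y,x) ≠ c s(y,z) by rw [((hs c y x).trans ht3), ht1]; exact (h13.symm)) (show c s(y,x) ≠ c s(x,z) by rw [((hs c y x).trans ht3), ht2]; exact (h23.symm)) (show c s(y,z) ≠ c s(x,z) by rw [ht1, ht2]; exact h12) with hN203 | hN203 | hN203
                · have hF204 : c s(y,w2) = t3 := (hN203.trans ((hs c y x).trans ht3))
                  rcases hK3e z x y w2 (nxz.symm) (nyz.symm) nzw2 nxy nxw2 nyw2 (show c s(z,x) ≠ c s(z,y) by rw [((hs c z x).trans ht2), ((hs c z y).trans ht1)]; exact (h12.symm)) (show c s(z,x) ≠ c s(x,y) by rw [((hs c z x).trans ht2), ht3]; exact h23) (show c s(z,y) ≠ c s(x,y) by rw [((hs c z y).trans ht1), ht3]; exact h13) with hN205 | hN205 | hN205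
                  · have hF206 : c s(z,w2) = t2 := (hN205.trans ((hs c z x).trans ht2))
                    exact hP4 w x z w2 (nxw.symm) (nzw.symm) nww2 nxz nxw2 nzw2 (((hs c w x).trans hF3).trans (ht2).symm) ((ht2).trans (hF206).symm)
                  · have hF207 : c s(z,w2) = t1 := (hN205.trans ((hs c z y).trans ht1))
                    exact hP4 x w2 z y nxw2 nxz nxy (nzw2.symm) (nyw2.symm) (nyz.symm) (hF202.trans (((hs c w2 z).trans hF207)).symm) ((((hs c w2 z).trans hF207)).trans (((hs c z y).trans ht1)).symm)
                  · have hF208 : c s(z,w2) = t3 := (hN205.trans ht3)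
                    exact hP4 x y w2 z nxy nxw2 nxz nyw2 nyz (nzw2.symm) (ht3.trans (hF204).symm) ((hF204).trans (((hs c w2 z).trans hF208)).symm)
                · have hF209 : c s(y,w2) = t1 := (hN203.trans ht1)
                  exact hP4 x w2 y z nxw2 nxy nxz (nyw2.symm) (nzw2.symm) nyz (hF202.trans (((hs c w2 y).trans hF209)).symm) ((((hs c w2 y).trans hF209)).trans (ht1).symm)
                · have hF210 : c s(y,w2) = t2 := (hN203.trans ht2)
                  rcases hK3e z x y w2 (nxz.symm) (nyz.symm) nzw2 nxy nxw2 nyw2 (show c s(z,x) ≠ c s(z,y) by rw [((hs c z x).trans ht2), ((hs c z y).trans ht1)]; exact (h12.symm)) (show c s(z,x) ≠ c s(x,y) by rw [((hs c z x).trans ht2), ht3]; exact h23) (show c s(z,y) ≠ c s(x,y) by rw [((hs c z y).trans ht1), ht3]; exact h13) with hN211 | hN211 | hN211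
                  · have hF212 : c s(z,w2) = t2 := (hN211.trans ((hs c z x).trans ht2))
                    exact hP4 x z w2 y nxz nxw2 nxy nzw2 (nyz.symm) (nyw2.symm) (ht2.trans (hF212).symm) ((hF212).trans (((hs c w2 y).trans hF210)).symm)
                  · have hF213 : c s(z,w2) = t1 := (hN211.trans ((hs c z y).trans ht1))
                    exact hP4 x w2 z y nxw2 nxz nxy (nzw2.symm) (nyw2.symm) (nyz.symm) (hF202.trans (((hs c w2 z).trans hF213)).symm) ((((hs c w2 z).trans hF213)).trans (((hs c z y).trans ht1)).symm)
                  · have hF214 : c s(z,w2) = t3 := (hN211.trans ht3)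
                    exact hP4 w w1 z w2 nww1 (nzw.symm) nww2 (nzw1.symm) nw1w2 nzw2 (hw.trans (((hs c w1 z).trans hF170)).symm) ((((hs c w1 z).trans hF170)).trans (hF214).symm)
    · have hF215 : c s(y,w) = t2 := (hN4.trans ht2)
      exact hP4 y w x z nyw (nxy.symm) nyz (nxw.symm) (nzw.symm) nxz (hF215.trans (((hs c w x).trans hF3)).symm) ((((hs c w x).trans hF3)).trans (ht2).symm)
  · have hF216 : c s(x,w) = t1 := (hN1.trans ht1)
    rcases hK3e y x z w (nxy.symm) nyz nyw nxz nxw nzw (show c s(y,x) ≠ c s(y,z) by rw [((hs c y x).trans ht3), ht1]; exact (h13.symm)) (show c s(y,x) ≠ c s(x,z) by rw [((hs c y x).trans ht3), ht2]; exact (h23.symm)) (show c s(y,z) ≠ c s(x,z) by rw [ht1, ht2]; exact h12) with hN217 | hN217 | hN217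
    · have hF218 : c s(y,w) = t3 := (hN217.trans ((hs c y x).trans ht3))
      exact hP4 x y w w1 nxy nxw nxw1 nyw nyw1 nww1 (ht3.trans (hF218).symm) ((hF218).trans (hw).symm)
    · have hF219 : c s(y,w) = t1 := (hN217.trans ht1)
      exact hP4 x w y z nxw nxy nxz (nyw.symm) (nzw.symm) nyz (hF216.trans (((hs c w y).trans hF219)).symm) ((((hs c w y).trans hF219)).trans (ht1).symm)
    · have hF220 : c s(y,w) = t2 := (hN217.trans ht2)
      rcases hK3e z x y w (nxz.symm) (nyz.symm) nzw nxy nxw nyw (show c s(z,x) ≠ c s(z,y) by rw [((hs c z x).trans ht2), ((hs c z y).trans ht1)]; exact (h12.symm)) (show c s(z,x) ≠ c s(x,y) by rw [((hs c z x).trans ht2), ht3]; exact h23) (show c s(z,y) ≠ c s(x,y) by rw [((hs c z y).trans ht1), ht3]; exact h13) with hN221 | hN221 | hN221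
      · have hF222 : c s(z,w) = t2 := (hN221.trans ((hs c z x).trans ht2))
        exact hP4 x z w y nxz nxw nxy nzw (nyz.symm) (nyw.symm) (ht2.trans (hF222).symm) ((hF222).trans (((hs c w y).trans hF220)).symm)
      · have hF223 : c s(z,w) = t1 := (hN221.trans ((hs c z y).trans ht1))
        exact hP4 x w z y nxw nxz nxy (nzw.symm) (nyw.symm) (nyz.symm) (hF216.trans (((hs c w z).trans hF223)).symm) ((((hs c w z).trans hF223)).trans (((hs c z y).trans ht1)).symm)
      · have hF224 : c s(z,w) = t3 := (hN221.trans ht3)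
        rcases hK3e x y z w1 nxy nxz nxw1 nyz nyw1 nzw1 (show c s(x,y) ≠ c s(x,z) by rw [ht3, ht2]; exact (h23.symm)) (show c s(x,y) ≠ c s(y,z) by rw [ht3, ht1]; exact (h13.symm)) (show c s(x,z) ≠ c s(y,z) by rw [ht2, ht1]; exact (h12.symm)) with hN225 | hN225 | hN225
        · have hF226 : c s(x,w1) = t3 := (hN225.trans ht3)
          exact hP4 x w1 w z nxw1 nxw nxz (nww1.symm) (nzw1.symm) (nzw.symm) (hF226.trans (((hs c w1 w).trans hw)).symm) ((((hs c w1 w).trans hw)).trans (((hs c w z).trans hF224)).symm)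
        · have hF227 : c s(x,w1) = t2 := (hN225.trans ht2)
          rcases hK3e y x z w1 (nxy.symm) nyz nyw1 nxz nxw1 nzw1 (show c s(y,x) ≠ c s(y,z) by rw [((hs c y x).trans ht3), ht1]; exact (h13.symm)) (show c s(y,x) ≠ c s(x,z) by rw [((hs c y x).trans ht3), ht2]; exact (h23.symm)) (show c s(y,z) ≠ c s(x,z) by rw [ht1, ht2]; exact h12) with hN228 | hN228 | hN228
          · have hF229 : c s(y,w1) = t3 := (hN228.trans ((hs c y x).trans ht3))
            exact hP4 x y w1 w nxy nxw1 nxw nyw1 nyw (nww1.symm) (ht3.trans (hF229).symm) ((hF229).trans (((hs c w1 w).trans hw)).symm)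
          · have hF230 : c s(y,w1) = t1 := (hN228.trans ht1)
            rcases hK3e z x y w1 (nxz.symm) (nyz.symm) nzw1 nxy nxw1 nyw1 (show c s(z,x) ≠ c s(z,y) by rw [((hs c z x).trans ht2), ((hs c z y).trans ht1)]; exact (h12.symm)) (show c s(z,x) ≠ c s(x,y) by rw [((hs c z x).trans ht2), ht3]; exact h23) (show c s(z,y) ≠ c s(x,y) by rw [((hs c z y).trans ht1), ht3]; exact h13) with hN231 | hN231 | hN231
            · have hF232 : c s(z,w1) = t2 := (hN231.trans ((hs c z x).trans ht2))
              rcases hK3e x y z w2 nxy nxz nxw2 nyz nyw2 nzw2 (show c s(x,y) ≠ c s(x,z) by rw [ht3, ht2]; exact (h23.symm)) (show c s(x,y) ≠ c s(y,z) by rw [ht3, ht1]; exact (h13.symm)) (show c s(x,z) ≠ c s(y,z) by rw [ht2, ht1]; exact (h12.symm)) with hN233 | hN233 | hN233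
              · have hF234 : c s(x,w2) = t3 := (hN233.trans ht3)
                rcases hK3e y x z w2 (nxy.symm) nyz nyw2 nxz nxw2 nzw2 (show c s(y,x) ≠ c s(y,z) by rw [((hs c y x).trans ht3), ht1]; exact (h13.symm)) (show c s(y,x) ≠ c s(x,z) by rw [((hs c y x).trans ht3), ht2]; exact (h23.symm)) (show c s(y,z) ≠ c s(x,z) by rw [ht1, ht2]; exact h12) with hN235 | hN235 | hN235
                · have hF236 : c s(y,w2) = t3 := (hN235.trans ((hs c y x).trans ht3))
                  rcases hK3e z x y w2 (nxz.symm) (nyz.symm) nzw2 nxy nxw2 nyw2 (show c s(z,x) ≠ c s(z,y) by rw [((hs c z x).trans ht2), ((hs c z y).trans ht1)]; exact (h12.symm)) (show c s(z,x) ≠ c s(x,y) by rw [((hs c z x).trans ht2), ht3]; exact h23) (show c s(z,y) ≠ c s(x,y) by rw [((hs c z y).trans ht1), ht3]; exact h13) with hN237 | hN237 | hN237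
                  · have hF238 : c s(z,w2) = t2 := (hN237.trans ((hs c z x).trans ht2))
                    exact hP4 x w1 z w2 nxw1 nxz nxw2 (nzw1.symm) nw1w2 nzw2 (hF227.trans (((hs c w1 z).trans hF232)).symm) ((((hs c w1 z).trans hF232)).trans (hF238).symm)
                  · have hF239 : c s(z,w2) = t1 := (hN237.trans ((hs c z y).trans ht1))
                    exact hP4 w1 y z w2 (nyw1.symm) (nzw1.symm) nw1w2 nyz nyw2 nzw2 (((hs c w1 y).trans hF230).trans (ht1).symm) ((ht1).trans (hF239).symm)
                  · have hF240 : c s(z,w2) = t3 := (hN237.trans ht3)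
                    exact hP4 x y w2 z nxy nxw2 nxz nyw2 nyz (nzw2.symm) (ht3.trans (hF236).symm) ((hF236).trans (((hs c w2 z).trans hF240)).symm)
                · have hF241 : c s(y,w2) = t1 := (hN235.trans ht1)
                  rcases hK3e z x y w2 (nxz.symm) (nyz.symm) nzw2 nxy nxw2 nyw2 (show c s(z,x) ≠ c s(z,y) by rw [((hs c z x).trans ht2), ((hs c z y).trans ht1)]; exact (h12.symm)) (show c s(z,x) ≠ c s(x,y) by rw [((hs c z x).trans ht2), ht3]; exact h23) (show c s(z,y) ≠ c s(x,y) by rw [((hs c z y).trans ht1), ht3]; exact h13) with hN242 | hN242 | hN242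
                  · have hF243 : c s(z,w2) = t2 := (hN242.trans ((hs c z x).trans ht2))
                    exact hP4 x w1 z w2 nxw1 nxz nxw2 (nzw1.symm) nw1w2 nzw2 (hF227.trans (((hs c w1 z).trans hF232)).symm) ((((hs c w1 z).trans hF232)).trans (hF243).symm)
                  · have hF244 : c s(z,w2) = t1 := (hN242.trans ((hs c z y).trans ht1))
                    exact hP4 z w2 y w1 nzw2 (nyz.symm) nzw1 (nyw2.symm) (nw1w2.symm) nyw1 (hF244.trans (((hs c w2 y).trans hF241)).symm) ((((hs c w2 y).trans hF241)).trans (hF230).symm)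
                  · have hF245 : c s(z,w2) = t3 := (hN242.trans ht3)
                    exact hP4 x w2 z w nxw2 nxz nxw (nzw2.symm) (nww2.symm) nzw (hF234.trans (((hs c w2 z).trans hF245)).symm) ((((hs c w2 z).trans hF245)).trans (hF224).symm)
                · have hF246 : c s(y,w2) = t2 := (hN235.trans ht2)
                  rcases hK3e z x y w2 (nxz.symm) (nyz.symm) nzw2 nxy nxw2 nyw2 (show c s(z,x) ≠ c s(z,y) by rw [((hs c z x).trans ht2), ((hs c z y).trans ht1)]; exact (h12.symm)) (show c s(z,x) ≠ c s(x,y) by rw [((hs c z x).trans ht2), ht3]; exact h23) (show c s(z,y) ≠ c s(x,y) by rw [((hs c z y).trans ht1), ht3]; exact h13) with hN247 | hN247 | hN247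
                  · have hF248 : c s(z,w2) = t2 := (hN247.trans ((hs c z x).trans ht2))
                    exact hP4 x z w2 y nxz nxw2 nxy nzw2 (nyz.symm) (nyw2.symm) (ht2.trans (hF248).symm) ((hF248).trans (((hs c w2 y).trans hF246)).symm)
                  · have hF249 : c s(z,w2) = t1 := (hN247.trans ((hs c z y).trans ht1))
                    exact hP4 w1 y z w2 (nyw1.symm) (nzw1.symm) nw1w2 nyz nyw2 nzw2 (((hs c w1 y).trans hF230).trans (ht1).symm) ((ht1).trans (hF249).symm)
                  · have hF250 : c s(z,w2) = t3 := (hN247.trans ht3)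
                    exact hP4 x w2 z w nxw2 nxz nxw (nzw2.symm) (nww2.symm) nzw (hF234.trans (((hs c w2 z).trans hF250)).symm) ((((hs c w2 z).trans hF250)).trans (hF224).symm)
              · have hF251 : c s(x,w2) = t2 := (hN233.trans ht2)
                exact hP4 z w1 x w2 nzw1 (nxz.symm) nzw2 (nxw1.symm) nw1w2 nxw2 (hF232.trans (((hs c w1 x).trans hF227)).symm) ((((hs c w1 x).trans hF227)).trans (hF251).symm)
              · have hF252 : c s(x,w2) = t1 := (hN233.trans ht1)
                rcases hK3e y x z w2 (nxy.symm) nyz nyw2 nxz nxw2 nzw2 (show c s(y,x) ≠ c s(y,z) by rw [((hs c y x).trans ht3), ht1]; exact (h13.symm)) (show c s(y,x) ≠ c s(x,z) by rw [((hs c y x).trans ht3), ht2]; exact (h23.symm)) (show c s(y,z) ≠ c s(x,z) by rw [ht1, ht2]; exact h12) with hN253 | hN253 | hN253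
                · have hF254 : c s(y,w2) = t3 := (hN253.trans ((hs c y x).trans ht3))
                  rcases hK3e z x y w2 (nxz.symm) (nyz.symm) nzw2 nxy nxw2 nyw2 (show c s(z,x) ≠ c s(z,y) by rw [((hs c z x).trans ht2), ((hs c z y).trans ht1)]; exact (h12.symm)) (show c s(z,x) ≠ c s(x,y) by rw [((hs c z x).trans ht2), ht3]; exact h23) (show c s(z,y) ≠ c s(x,y) by rw [((hs c z y).trans ht1), ht3]; exact h13) with hN255 | hN255 | hN255
                  · have hF256 : c s(z,w2) = t2 := (hN255.trans ((hs c z x).trans ht2))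
                    exact hP4 x w1 z w2 nxw1 nxz nxw2 (nzw1.symm) nw1w2 nzw2 (hF227.trans (((hs c w1 z).trans hF232)).symm) ((((hs c w1 z).trans hF232)).trans (hF256).symm)
                  · have hF257 : c s(z,w2) = t1 := (hN255.trans ((hs c z y).trans ht1))
                    exact hP4 x w2 z y nxw2 nxz nxy (nzw2.symm) (nyw2.symm) (nyz.symm) (hF252.trans (((hs c w2 z).trans hF257)).symm) ((((hs c w2 z).trans hF257)).trans (((hs c z y).trans ht1)).symm)
                  · have hF258 : c s(z,w2) = t3 := (hN255.trans ht3)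
                    exact hP4 x y w2 z nxy nxw2 nxz nyw2 nyz (nzw2.symm) (ht3.trans (hF254).symm) ((hF254).trans (((hs c w2 z).trans hF258)).symm)
                · have hF259 : c s(y,w2) = t1 := (hN253.trans ht1)
                  exact hP4 x w2 y z nxw2 nxy nxz (nyw2.symm) (nzw2.symm) nyz (hF252.trans (((hs c w2 y).trans hF259)).symm) ((((hs c w2 y).trans hF259)).trans (ht1).symm)
                · have hF260 : c s(y,w2) = t2 := (hN253.trans ht2)
                  rcases hK3e z x y w2 (nxz.symm) (nyz.symm) nzw2 nxy nxw2 nyw2 (show c s(z,x) ≠ c s(z,y) by rw [((hs c z x).trans ht2), ((hs c z y).trans ht1)]; exact (h12.symm)) (show c s(z,x) ≠ c s(x,y) by rw [((hs c z x).trans ht2), ht3]; exact h23) (show c s(z,y) ≠ c s(x,y) by rw [((hs c z y).trans ht1), ht3]; exact h13) with hN261 | hN261 | hN261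
                  · have hF262 : c s(z,w2) = t2 := (hN261.trans ((hs c z x).trans ht2))
                    exact hP4 x z w2 y nxz nxw2 nxy nzw2 (nyz.symm) (nyw2.symm) (ht2.trans (hF262).symm) ((hF262).trans (((hs c w2 y).trans hF260)).symm)
                  · have hF263 : c s(z,w2) = t1 := (hN261.trans ((hs c z y).trans ht1))
                    exact hP4 x w2 z y nxw2 nxz nxy (nzw2.symm) (nyw2.symm) (nyz.symm) (hF252.trans (((hs c w2 z).trans hF263)).symm) ((((hs c w2 z).trans hF263)).trans (((hs c z y).trans ht1)).symm)
                  · have hF264 : c s(z,w2) = t3 := (hN261.trans ht3)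
                    exact hP4 w1 w z w2 (nww1.symm) (nzw1.symm) nw1w2 (nzw.symm) nww2 nzw2 (((hs c w1 w).trans hw).trans (((hs c w z).trans hF224)).symm) ((((hs c w z).trans hF224)).trans (hF264).symm)
            · have hF265 : c s(z,w1) = t1 := (hN231.trans ((hs c z y).trans ht1))
              rcases hK3e x y z w2 nxy nxz nxw2 nyz nyw2 nzw2 (show c s(x,y) ≠ c s(x,z) by rw [ht3, ht2]; exact (h23.symm)) (show c s(x,y) ≠ c s(y,z) by rw [ht3, ht1]; exact (h13.symm)) (show c s(x,z) ≠ c s(y,z) by rw [ht2, ht1]; exact (h12.symm)) with hN266 | hN266 | hN266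
              · have hF267 : c s(x,w2) = t3 := (hN266.trans ht3)
                rcases hK3e y x z w2 (nxy.symm) nyz nyw2 nxz nxw2 nzw2 (show c s(y,x) ≠ c s(y,z) by rw [((hs c y x).trans ht3), ht1]; exact (h13.symm)) (show c s(y,x) ≠ c s(x,z) by rw [((hs c y x).trans ht3), ht2]; exact (h23.symm)) (show c s(y,z) ≠ c s(x,z) by rw [ht1, ht2]; exact h12) with hN268 | hN268 | hN268
                · have hF269 : c s(y,w2) = t3 := (hN268.trans ((hs c y x).trans ht3))
                  rcases hK3e z x y w2 (nxz.symm) (nyz.symm) nzw2 nxy nxw2 nyw2 (show c s(z,x) ≠ c s(z,y) by rw [((hs c z x).trans ht2), ((hs c z y).trans ht1)]; exact (h12.symm)) (show c s(z,x) ≠ c s(x,y) by rw [((hs c z x).trans ht2), ht3]; exact h23) (show c s(z,y) ≠ c s(x,y) by rw [((hs c z y).trans ht1), ht3]; exact h13) with hN270 | hN270 | hN270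
                  · have hF271 : c s(z,w2) = t2 := (hN270.trans ((hs c z x).trans ht2))
                    exact hP4 w1 x z w2 (nxw1.symm) (nzw1.symm) nw1w2 nxz nxw2 nzw2 (((hs c w1 x).trans hF227).trans (ht2).symm) ((ht2).trans (hF271).symm)
                  · have hF272 : c s(z,w2) = t1 := (hN270.trans ((hs c z y).trans ht1))
                    exact hP4 y w1 z w2 nyw1 nyz nyw2 (nzw1.symm) nw1w2 nzw2 (hF230.trans (((hs c w1 z).trans hF265)).symm) ((((hs c w1 z).trans hF265)).trans (hF272).symm)
                  · have hF273 : c s(z,w2) = t3 := (hN270.trans ht3)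
                    exact hP4 x y w2 z nxy nxw2 nxz nyw2 nyz (nzw2.symm) (ht3.trans (hF269).symm) ((hF269).trans (((hs c w2 z).trans hF273)).symm)
                · have hF274 : c s(y,w2) = t1 := (hN268.trans ht1)
                  exact hP4 z w1 y w2 nzw1 (nyz.symm) nzw2 (nyw1.symm) nw1w2 nyw2 (hF265.trans (((hs c w1 y).trans hF230)).symm) ((((hs c w1 y).trans hF230)).trans (hF274).symm)
                · have hF275 : c s(y,w2) = t2 := (hN268.trans ht2)
                  rcases hK3e z x y w2 (nxz.symm) (nyz.symm) nzw2 nxy nxw2 nyw2 (show c s(z,x) ≠ c s(z,y) by rw [((hs c z x).trans ht2), ((hs c z y).trans ht1)]; exact (h12.symm)) (show c s(z,x) ≠ c s(x,y) by rw [((hs c z x).trans ht2), ht3]; exact h23) (show c s(z,y) ≠ c s(x,y) by rw [((hs c z y).trans ht1), ht3]; exact h13) with hN276 | hN276 | hN276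
                  · have hF277 : c s(z,w2) = t2 := (hN276.trans ((hs c z x).trans ht2))
                    exact hP4 x z w2 y nxz nxw2 nxy nzw2 (nyz.symm) (nyw2.symm) (ht2.trans (hF277).symm) ((hF277).trans (((hs c w2 y).trans hF275)).symm)
                  · have hF278 : c s(z,w2) = t1 := (hN276.trans ((hs c z y).trans ht1))
                    exact hP4 y w1 z w2 nyw1 nyz nyw2 (nzw1.symm) nw1w2 nzw2 (hF230.trans (((hs c w1 z).trans hF265)).symm) ((((hs c w1 z).trans hF265)).trans (hF278).symm)
                  · have hF279 : c s(z,w2) = t3 := (hN276.trans ht3)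
                    exact hP4 x w2 z w nxw2 nxz nxw (nzw2.symm) (nww2.symm) nzw (hF267.trans (((hs c w2 z).trans hF279)).symm) ((((hs c w2 z).trans hF279)).trans (hF224).symm)
              · have hF280 : c s(x,w2) = t2 := (hN266.trans ht2)
                rcases hK3e y x z w2 (nxy.symm) nyz nyw2 nxz nxw2 nzw2 (show c s(y,x) ≠ c s(y,z) by rw [((hs c y x).trans ht3), ht1]; exact (h13.symm)) (show c s(y,x) ≠ c s(x,z) by rw [((hs c y x).trans ht3), ht2]; exact (h23.symm)) (show c s(y,z) ≠ c s(x,z) by rw [ht1, ht2]; exact h12) with hN281 | hN281 | hN281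
                · have hF282 : c s(y,w2) = t3 := (hN281.trans ((hs c y x).trans ht3))
                  rcases hK3e z x y w2 (nxz.symm) (nyz.symm) nzw2 nxy nxw2 nyw2 (show c s(z,x) ≠ c s(z,y) by rw [((hs c z x).trans ht2), ((hs c z y).trans ht1)]; exact (h12.symm)) (show c s(z,x) ≠ c s(x,y) by rw [((hs c z x).trans ht2), ht3]; exact h23) (show c s(z,y) ≠ c s(x,y) by rw [((hs c z y).trans ht1), ht3]; exact h13) with hN283 | hN283 | hN283
                  · have hF284 : c s(z,w2) = t2 := (hN283.trans ((hs c z x).trans ht2))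
                    exact hP4 z w2 x w1 nzw2 (nxz.symm) nzw1 (nxw2.symm) (nw1w2.symm) nxw1 (hF284.trans (((hs c w2 x).trans hF280)).symm) ((((hs c w2 x).trans hF280)).trans (hF227).symm)
                  · have hF285 : c s(z,w2) = t1 := (hN283.trans ((hs c z y).trans ht1))
                    exact hP4 y w1 z w2 nyw1 nyz nyw2 (nzw1.symm) nw1w2 nzw2 (hF230.trans (((hs c w1 z).trans hF265)).symm) ((((hs c w1 z).trans hF265)).trans (hF285).symm)
                  · have hF286 : c s(z,w2) = t3 := (hN283.trans ht3)
                    exact hP4 x y w2 z nxy nxw2 nxz nyw2 nyz (nzw2.symm) (ht3.trans (hF282).symm) ((hF282).trans (((hs c w2 z).trans hF286)).symm)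
                · have hF287 : c s(y,w2) = t1 := (hN281.trans ht1)
                  exact hP4 z w1 y w2 nzw1 (nyz.symm) nzw2 (nyw1.symm) nw1w2 nyw2 (hF265.trans (((hs c w1 y).trans hF230)).symm) ((((hs c w1 y).trans hF230)).trans (hF287).symm)
                · have hF288 : c s(y,w2) = t2 := (hN281.trans ht2)
                  exact hP4 x w2 y w nxw2 nxy nxw (nyw2.symm) (nww2.symm) nyw (hF280.trans (((hs c w2 y).trans hF288)).symm) ((((hs c w2 y).trans hF288)).trans (hF220).symm)
              · have hF289 : c s(x,w2) = t1 := (hN266.trans ht1)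
                rcases hK3e y x z w2 (nxy.symm) nyz nyw2 nxz nxw2 nzw2 (show c s(y,x) ≠ c s(y,z) by rw [((hs c y x).trans ht3), ht1]; exact (h13.symm)) (show c s(y,x) ≠ c s(x,z) by rw [((hs c y x).trans ht3), ht2]; exact (h23.symm)) (show c s(y,z) ≠ c s(x,z) by rw [ht1, ht2]; exact h12) with hN290 | hN290 | hN290
                · have hF291 : c s(y,w2) = t3 := (hN290.trans ((hs c y x).trans ht3))
                  rcases hK3e z x y w2 (nxz.symm) (nyz.symm) nzw2 nxy nxw2 nyw2 (show c s(z,x) ≠ c s(z,y) by rw [((hs c z x).trans ht2), ((hs c z y).trans ht1)]; exact (h12.symm)) (show c s(z,x) ≠ c s(x,y) by rw [((hs c z x).trans ht2), ht3]; exact h23) (show c s(z,y) ≠ c s(x,y) by rw [((hs c z y).trans ht1), ht3]; exact h13) with hN292 | hN292 | hN292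
                  · have hF293 : c s(z,w2) = t2 := (hN292.trans ((hs c z x).trans ht2))
                    exact hP4 w1 x z w2 (nxw1.symm) (nzw1.symm) nw1w2 nxz nxw2 nzw2 (((hs c w1 x).trans hF227).trans (ht2).symm) ((ht2).trans (hF293).symm)
                  · have hF294 : c s(z,w2) = t1 := (hN292.trans ((hs c z y).trans ht1))
                    exact hP4 x w2 z y nxw2 nxz nxy (nzw2.symm) (nyw2.symm) (nyz.symm) (hF289.trans (((hs c w2 z).trans hF294)).symm) ((((hs c w2 z).trans hF294)).trans (((hs c z y).trans ht1)).symm)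
                  · have hF295 : c s(z,w2) = t3 := (hN292.trans ht3)
                    exact hP4 x y w2 z nxy nxw2 nxz nyw2 nyz (nzw2.symm) (ht3.trans (hF291).symm) ((hF291).trans (((hs c w2 z).trans hF295)).symm)
                · have hF296 : c s(y,w2) = t1 := (hN290.trans ht1)
                  exact hP4 x w2 y z nxw2 nxy nxz (nyw2.symm) (nzw2.symm) nyz (hF289.trans (((hs c w2 y).trans hF296)).symm) ((((hs c w2 y).trans hF296)).trans (ht1).symm)
                · have hF297 : c s(y,w2) = t2 := (hN290.trans ht2)
                  rcases hK3e z x y w2 (nxz.symm) (nyz.symm) nzw2 nxy nxw2 nyw2 (show c s(z,x) ≠ c s(z,y) by rw [((hs c z x).trans ht2), ((hs c z y).trans ht1)]; exact (h12.symm)) (show c s(z,x) ≠ c s(x,y) by rw [((hs c z x).trans ht2), ht3]; exact h23) (show c s(z,y) ≠ c s(x,y) by rw [((hs c z y).trans ht1), ht3]; exact h13) with hN298 | hN298 | hN298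
                  · have hF299 : c s(z,w2) = t2 := (hN298.trans ((hs c z x).trans ht2))
                    exact hP4 x z w2 y nxz nxw2 nxy nzw2 (nyz.symm) (nyw2.symm) (ht2.trans (hF299).symm) ((hF299).trans (((hs c w2 y).trans hF297)).symm)
                  · have hF300 : c s(z,w2) = t1 := (hN298.trans ((hs c z y).trans ht1))
                    exact hP4 x w2 z y nxw2 nxz nxy (nzw2.symm) (nyw2.symm) (nyz.symm) (hF289.trans (((hs c w2 z).trans hF300)).symm) ((((hs c w2 z).trans hF300)).trans (((hs c z y).trans ht1)).symm)
                  · have hF301 : c s(z,w2) = t3 := (hN298.trans ht3)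
                    exact hP4 w1 w z w2 (nww1.symm) (nzw1.symm) nw1w2 (nzw.symm) nww2 nzw2 (((hs c w1 w).trans hw).trans (((hs c w z).trans hF224)).symm) ((((hs c w z).trans hF224)).trans (hF301).symm)
            · have hF302 : c s(z,w1) = t3 := (hN231.trans ht3)
              rcases hK3e x y z w2 nxy nxz nxw2 nyz nyw2 nzw2 (show c s(x,y) ≠ c s(x,z) by rw [ht3, ht2]; exact (h23.symm)) (show c s(x,y) ≠ c s(y,z) by rw [ht3, ht1]; exact (h13.symm)) (show c s(x,z) ≠ c s(y,z) by rw [ht2, ht1]; exact (h12.symm)) with hN303 | hN303 | hN303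
              · have hF304 : c s(x,w2) = t3 := (hN303.trans ht3)
                rcases hK3e y x z w2 (nxy.symm) nyz nyw2 nxz nxw2 nzw2 (show c s(y,x) ≠ c s(y,z) by rw [((hs c y x).trans ht3), ht1]; exact (h13.symm)) (show c s(y,x) ≠ c s(x,z) by rw [((hs c y x).trans ht3), ht2]; exact (h23.symm)) (show c s(y,z) ≠ c s(x,z) by rw [ht1, ht2]; exact h12) with hN305 | hN305 | hN305
                · have hF306 : c s(y,w2) = t3 := (hN305.trans ((hs c y x).trans ht3))
                  rcases hK3e z x y w2 (nxz.symm) (nyz.symm) nzw2 nxy nxw2 nyw2 (show c s(z,x) ≠ c s(z,y) by rw [((hs c z x).trans ht2), ((hs c z y).trans ht1)]; exact (h12.symm)) (show c s(z,x) ≠ c s(x,y) by rw [((hs c z x).trans ht2), ht3]; exact h23) (show c s(z,y) ≠ c s(x,y) by rw [((hs c z y).trans ht1), ht3]; exact h13) with hN307 | hN307 | hN307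
                  · have hF308 : c s(z,w2) = t2 := (hN307.trans ((hs c z x).trans ht2))
                    exact hP4 w1 x z w2 (nxw1.symm) (nzw1.symm) nw1w2 nxz nxw2 nzw2 (((hs c w1 x).trans hF227).trans (ht2).symm) ((ht2).trans (hF308).symm)
                  · have hF309 : c s(z,w2) = t1 := (hN307.trans ((hs c z y).trans ht1))
                    exact hP4 w1 y z w2 (nyw1.symm) (nzw1.symm) nw1w2 nyz nyw2 nzw2 (((hs c w1 y).trans hF230).trans (ht1).symm) ((ht1).trans (hF309).symm)
                  · have hF310 : c s(z,w2) = t3 := (hN307.trans ht3)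
                    exact hP4 x y w2 z nxy nxw2 nxz nyw2 nyz (nzw2.symm) (ht3.trans (hF306).symm) ((hF306).trans (((hs c w2 z).trans hF310)).symm)
                · have hF311 : c s(y,w2) = t1 := (hN305.trans ht1)
                  rcases hK3e z x y w2 (nxz.symm) (nyz.symm) nzw2 nxy nxw2 nyw2 (show c s(z,x) ≠ c s(z,y) by rw [((hs c z x).trans ht2), ((hs c z y).trans ht1)]; exact (h12.symm)) (show c s(z,x) ≠ c s(x,y) by rw [((hs c z x).trans ht2), ht3]; exact h23) (show c s(z,y) ≠ c s(x,y) by rw [((hs c z y).trans ht1), ht3]; exact h13) with hN312 | hN312 | hN312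
                  · have hF313 : c s(z,w2) = t2 := (hN312.trans ((hs c z x).trans ht2))
                    exact hP4 w1 x z w2 (nxw1.symm) (nzw1.symm) nw1w2 nxz nxw2 nzw2 (((hs c w1 x).trans hF227).trans (ht2).symm) ((ht2).trans (hF313).symm)
                  · have hF314 : c s(z,w2) = t1 := (hN312.trans ((hs c z y).trans ht1))
                    exact hP4 z w2 y w1 nzw2 (nyz.symm) nzw1 (nyw2.symm) (nw1w2.symm) nyw1 (hF314.trans (((hs c w2 y).trans hF311)).symm) ((((hs c w2 y).trans hF311)).trans (hF230).symm)
                  · have hF315 : c s(z,w2) = t3 := (hN312.trans ht3)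
                    exact hP4 x w2 z w nxw2 nxz nxw (nzw2.symm) (nww2.symm) nzw (hF304.trans (((hs c w2 z).trans hF315)).symm) ((((hs c w2 z).trans hF315)).trans (hF224).symm)
                · have hF316 : c s(y,w2) = t2 := (hN305.trans ht2)
                  rcases hK3e z x y w2 (nxz.symm) (nyz.symm) nzw2 nxy nxw2 nyw2 (show c s(z,x) ≠ c s(z,y) by rw [((hs c z x).trans ht2), ((hs c z y).trans ht1)]; exact (h12.symm)) (show c s(z,x) ≠ c s(x,y) by rw [((hs c z x).trans ht2), ht3]; exact h23) (show c s(z,y) ≠ c s(x,y) by rw [((hs c z y).trans ht1), ht3]; exact h13) with hN317 | hN317 | hN317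
                  · have hF318 : c s(z,w2) = t2 := (hN317.trans ((hs c z x).trans ht2))
                    exact hP4 x z w2 y nxz nxw2 nxy nzw2 (nyz.symm) (nyw2.symm) (ht2.trans (hF318).symm) ((hF318).trans (((hs c w2 y).trans hF316)).symm)
                  · have hF319 : c s(z,w2) = t1 := (hN317.trans ((hs c z y).trans ht1))
                    exact hP4 w1 y z w2 (nyw1.symm) (nzw1.symm) nw1w2 nyz nyw2 nzw2 (((hs c w1 y).trans hF230).trans (ht1).symm) ((ht1).trans (hF319).symm)
                  · have hF320 : c s(z,w2) = t3 := (hN317.trans ht3)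
                    exact hP4 x w2 z w nxw2 nxz nxw (nzw2.symm) (nww2.symm) nzw (hF304.trans (((hs c w2 z).trans hF320)).symm) ((((hs c w2 z).trans hF320)).trans (hF224).symm)
              · have hF321 : c s(x,w2) = t2 := (hN303.trans ht2)
                rcases hK3e y x z w2 (nxy.symm) nyz nyw2 nxz nxw2 nzw2 (show c s(y,x) ≠ c s(y,z) by rw [((hs c y x).trans ht3), ht1]; exact (h13.symm)) (show c s(y,x) ≠ c s(x,z) by rw [((hs c y x).trans ht3), ht2]; exact (h23.symm)) (show c s(y,z) ≠ c s(x,z) by rw [ht1, ht2]; exact h12) with hN322 | hN322 | hN322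
                · have hF323 : c s(y,w2) = t3 := (hN322.trans ((hs c y x).trans ht3))
                  rcases hK3e z x y w2 (nxz.symm) (nyz.symm) nzw2 nxy nxw2 nyw2 (show c s(z,x) ≠ c s(z,y) by rw [((hs c z x).trans ht2), ((hs c z y).trans ht1)]; exact (h12.symm)) (show c s(z,x) ≠ c s(x,y) by rw [((hs c z x).trans ht2), ht3]; exact h23) (show c s(z,y) ≠ c s(x,y) by rw [((hs c z y).trans ht1), ht3]; exact h13) with hN324 | hN324 | hN324
                  · have hF325 : c s(z,w2) = t2 := (hN324.trans ((hs c z x).trans ht2))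
                    exact hP4 z w2 x w1 nzw2 (nxz.symm) nzw1 (nxw2.symm) (nw1w2.symm) nxw1 (hF325.trans (((hs c w2 x).trans hF321)).symm) ((((hs c w2 x).trans hF321)).trans (hF227).symm)
                  · have hF326 : c s(z,w2) = t1 := (hN324.trans ((hs c z y).trans ht1))
                    exact hP4 w1 y z w2 (nyw1.symm) (nzw1.symm) nw1w2 nyz nyw2 nzw2 (((hs c w1 y).trans hF230).trans (ht1).symm) ((ht1).trans (hF326).symm)
                  · have hF327 : c s(z,w2) = t3 := (hN324.trans ht3)
                    exact hP4 x y w2 z nxy nxw2 nxz nyw2 nyz (nzw2.symm) (ht3.trans (hF323).symm) ((hF323).trans (((hs c w2 z).trans hF327)).symm)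
                · have hF328 : c s(y,w2) = t1 := (hN322.trans ht1)
                  rcases hK3e z x y w2 (nxz.symm) (nyz.symm) nzw2 nxy nxw2 nyw2 (show c s(z,x) ≠ c s(z,y) by rw [((hs c z x).trans ht2), ((hs c z y).trans ht1)]; exact (h12.symm)) (show c s(z,x) ≠ c s(x,y) by rw [((hs c z x).trans ht2), ht3]; exact h23) (show c s(z,y) ≠ c s(x,y) by rw [((hs c z y).trans ht1), ht3]; exact h13) with hN329 | hN329 | hN329
                  · have hF330 : c s(z,w2) = t2 := (hN329.trans ((hs c z x).trans ht2))
                    exact hP4 z w2 x w1 nzw2 (nxz.symm) nzw1 (nxw2.symm) (nw1w2.symm) nxw1 (hF330.trans (((hs c w2 x).trans hF321)).symm) ((((hs c w2 x).trans hF321)).trans (hF227).symm)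
                  · have hF331 : c s(z,w2) = t1 := (hN329.trans ((hs c z y).trans ht1))
                    exact hP4 z w2 y w1 nzw2 (nyz.symm) nzw1 (nyw2.symm) (nw1w2.symm) nyw1 (hF331.trans (((hs c w2 y).trans hF328)).symm) ((((hs c w2 y).trans hF328)).trans (hF230).symm)
                  · have hF332 : c s(z,w2) = t3 := (hN329.trans ht3)
                    exact hP4 w w1 z w2 nww1 (nzw.symm) nww2 (nzw1.symm) nw1w2 nzw2 (hw.trans (((hs c w1 z).trans hF302)).symm) ((((hs c w1 z).trans hF302)).trans (hF332).symm)
                · have hF333 : c s(y,w2) = t2 := (hN322.trans ht2)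
                  exact hP4 x w2 y w nxw2 nxy nxw (nyw2.symm) (nww2.symm) nyw (hF321.trans (((hs c w2 y).trans hF333)).symm) ((((hs c w2 y).trans hF333)).trans (hF220).symm)
              · have hF334 : c s(x,w2) = t1 := (hN303.trans ht1)
                rcases hK3e y x z w2 (nxy.symm) nyz nyw2 nxz nxw2 nzw2 (show c s(y,x) ≠ c s(y,z) by rw [((hs c y x).trans ht3), ht1]; exact (h13.symm)) (show c s(y,x) ≠ c s(x,z) by rw [((hs c y x).trans ht3), ht2]; exact (h23.symm)) (show c s(y,z) ≠ c s(x,z) by rw [ht1, ht2]; exact h12) with hN335 | hN335 | hN335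
                · have hF336 : c s(y,w2) = t3 := (hN335.trans ((hs c y x).trans ht3))
                  rcases hK3e z x y w2 (nxz.symm) (nyz.symm) nzw2 nxy nxw2 nyw2 (show c s(z,x) ≠ c s(z,y) by rw [((hs c z x).trans ht2), ((hs c z y).trans ht1)]; exact (h12.symm)) (show c s(z,x) ≠ c s(x,y) by rw [((hs c z x).trans ht2), ht3]; exact h23) (show c s(z,y) ≠ c s(x,y) by rw [((hs c z y).trans ht1), ht3]; exact h13) with hN337 | hN337 | hN337
                  · have hF338 : c s(z,w2) = t2 := (hN337.trans ((hs c z x).trans ht2))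
                    exact hP4 w1 x z w2 (nxw1.symm) (nzw1.symm) nw1w2 nxz nxw2 nzw2 (((hs c w1 x).trans hF227).trans (ht2).symm) ((ht2).trans (hF338).symm)
                  · have hF339 : c s(z,w2) = t1 := (hN337.trans ((hs c z y).trans ht1))
                    exact hP4 x w2 z y nxw2 nxz nxy (nzw2.symm) (nyw2.symm) (nyz.symm) (hF334.trans (((hs c w2 z).trans hF339)).symm) ((((hs c w2 z).trans hF339)).trans (((hs c z y).trans ht1)).symm)
                  · have hF340 : c s(z,w2) = t3 := (hN337.trans ht3)
                    exact hP4 x y w2 z nxy nxw2 nxz nyw2 nyz (nzw2.symm) (ht3.trans (hF336).symm) ((hF336).trans (((hs c w2 z).trans hF340)).symm)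
                · have hF341 : c s(y,w2) = t1 := (hN335.trans ht1)
                  exact hP4 x w2 y z nxw2 nxy nxz (nyw2.symm) (nzw2.symm) nyz (hF334.trans (((hs c w2 y).trans hF341)).symm) ((((hs c w2 y).trans hF341)).trans (ht1).symm)
                · have hF342 : c s(y,w2) = t2 := (hN335.trans ht2)
                  rcases hK3e z x y w2 (nxz.symm) (nyz.symm) nzw2 nxy nxw2 nyw2 (show c s(z,x) ≠ c s(z,y) by rw [((hs c z x).trans ht2), ((hs c z y).trans ht1)]; exact (h12.symm)) (show c s(z,x) ≠ c s(x,y) by rw [((hs c z x).trans ht2), ht3]; exact h23) (show c s(z,y) ≠ c s(x,y) by rw [((hs c z y).trans ht1), ht3]; exact h13) with hN343 | hN343 | hN343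
                  · have hF344 : c s(z,w2) = t2 := (hN343.trans ((hs c z x).trans ht2))
                    exact hP4 x z w2 y nxz nxw2 nxy nzw2 (nyz.symm) (nyw2.symm) (ht2.trans (hF344).symm) ((hF344).trans (((hs c w2 y).trans hF342)).symm)
                  · have hF345 : c s(z,w2) = t1 := (hN343.trans ((hs c z y).trans ht1))
                    exact hP4 x w2 z y nxw2 nxz nxy (nzw2.symm) (nyw2.symm) (nyz.symm) (hF334.trans (((hs c w2 z).trans hF345)).symm) ((((hs c w2 z).trans hF345)).trans (((hs c z y).trans ht1)).symm)
                  · have hF346 : c s(z,w2) = t3 := (hN343.trans ht3)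
                    exact hP4 w w1 z w2 nww1 (nzw.symm) nww2 (nzw1.symm) nw1w2 nzw2 (hw.trans (((hs c w1 z).trans hF302)).symm) ((((hs c w1 z).trans hF302)).trans (hF346).symm)
          · have hF347 : c s(y,w1) = t2 := (hN228.trans ht2)
            exact hP4 x w1 y w nxw1 nxy nxw (nyw1.symm) (nww1.symm) nyw (hF227.trans (((hs c w1 y).trans hF347)).symm) ((((hs c w1 y).trans hF347)).trans (hF220).symm)
        · have hF348 : c s(x,w1) = t1 := (hN225.trans ht1)
          rcases hK3e y x z w1 (nxy.symm) nyz nyw1 nxz nxw1 nzw1 (show c s(y,x) ≠ c s(y,z) by rw [((hs c y x).trans ht3), ht1]; exact (h13.symm)) (show c s(y,x) ≠ c s(x,z) by rw [((hs c y x).trans ht3), ht2]; exact (h23.symm)) (show c s(y,z) ≠ c s(x,z) by rw [ht1, ht2]; exact h12) with hN349 | hN349 | hN349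
          · have hF350 : c s(y,w1) = t3 := (hN349.trans ((hs c y x).trans ht3))
            exact hP4 x y w1 w nxy nxw1 nxw nyw1 nyw (nww1.symm) (ht3.trans (hF350).symm) ((hF350).trans (((hs c w1 w).trans hw)).symm)
          · have hF351 : c s(y,w1) = t1 := (hN349.trans ht1)
            exact hP4 x w1 y z nxw1 nxy nxz (nyw1.symm) (nzw1.symm) nyz (hF348.trans (((hs c w1 y).trans hF351)).symm) ((((hs c w1 y).trans hF351)).trans (ht1).symm)
          · have hF352 : c s(y,w1) = t2 := (hN349.trans ht2)
            rcases hK3e z x y w1 (nxz.symm) (nyz.symm) nzw1 nxy nxw1 nyw1 (show c s(z,x) ≠ c s(z,y) by rw [((hs c z x).trans ht2), ((hs c z y).trans ht1)]; exact (h12.symm)) (show c s(z,x) ≠ c s(x,y) by rw [((hs c z x).trans ht2), ht3]; exact h23) (show c s(z,y) ≠ c s(x,y) by rw [((hs c z y).trans ht1), ht3]; exact h13) with hN353 | hN353 | hN353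
            · have hF354 : c s(z,w1) = t2 := (hN353.trans ((hs c z x).trans ht2))
              exact hP4 x z w1 y nxz nxw1 nxy nzw1 (nyz.symm) (nyw1.symm) (ht2.trans (hF354).symm) ((hF354).trans (((hs c w1 y).trans hF352)).symm)
            · have hF355 : c s(z,w1) = t1 := (hN353.trans ((hs c z y).trans ht1))
              exact hP4 x w1 z y nxw1 nxz nxy (nzw1.symm) (nyw1.symm) (nyz.symm) (hF348.trans (((hs c w1 z).trans hF355)).symm) ((((hs c w1 z).trans hF355)).trans (((hs c z y).trans ht1)).symm)
            · have hF356 : c s(z,w1) = t3 := (hN353.trans ht3)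
              rcases hK3e x y z w2 nxy nxz nxw2 nyz nyw2 nzw2 (show c s(x,y) ≠ c s(x,z) by rw [ht3, ht2]; exact (h23.symm)) (show c s(x,y) ≠ c s(y,z) by rw [ht3, ht1]; exact (h13.symm)) (show c s(x,z) ≠ c s(y,z) by rw [ht2, ht1]; exact (h12.symm)) with hN357 | hN357 | hN357
              · have hF358 : c s(x,w2) = t3 := (hN357.trans ht3)
                rcases hK3e y x z w2 (nxy.symm) nyz nyw2 nxz nxw2 nzw2 (show c s(y,x) ≠ c s(y,z) by rw [((hs c y x).trans ht3), ht1]; exact (h13.symm)) (show c s(y,x) ≠ c s(x,z) by rw [((hs c y x).trans ht3), ht2]; exact (h23.symm)) (show c s(y,z) ≠ c s(x,z) by rw [ht1, ht2]; exact h12) with hN359 | hN359 | hN359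
                · have hF360 : c s(y,w2) = t3 := (hN359.trans ((hs c y x).trans ht3))
                  rcases hK3e z x y w2 (nxz.symm) (nyz.symm) nzw2 nxy nxw2 nyw2 (show c s(z,x) ≠ c s(z,y) by rw [((hs c z x).trans ht2), ((hs c z y).trans ht1)]; exact (h12.symm)) (show c s(z,x) ≠ c s(x,y) by rw [((hs c z x).trans ht2), ht3]; exact h23) (show c s(z,y) ≠ c s(x,y) by rw [((hs c z y).trans ht1), ht3]; exact h13) with hN361 | hN361 | hN361
                  · have hF362 : c s(z,w2) = t2 := (hN361.trans ((hs c z x).trans ht2))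
                    rcases hK3e w x y w2 (nxw.symm) (nyw.symm) nww2 nxy nxw2 nyw2 (show c s(w,x) ≠ c s(w,y) by rw [((hs c w x).trans hF216), ((hs c w y).trans hF220)]; exact h12) (show c s(w,x) ≠ c s(x,y) by rw [((hs c w x).trans hF216), ht3]; exact h13) (show c s(w,y) ≠ c s(x,y) by rw [((hs c w y).trans hF220), ht3]; exact h23) with hN363 | hN363 | hN363
                    · have hF364 : c s(w,w2) = t1 := (hN363.trans ((hs c w x).trans hF216))
                      exact hP4 w1 x w w2 (nxw1.symm) (nww1.symm) nw1w2 nxw nxw2 nww2 (((hs c w1 x).trans hF348).trans (hF216).symm) ((hF216).trans (hF364).symm)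
                    · have hF365 : c s(w,w2) = t2 := (hN363.trans ((hs c w y).trans hF220))
                      exact hP4 x z w2 w nxz nxw2 nxw nzw2 nzw (nww2.symm) (ht2.trans (hF362).symm) ((hF362).trans (((hs c w2 w).trans hF365)).symm)
                    · have hF366 : c s(w,w2) = t3 := (hN363.trans ht3)
                      exact hP4 x y w2 w nxy nxw2 nxw nyw2 nyw (nww2.symm) (ht3.trans (hF360).symm) ((hF360).trans (((hs c w2 w).trans hF366)).symm)
                  · have hF367 : c s(z,w2) = t1 := (hN361.trans ((hs c z y).trans ht1))
                    rcases hK3e w x y w2 (nxw.symm) (nyw.symm) nww2 nxy nxw2 nyw2 (show c s(w,x) ≠ c s(w,y) by rw [((hs c w x).trans hF216), ((hs c w y).trans hF220)]; exact h12) (show c s(w,x) ≠ c s(x,y) by rw [((hs c w x).trans hF216), ht3]; exact h13) (show c s(w,y) ≠ c s(x,y) by rw [((hs c w y).trans hF220), ht3]; exact h23) with hN368 | hN368 | hN368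
                    · have hF369 : c s(w,w2) = t1 := (hN368.trans ((hs c w x).trans hF216))
                      exact hP4 x w w2 z nxw nxw2 nxz nww2 (nzw.symm) (nzw2.symm) (hF216.trans (hF369).symm) ((hF369).trans (((hs c w2 z).trans hF367)).symm)
                    · have hF370 : c s(w,w2) = t2 := (hN368.trans ((hs c w y).trans hF220))
                      exact hP4 w1 y w w2 (nyw1.symm) (nww1.symm) nw1w2 nyw nyw2 nww2 (((hs c w1 y).trans hF352).trans (hF220).symm) ((hF220).trans (hF370).symm)
                    · have hF371 : c s(w,w2) = t3 := (hN368.trans ht3)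
                      exact hP4 x y w2 w nxy nxw2 nxw nyw2 nyw (nww2.symm) (ht3.trans (hF360).symm) ((hF360).trans (((hs c w2 w).trans hF371)).symm)
                  · have hF372 : c s(z,w2) = t3 := (hN361.trans ht3)
                    exact hP4 x y w2 z nxy nxw2 nxz nyw2 nyz (nzw2.symm) (ht3.trans (hF360).symm) ((hF360).trans (((hs c w2 z).trans hF372)).symm)
                · have hF373 : c s(y,w2) = t1 := (hN359.trans ht1)
                  rcases hK3e z x y w2 (nxz.symm) (nyz.symm) nzw2 nxy nxw2 nyw2 (show c s(z,x) ≠ c s(z,y) by rw [((hs c z x).trans ht2), ((hs c z y).trans ht1)]; exact (h12.symm)) (show c s(z,x) ≠ c s(x,y) by rw [((hs c z x).trans ht2), ht3]; exact h23) (show c s(z,y) ≠ c s(x,y) by rw [((hs c z y).trans ht1), ht3]; exact h13) with hN374 | hN374 | hN374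
                  · have hF375 : c s(z,w2) = t2 := (hN374.trans ((hs c z x).trans ht2))
                    rcases hK3e w x y w2 (nxw.symm) (nyw.symm) nww2 nxy nxw2 nyw2 (show c s(w,x) ≠ c s(w,y) by rw [((hs c w x).trans hF216), ((hs c w y).trans hF220)]; exact h12) (show c s(w,x) ≠ c s(x,y) by rw [((hs c w x).trans hF216), ht3]; exact h13) (show c s(w,y) ≠ c s(x,y) by rw [((hs c w y).trans hF220), ht3]; exact h23) with hN376 | hN376 | hN376
                    · have hF377 : c s(w,w2) = t1 := (hN376.trans ((hs c w x).trans hF216))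
                      exact hP4 x w w2 y nxw nxw2 nxy nww2 (nyw.symm) (nyw2.symm) (hF216.trans (hF377).symm) ((hF377).trans (((hs c w2 y).trans hF373)).symm)
                    · have hF378 : c s(w,w2) = t2 := (hN376.trans ((hs c w y).trans hF220))
                      exact hP4 x z w2 w nxz nxw2 nxw nzw2 nzw (nww2.symm) (ht2.trans (hF375).symm) ((hF375).trans (((hs c w2 w).trans hF378)).symm)
                    · have hF379 : c s(w,w2) = t3 := (hN376.trans ht3)
                      exact hP4 x w2 w z nxw2 nxw nxz (nww2.symm) (nzw2.symm) (nzw.symm) (hF358.trans (((hs c w2 w).trans hF379)).symm) ((((hs c w2 w).trans hF379)).trans (((hs c w z).trans hF224)).symm)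
                  · have hF380 : c s(z,w2) = t1 := (hN374.trans ((hs c z y).trans ht1))
                    rcases hK3e w x y w2 (nxw.symm) (nyw.symm) nww2 nxy nxw2 nyw2 (show c s(w,x) ≠ c s(w,y) by rw [((hs c w x).trans hF216), ((hs c w y).trans hF220)]; exact h12) (show c s(w,x) ≠ c s(x,y) by rw [((hs c w x).trans hF216), ht3]; exact h13) (show c s(w,y) ≠ c s(x,y) by rw [((hs c w y).trans hF220), ht3]; exact h23) with hN381 | hN381 | hN381
                    · have hF382 : c s(w,w2) = t1 := (hN381.trans ((hs c w x).trans hF216))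
                      exact hP4 x w w2 y nxw nxw2 nxy nww2 (nyw.symm) (nyw2.symm) (hF216.trans (hF382).symm) ((hF382).trans (((hs c w2 y).trans hF373)).symm)
                    · have hF383 : c s(w,w2) = t2 := (hN381.trans ((hs c w y).trans hF220))
                      exact hP4 w1 y w w2 (nyw1.symm) (nww1.symm) nw1w2 nyw nyw2 nww2 (((hs c w1 y).trans hF352).trans (hF220).symm) ((hF220).trans (hF383).symm)
                    · have hF384 : c s(w,w2) = t3 := (hN381.trans ht3)
                      exact hP4 x w2 w z nxw2 nxw nxz (nww2.symm) (nzw2.symm) (nzw.symm) (hF358.trans (((hs c w2 w).trans hF384)).symm) ((((hs c w2 w).trans hF384)).trans (((hs c w z).trans hF224)).symm)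
                  · have hF385 : c s(z,w2) = t3 := (hN374.trans ht3)
                    exact hP4 x w2 z w nxw2 nxz nxw (nzw2.symm) (nww2.symm) nzw (hF358.trans (((hs c w2 z).trans hF385)).symm) ((((hs c w2 z).trans hF385)).trans (hF224).symm)
                · have hF386 : c s(y,w2) = t2 := (hN359.trans ht2)
                  rcases hK3e z x y w2 (nxz.symm) (nyz.symm) nzw2 nxy nxw2 nyw2 (show c s(z,x) ≠ c s(z,y) by rw [((hs c z x).trans ht2), ((hs c z y).trans ht1)]; exact (h12.symm)) (show c s(z,x) ≠ c s(x,y) by rw [((hs c z x).trans ht2), ht3]; exact h23) (show c s(z,y) ≠ c s(x,y) by rw [((hs c z y).trans ht1), ht3]; exact h13) with hN387 | hN387 | hN387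
                  · have hF388 : c s(z,w2) = t2 := (hN387.trans ((hs c z x).trans ht2))
                    exact hP4 x z w2 y nxz nxw2 nxy nzw2 (nyz.symm) (nyw2.symm) (ht2.trans (hF388).symm) ((hF388).trans (((hs c w2 y).trans hF386)).symm)
                  · have hF389 : c s(z,w2) = t1 := (hN387.trans ((hs c z y).trans ht1))
                    rcases hK3e w x y w2 (nxw.symm) (nyw.symm) nww2 nxy nxw2 nyw2 (show c s(w,x) ≠ c s(w,y) by rw [((hs c w x).trans hF216), ((hs c w y).trans hF220)]; exact h12) (show c s(w,x) ≠ c s(x,y) by rw [((hs c w x).trans hF216), ht3]; exact h13) (show c s(w,y) ≠ c s(x,y) by rw [((hs c w y).trans hF220), ht3]; exact h23) with hN390 | hN390 | hN390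
                    · have hF391 : c s(w,w2) = t1 := (hN390.trans ((hs c w x).trans hF216))
                      exact hP4 x w w2 z nxw nxw2 nxz nww2 (nzw.symm) (nzw2.symm) (hF216.trans (hF391).symm) ((hF391).trans (((hs c w2 z).trans hF389)).symm)
                    · have hF392 : c s(w,w2) = t2 := (hN390.trans ((hs c w y).trans hF220))
                      exact hP4 w w2 y w1 nww2 (nyw.symm) nww1 (nyw2.symm) (nw1w2.symm) nyw1 (hF392.trans (((hs c w2 y).trans hF386)).symm) ((((hs c w2 y).trans hF386)).trans (hF352).symm)
                    · have hF393 : c s(w,w2) = t3 := (hN390.trans ht3)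
                      exact hP4 x w2 w z nxw2 nxw nxz (nww2.symm) (nzw2.symm) (nzw.symm) (hF358.trans (((hs c w2 w).trans hF393)).symm) ((((hs c w2 w).trans hF393)).trans (((hs c w z).trans hF224)).symm)
                  · have hF394 : c s(z,w2) = t3 := (hN387.trans ht3)
                    exact hP4 x w2 z w nxw2 nxz nxw (nzw2.symm) (nww2.symm) nzw (hF358.trans (((hs c w2 z).trans hF394)).symm) ((((hs c w2 z).trans hF394)).trans (hF224).symm)
              · have hF395 : c s(x,w2) = t2 := (hN357.trans ht2)
                rcases hK3e y x z w2 (nxy.symm) nyz nyw2 nxz nxw2 nzw2 (show c s(y,x) ≠ c s(y,z) by rw [((hs c y x).trans ht3), ht1]; exact (h13.symm)) (show c s(y,x) ≠ c s(x,z) by rw [((hs c y x).trans ht3), ht2]; exact (h23.symm)) (show c s(y,z) ≠ c s(x,z) by rw [ht1, ht2]; exact h12) with hN396 | hN396 | hN396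
                · have hF397 : c s(y,w2) = t3 := (hN396.trans ((hs c y x).trans ht3))
                  rcases hK3e z x y w2 (nxz.symm) (nyz.symm) nzw2 nxy nxw2 nyw2 (show c s(z,x) ≠ c s(z,y) by rw [((hs c z x).trans ht2), ((hs c z y).trans ht1)]; exact (h12.symm)) (show c s(z,x) ≠ c s(x,y) by rw [((hs c z x).trans ht2), ht3]; exact h23) (show c s(z,y) ≠ c s(x,y) by rw [((hs c z y).trans ht1), ht3]; exact h13) with hN398 | hN398 | hN398
                  · have hF399 : c s(z,w2) = t2 := (hN398.trans ((hs c z x).trans ht2))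
                    rcases hK3e w x y w2 (nxw.symm) (nyw.symm) nww2 nxy nxw2 nyw2 (show c s(w,x) ≠ c s(w,y) by rw [((hs c w x).trans hF216), ((hs c w y).trans hF220)]; exact h12) (show c s(w,x) ≠ c s(x,y) by rw [((hs c w x).trans hF216), ht3]; exact h13) (show c s(w,y) ≠ c s(x,y) by rw [((hs c w y).trans hF220), ht3]; exact h23) with hN400 | hN400 | hN400
                    · have hF401 : c s(w,w2) = t1 := (hN400.trans ((hs c w x).trans hF216))
                      exact hP4 w1 x w w2 (nxw1.symm) (nww1.symm) nw1w2 nxw nxw2 nww2 (((hs c w1 x).trans hF348).trans (hF216).symm) ((hF216).trans (hF401).symm)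
                    · have hF402 : c s(w,w2) = t2 := (hN400.trans ((hs c w y).trans hF220))
                      exact hP4 x z w2 w nxz nxw2 nxw nzw2 nzw (nww2.symm) (ht2.trans (hF399).symm) ((hF399).trans (((hs c w2 w).trans hF402)).symm)
                    · have hF403 : c s(w,w2) = t3 := (hN400.trans ht3)
                      exact hP4 x y w2 w nxy nxw2 nxw nyw2 nyw (nww2.symm) (ht3.trans (hF397).symm) ((hF397).trans (((hs c w2 w).trans hF403)).symm)
                  · have hF404 : c s(z,w2) = t1 := (hN398.trans ((hs c z y).trans ht1))
                    rcases hK3e w x y w2 (nxw.symm) (nyw.symm) nww2 nxy nxw2 nyw2 (show c s(w,x) ≠ c s(w,y) by rw [((hs c w x).trans hF216), ((hs c w y).trans hF220)]; exact h12) (show c s(w,x) ≠ c s(x,y) by rw [((hs c w x).trans hF216), ht3]; exact h13) (show c s(w,y) ≠ c s(x,y) by rw [((hs c w y).trans hF220), ht3]; exact h23) with hN405 | hN405 | hN405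
                    · have hF406 : c s(w,w2) = t1 := (hN405.trans ((hs c w x).trans hF216))
                      exact hP4 x w w2 z nxw nxw2 nxz nww2 (nzw.symm) (nzw2.symm) (hF216.trans (hF406).symm) ((hF406).trans (((hs c w2 z).trans hF404)).symm)
                    · have hF407 : c s(w,w2) = t2 := (hN405.trans ((hs c w y).trans hF220))
                      exact hP4 x w2 w y nxw2 nxw nxy (nww2.symm) (nyw2.symm) (nyw.symm) (hF395.trans (((hs c w2 w).trans hF407)).symm) ((((hs c w2 w).trans hF407)).trans (((hs c w y).trans hF220)).symm)
                    · have hF408 : c s(w,w2) = t3 := (hN405.trans ht3)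
                      exact hP4 x y w2 w nxy nxw2 nxw nyw2 nyw (nww2.symm) (ht3.trans (hF397).symm) ((hF397).trans (((hs c w2 w).trans hF408)).symm)
                  · have hF409 : c s(z,w2) = t3 := (hN398.trans ht3)
                    exact hP4 x y w2 z nxy nxw2 nxz nyw2 nyz (nzw2.symm) (ht3.trans (hF397).symm) ((hF397).trans (((hs c w2 z).trans hF409)).symm)
                · have hF410 : c s(y,w2) = t1 := (hN396.trans ht1)
                  rcases hK3e z x y w2 (nxz.symm) (nyz.symm) nzw2 nxy nxw2 nyw2 (show c s(z,x) ≠ c s(z,y) by rw [((hs c z x).trans ht2), ((hs c z y).trans ht1)]; exact (h12.symm)) (show c s(z,x) ≠ c s(x,y) by rw [((hs c z x).trans ht2), ht3]; exact h23) (show c s(z,y) ≠ c s(x,y) by rw [((hs c z y).trans ht1), ht3]; exact h13) with hN411 | hN411 | hN411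
                  · have hF412 : c s(z,w2) = t2 := (hN411.trans ((hs c z x).trans ht2))
                    rcases hK3e w x y w2 (nxw.symm) (nyw.symm) nww2 nxy nxw2 nyw2 (show c s(w,x) ≠ c s(w,y) by rw [((hs c w x).trans hF216), ((hs c w y).trans hF220)]; exact h12) (show c s(w,x) ≠ c s(x,y) by rw [((hs c w x).trans hF216), ht3]; exact h13) (show c s(w,y) ≠ c s(x,y) by rw [((hs c w y).trans hF220), ht3]; exact h23) with hN413 | hN413 | hN413
                    · have hF414 : c s(w,w2) = t1 := (hN413.trans ((hs c w x).trans hF216))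
                      exact hP4 x w w2 y nxw nxw2 nxy nww2 (nyw.symm) (nyw2.symm) (hF216.trans (hF414).symm) ((hF414).trans (((hs c w2 y).trans hF410)).symm)
                    · have hF415 : c s(w,w2) = t2 := (hN413.trans ((hs c w y).trans hF220))
                      exact hP4 x z w2 w nxz nxw2 nxw nzw2 nzw (nww2.symm) (ht2.trans (hF412).symm) ((hF412).trans (((hs c w2 w).trans hF415)).symm)
                    · have hF416 : c s(w,w2) = t3 := (hN413.trans ht3)
                      exact hP4 z w1 w w2 nzw1 nzw nzw2 (nww1.symm) nw1w2 nww2 (hF356.trans (((hs c w1 w).trans hw)).symm) ((((hs c w1 w).trans hw)).trans (hF416).symm)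
                  · have hF417 : c s(z,w2) = t1 := (hN411.trans ((hs c z y).trans ht1))
                    rcases hK3e w x y w2 (nxw.symm) (nyw.symm) nww2 nxy nxw2 nyw2 (show c s(w,x) ≠ c s(w,y) by rw [((hs c w x).trans hF216), ((hs c w y).trans hF220)]; exact h12) (show c s(w,x) ≠ c s(x,y) by rw [((hs c w x).trans hF216), ht3]; exact h13) (show c s(w,y) ≠ c s(x,y) by rw [((hs c w y).trans hF220), ht3]; exact h23) with hN418 | hN418 | hN418
                    · have hF419 : c s(w,w2) = t1 := (hN418.trans ((hs c w x).trans hF216))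
                      exact hP4 x w w2 y nxw nxw2 nxy nww2 (nyw.symm) (nyw2.symm) (hF216.trans (hF419).symm) ((hF419).trans (((hs c w2 y).trans hF410)).symm)
                    · have hF420 : c s(w,w2) = t2 := (hN418.trans ((hs c w y).trans hF220))
                      exact hP4 x w2 w y nxw2 nxw nxy (nww2.symm) (nyw2.symm) (nyw.symm) (hF395.trans (((hs c w2 w).trans hF420)).symm) ((((hs c w2 w).trans hF420)).trans (((hs c w y).trans hF220)).symm)
                    · have hF421 : c s(w,w2) = t3 := (hN418.trans ht3)
                      exact hP4 z w1 w w2 nzw1 nzw nzw2 (nww1.symm) nw1w2 nww2 (hF356.trans (((hs c w1 w).trans hw)).symm) ((((hs c w1 w).trans hw)).trans (hF421).symm)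
                  · have hF422 : c s(z,w2) = t3 := (hN411.trans ht3)
                    exact hP4 w w1 z w2 nww1 (nzw.symm) nww2 (nzw1.symm) nw1w2 nzw2 (hw.trans (((hs c w1 z).trans hF356)).symm) ((((hs c w1 z).trans hF356)).trans (hF422).symm)
                · have hF423 : c s(y,w2) = t2 := (hN396.trans ht2)
                  exact hP4 x w2 y w nxw2 nxy nxw (nyw2.symm) (nww2.symm) nyw (hF395.trans (((hs c w2 y).trans hF423)).symm) ((((hs c w2 y).trans hF423)).trans (hF220).symm)
              · have hF424 : c s(x,w2) = t1 := (hN357.trans ht1)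
                rcases hK3e y x z w2 (nxy.symm) nyz nyw2 nxz nxw2 nzw2 (show c s(y,x) ≠ c s(y,z) by rw [((hs c y x).trans ht3), ht1]; exact (h13.symm)) (show c s(y,x) ≠ c s(x,z) by rw [((hs c y x).trans ht3), ht2]; exact (h23.symm)) (show c s(y,z) ≠ c s(x,z) by rw [ht1, ht2]; exact h12) with hN425 | hN425 | hN425
                · have hF426 : c s(y,w2) = t3 := (hN425.trans ((hs c y x).trans ht3))
                  rcases hK3e z x y w2 (nxz.symm) (nyz.symm) nzw2 nxy nxw2 nyw2 (show c s(z,x) ≠ c s(z,y) by rw [((hs c z x).trans ht2), ((hs c z y).trans ht1)]; exact (h12.symm)) (show c s(z,x) ≠ c s(x,y) by rw [((hs c z x).trans ht2), ht3]; exact h23) (show c s(z,y) ≠ c s(x,y) by rw [((hs c z y).trans ht1), ht3]; exact h13) with hN427 | hN427 | hN427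
                  · have hF428 : c s(z,w2) = t2 := (hN427.trans ((hs c z x).trans ht2))
                    rcases hK3e w x y w2 (nxw.symm) (nyw.symm) nww2 nxy nxw2 nyw2 (show c s(w,x) ≠ c s(w,y) by rw [((hs c w x).trans hF216), ((hs c w y).trans hF220)]; exact h12) (show c s(w,x) ≠ c s(x,y) by rw [((hs c w x).trans hF216), ht3]; exact h13) (show c s(w,y) ≠ c s(x,y) by rw [((hs c w y).trans hF220), ht3]; exact h23) with hN429 | hN429 | hN429
                    · have hF430 : c s(w,w2) = t1 := (hN429.trans ((hs c w x).trans hF216))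
                      exact hP4 w w2 x w1 nww2 (nxw.symm) nww1 (nxw2.symm) (nw1w2.symm) nxw1 (hF430.trans (((hs c w2 x).trans hF424)).symm) ((((hs c w2 x).trans hF424)).trans (hF348).symm)
                    · have hF431 : c s(w,w2) = t2 := (hN429.trans ((hs c w y).trans hF220))
                      exact hP4 x z w2 w nxz nxw2 nxw nzw2 nzw (nww2.symm) (ht2.trans (hF428).symm) ((hF428).trans (((hs c w2 w).trans hF431)).symm)
                    · have hF432 : c s(w,w2) = t3 := (hN429.trans ht3)
                      exact hP4 x y w2 w nxy nxw2 nxw nyw2 nyw (nww2.symm) (ht3.trans (hF426).symm) ((hF426).trans (((hs c w2 w).trans hF432)).symm)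
                  · have hF433 : c s(z,w2) = t1 := (hN427.trans ((hs c z y).trans ht1))
                    exact hP4 x w2 z y nxw2 nxz nxy (nzw2.symm) (nyw2.symm) (nyz.symm) (hF424.trans (((hs c w2 z).trans hF433)).symm) ((((hs c w2 z).trans hF433)).trans (((hs c z y).trans ht1)).symm)
                  · have hF434 : c s(z,w2) = t3 := (hN427.trans ht3)
                    exact hP4 x y w2 z nxy nxw2 nxz nyw2 nyz (nzw2.symm) (ht3.trans (hF426).symm) ((hF426).trans (((hs c w2 z).trans hF434)).symm)
                · have hF435 : c s(y,w2) = t1 := (hN425.trans ht1)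
                  exact hP4 x w2 y z nxw2 nxy nxz (nyw2.symm) (nzw2.symm) nyz (hF424.trans (((hs c w2 y).trans hF435)).symm) ((((hs c w2 y).trans hF435)).trans (ht1).symm)
                · have hF436 : c s(y,w2) = t2 := (hN425.trans ht2)
                  rcases hK3e z x y w2 (nxz.symm) (nyz.symm) nzw2 nxy nxw2 nyw2 (show c s(z,x) ≠ c s(z,y) by rw [((hs c z x).trans ht2), ((hs c z y).trans ht1)]; exact (h12.symm)) (show c s(z,x) ≠ c s(x,y) by rw [((hs c z x).trans ht2), ht3]; exact h23) (show c s(z,y) ≠ c s(x,y) by rw [((hs c z y).trans ht1), ht3]; exact h13) with hN437 | hN437 | hN437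
                  · have hF438 : c s(z,w2) = t2 := (hN437.trans ((hs c z x).trans ht2))
                    exact hP4 x z w2 y nxz nxw2 nxy nzw2 (nyz.symm) (nyw2.symm) (ht2.trans (hF438).symm) ((hF438).trans (((hs c w2 y).trans hF436)).symm)
                  · have hF439 : c s(z,w2) = t1 := (hN437.trans ((hs c z y).trans ht1))
                    exact hP4 x w2 z y nxw2 nxz nxy (nzw2.symm) (nyw2.symm) (nyz.symm) (hF424.trans (((hs c w2 z).trans hF439)).symm) ((((hs c w2 z).trans hF439)).trans (((hs c z y).trans ht1)).symm)
                  · have hF440 : c s(z,w2) = t3 := (hN437.trans ht3)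
                    exact hP4 w w1 z w2 nww1 (nzw.symm) nww2 (nzw1.symm) nw1w2 nzw2 (hw.trans (((hs c w1 z).trans hF356)).symm) ((((hs c w1 z).trans hF356)).trans (hF440).symm)

end P3
section Main

lemma lbmain (c : Sym2 (Fin n) → ℕ) (hn : 4 ≤ n)
    (hP4 : ∀ a b d e : Fin n, a ≠ b → a ≠ d → a ≠ e → b ≠ d → b ≠ e → d ≠ e →
      c s(a,b) = c s(b,d) → c s(b,d) = c s(d,e) → False)
    (hK3e : ∀ a b d e : Fin n, a ≠ b → a ≠ d → a ≠ e → b ≠ d → b ≠ e → d ≠ e →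
      c s(a,b) ≠ c s(a,d) → c s(a,b) ≠ c s(b,d) → c s(a,d) ≠ c s(b,d) →
      c s(a,e) = c s(a,b) ∨ c s(a,e) = c s(a,d) ∨ c s(a,e) = c s(b,d)) :
    n - 2 ≤ (colorsOn c Finset.univ).card := by
  have hcu : (Finset.univ : Finset (Fin n)).card = n := by
    rw [Finset.card_univ, Fintype.card_fin]
  by_cases hrt : ∃ x y z : Fin n, x ≠ y ∧ x ≠ z ∧ y ≠ z ∧
      c s(x,y) ≠ c s(x,z) ∧ c s(x,y) ≠ c s(y,z) ∧ c s(x,z) ≠ c s(y,z)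
  · obtain ⟨x, y, z, h1, h2, h3, q1, q2, q3⟩ := hrt
    have hTsub : ({c s(x,y), c s(x,z), c s(y,z)} : Finset ℕ) ⊆ colorsOn c Finset.univ := by
      intro t ht
      simp only [Finset.mem_insert, Finset.mem_singleton] at ht
      rcases ht with rfl | rfl | rfl
      · exact mem_colorsOn.2 ⟨x, y, h1, Finset.mem_univ _, Finset.mem_univ _, rfl⟩
      · exact mem_colorsOn.2 ⟨x, z, h2, Finset.mem_univ _, Finset.mem_univ _, rfl⟩
      · exact mem_colorsOn.2 ⟨y, z, h3, Finset.mem_univ _, Finset.mem_univ _, rfl⟩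
    have hTcard : ({c s(x,y), c s(x,z), c s(y,z)} : Finset ℕ).card = 3 := by
      rw [Finset.card_insert_of_notMem (by
            simp only [Finset.mem_insert, Finset.mem_singleton]
            push_neg
            exact ⟨q1, q2⟩),
          Finset.card_insert_of_notMem (by
            simp only [Finset.mem_singleton]
            exact q3),
          Finset.card_singleton]
    by_cases hn6 : n ≤ 5
    · have := Finset.card_le_card hTsub
      omega
    · -- n ≥ 6
      set W := (Finset.univ : Finset (Fin n)) \ {x, y, z} with hWdef
      have h3sub : ({x, y, z} : Finset (Fin n)) ⊆ Finset.univ := Finset.subset_univ _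
      have h3card : ({x, y, z} : Finset (Fin n)).card = 3 := by
        rw [Finset.card_insert_of_notMem (by
              simp only [Finset.mem_insert, Finset.mem_singleton]
              push_neg
              exact ⟨h1, h2⟩),
            Finset.card_insert_of_notMem (by
              simp only [Finset.mem_singleton]
              exact h3),
            Finset.card_singleton]
      have hWcard : W.card = n - 3 := by
        rw [hWdef, Finset.card_sdiff_of_subset h3sub, h3card, hcu]
      have hWmem : ∀ d, d ∈ W → d ≠ x ∧ d ≠ y ∧ d ≠ z := by
        intro d hd
        rw [hWdef, Finset.mem_sdiff] at hd
        simp only [Finset.mem_insert, Finset.mem_singleton] at hd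
        push_neg at hd
        exact hd.2
      have hWmem' : ∀ d : Fin n, d ≠ x → d ≠ y → d ≠ z → d ∈ W := by
        intro d hdx hdy hdz
        rw [hWdef, Finset.mem_sdiff]
        simp only [Finset.mem_insert, Finset.mem_singleton]
        push_neg
        exact ⟨Finset.mem_univ _, hdx, hdy, hdz⟩
      have pend : ∀ u v : Fin n, v ≠ x → v ≠ y → v ≠ z →
          (u = x ∨ u = y ∨ u = z) →
          (c s(u,v) = c s(x,y) ∨ c s(u,v) = c s(x,z) ∨ c s(u,v) = c s(y,z)) := by
        intro u v e1 e2 e3 hu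
        rcases hu with rfl | rfl | rfl
        · exact hK3e u y z v h1 h2 (Ne.symm e1) h3 (Ne.symm e2) (Ne.symm e3) q1 q2 q3
        · rcases hK3e u x z v (Ne.symm h1) h3 (Ne.symm e2) h2 (Ne.symm e1) (Ne.symm e3)
            (by rw [hs c u x]; exact q2) (by rw [hs c u x]; exact q1)
            (Ne.symm q3) with h | h | h
          · exact Or.inl (h.trans (hs c u x))
          · exact Or.inr (Or.inr h)
          · exact Or.inr (Or.inl h)
        · rcases hK3e u x y v (Ne.symm h2) (Ne.symm h3) (Ne.symm e3) h1
            (Ne.symm e1) (Ne.symm e2)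
            (by rw [hs c u x, hs c u y]; exact q3) (by rw [hs c u x]; exact (Ne.symm q1))
            (by rw [hs c u y]; exact (Ne.symm q2)) with h | h | h
          · exact Or.inr (Or.inl (h.trans (hs c u x)))
          · exact Or.inr (Or.inr (h.trans (hs c u y)))
          · exact Or.inl h
      -- P3 : inner edges of W avoid the triangle colors
      have hP3 : ∀ w w' : Fin n, w ∈ W → w' ∈ W → w ≠ w' →
          c s(w,w') ≠ c s(x,y) ∧ c s(w,w') ≠ c s(x,z) ∧ c s(w,w') ≠ c s(y,z) := by
        intro w w' hw hw' hww
        obtain ⟨hwx, hwy, hwz⟩ := hWmem w hw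
        obtain ⟨hwx', hwy', hwz'⟩ := hWmem w' hw'
        -- find a third vertex w2 in W
        have h2sub : ({w, w'} : Finset (Fin n)) ⊆ W := by
          intro t ht
          simp only [Finset.mem_insert, Finset.mem_singleton] at ht
          rcases ht with rfl | rfl <;> assumption
        have h2card : ({w, w'} : Finset (Fin n)).card = 2 := by
          rw [Finset.card_insert_of_notMem (by
                simp only [Finset.mem_singleton]
                exact hww),
              Finset.card_singleton]
        have : 0 < (W \ {w, w'}).card := by
          rw [Finset.card_sdiff_of_subset h2sub, h2card, hWcard]
          omega
        obtain ⟨w2, hw2⟩ := Finset.card_pos.1 this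
        rw [Finset.mem_sdiff] at hw2
        simp only [Finset.mem_insert, Finset.mem_singleton] at hw2
        push_neg at hw2
        have hw2W := hw2.1
        have hw2w := hw2.2.1
        have hw2w' := hw2.2.2
        obtain ⟨hw2x, hw2y, hw2z⟩ := hWmem w2 hw2W
        refine ⟨fun hcol => ?_, fun hcol => ?_, fun hcol => ?_⟩
        · exact p3core c hP4 hK3e x y z w w' w2 h1 h2 (Ne.symm hwx) (Ne.symm hwx')
            (Ne.symm hw2x) h3 (Ne.symm hwy) (Ne.symm hwy') (Ne.symm hw2y)
            (Ne.symm hwz) (Ne.symm hwz') (Ne.symm hw2z) hww (Ne.symm hw2w)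
            (Ne.symm hw2w')
            (c s(y,z)) (c s(x,z)) (c s(x,y)) rfl rfl rfl
            (Ne.symm q3) (Ne.symm q2) (Ne.symm q1) hcol
        · exact p3core c hP4 hK3e x z y w w' w2 h2 h1 (Ne.symm hwx) (Ne.symm hwx')
            (Ne.symm hw2x) (Ne.symm h3) (Ne.symm hwz) (Ne.symm hwz') (Ne.symm hw2z)
            (Ne.symm hwy) (Ne.symm hwy') (Ne.symm hw2y) hww (Ne.symm hw2w)
            (Ne.symm hw2w')
            (c s(z,y)) (c s(x,y)) (c s(x,z)) rfl rfl rfl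
            (by rw [hs c z y]; exact Ne.symm q2) (by rw [hs c z y]; exact Ne.symm q3) q1 hcol
        · exact p3core c hP4 hK3e y z x w w' w2 h3 (Ne.symm h1) (Ne.symm hwy)
            (Ne.symm hwy') (Ne.symm hw2y) (Ne.symm h2) (Ne.symm hwz) (Ne.symm hwz')
            (Ne.symm hw2z) (Ne.symm hwx) (Ne.symm hwx') (Ne.symm hw2x) hww
            (Ne.symm hw2w) (Ne.symm hw2w')
            (c s(z,x)) (c s(y,x)) (c s(y,z)) rfl rfl rfl
            (by rw [hs c z x, hs c y x]; exact Ne.symm q1)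
            (by rw [hs c z x]; exact q3) (by rw [hs c y x]; exact q2) hcol
      -- no rainbow triangle inside W
      have hnrW : ∀ a b d : Fin n, a ∈ W → b ∈ W → d ∈ W → a ≠ b → a ≠ d → b ≠ d →
          (c s(a,b) = c s(a,d) ∨ c s(a,b) = c s(b,d) ∨ c s(a,d) = c s(b,d)) := by
        intro a b d ha hb hd hab had hbd
        by_contra hcon
        push_neg at hcon
        obtain ⟨r1, r2, r3⟩ := hcon
        obtain ⟨hax, hay, haz⟩ := hWmem a ha
        have hax' : c s(a,x) = c s(x,y) ∨ c s(a,x) = c s(x,z) ∨ c s(a,x) = c s(y,z) := by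
          rcases pend x a hax hay haz (Or.inl rfl) with h | h | h
          · exact Or.inl ((hs c a x).trans h)
          · exact Or.inr (Or.inl ((hs c a x).trans h))
          · exact Or.inr (Or.inr ((hs c a x).trans h))
        have hpendant := hK3e a b d x hab had hax hbd
          ((hWmem b hb).1) ((hWmem d hd).1) r1 r2 r3
        rcases hpendant with h | h | h
        · obtain ⟨s1, s2, s3⟩ := hP3 a b ha hb hab
          rcases hax' with h' | h' | h'
          · exact s1 ((h.symm.trans h'))
          · exact s2 ((h.symm.trans h'))
          · exact s3 ((h.symm.trans h'))
        · obtain ⟨s1, s2, s3⟩ := hP3 a d ha hd had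
          rcases hax' with h' | h' | h'
          · exact s1 ((h.symm.trans h'))
          · exact s2 ((h.symm.trans h'))
          · exact s3 ((h.symm.trans h'))
        · obtain ⟨s1, s2, s3⟩ := hP3 b d hb hd hbd
          rcases hax' with h' | h' | h'
          · exact s1 ((h.symm.trans h'))
          · exact s2 ((h.symm.trans h'))
          · exact s3 ((h.symm.trans h'))
      have hlbW := lbA c hP4 W hnrW
      have hdisjTW : Disjoint ({c s(x,y), c s(x,z), c s(y,z)} : Finset ℕ)
          (colorsOn c W) := by
        rw [Finset.disjoint_left]
        intro t ht htW
        obtain ⟨a, b, hab, ha, hb, hck⟩ := mem_colorsOn.1 htW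
        obtain ⟨s1, s2, s3⟩ := hP3 a b ha hb hab
        simp only [Finset.mem_insert, Finset.mem_singleton] at ht
        rcases ht with rfl | rfl | rfl
        · exact s1 hck
        · exact s2 hck
        · exact s3 hck
      have hunion : ({c s(x,y), c s(x,z), c s(y,z)} : Finset ℕ) ∪ colorsOn c W ⊆
          colorsOn c Finset.univ := by
        intro t ht
        rcases Finset.mem_union.1 ht with h | h
        · exact hTsub h
        · exact colorsOn_mono (Finset.subset_univ _) h
      have hcardun := Finset.card_union_of_disjoint hdisjTW
      have hle := Finset.card_le_card hunion
      omega
  · push_neg at hrt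
    have h := lbA c hP4 Finset.univ (by
      intro a b d _ _ _ hab had hbd
      by_contra hcon
      push_neg at hcon
      exact hcon.2.2 (hrt a b d hab had hbd hcon.1 hcon.2.1))
    omega

end Main
end Stmt9

/-- `S(n; P_4, K_3) = S(n; P_4, K_3+e) = {n-2, n-1}` for `n ≥ 4`. -/
theorem stmt_9 (n : ℕ) (hn : 4 ≤ n) :
    mixedSpectrum n (pathGraph 4) (completeGraph (Fin 3)) = {n-2, n-1} ∧
    mixedSpectrum n (pathGraph 4) K3e = {n-2, n-1} := by
  have hcu : (Finset.univ : Finset (Fin n)).card = n := by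
    rw [Finset.card_univ, Fintype.card_fin]
  have key : ∀ c : Sym2 (Fin n) → ℕ,
      ¬ HasMonoCopy c (pathGraph 4) →
      (∀ a b d e : Fin n, a ≠ b → a ≠ d → a ≠ e → b ≠ d → b ≠ e → d ≠ e →
        c s(a,b) ≠ c s(a,d) → c s(a,b) ≠ c s(b,d) → c s(a,d) ≠ c s(b,d) →
        c s(a,e) = c s(a,b) ∨ c s(a,e) = c s(a,d) ∨ c s(a,e) = c s(b,d)) →
      n - 2 ≤ (edgeColors c).card ∧ (edgeColors c).card ≤ n - 1 := by
    intro c hmono hk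
    have hP4 := Stmt9.noP4_wit hmono
    rw [Stmt9.edgeColors_eq]
    refine ⟨Stmt9.lbmain c hn hP4 hk, ?_⟩
    have := Stmt9.ubmain c hP4 hk Finset.univ (by rw [hcu]; exact hn)
    rw [hcu] at this
    exact this
  constructor
  · ext k
    simp only [Set.mem_insert_iff, Set.mem_singleton_iff]
    constructor
    · rintro ⟨c, ⟨hm, hr⟩, hcard⟩
      have := key c hm (Stmt9.noK3e_wit_of_noK3 hr)
      omega
    · rintro (rfl | rfl)
      · exact ⟨Stmt9.cmin2 n, Stmt9.good_cmin2.1,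
          by rw [Stmt9.edgeColors_cmin2 hn, Finset.card_range]⟩
      · exact ⟨Stmt9.cmin n, Stmt9.good_cmin.1,
          by rw [Stmt9.edgeColors_cmin (by omega), Finset.card_range]⟩
  · ext k
    simp only [Set.mem_insert_iff, Set.mem_singleton_iff]
    constructor
    · rintro ⟨c, ⟨hm, hr⟩, hcard⟩
      have := key c hm (Stmt9.noK3e_wit hr)
      omega
    · rintro (rfl | rfl)
      · exact ⟨Stmt9.cmin2 n, Stmt9.good_cmin2.2,
          by rw [Stmt9.edgeColors_cmin2 hn, Finset.card_range]⟩
      · exact ⟨Stmt9.cmin n, Stmt9.good_cmin.2,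
          by rw [Stmt9.edgeColors_cmin (by omega), Finset.card_range]⟩
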